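/- arXiv:2510.07819 — 7 statements merged into one kernel-verified Lean document; each statement's English description precedes it below -/
import Mathlib

section
/- Let A be an n×n real symmetric matrix with nonnegative entries. Then A has at most one positive eigenvalue if and only if for every nonempty subset S of {1,...,n}, the principal minor det(A[S]) satisfies (-1)^{|S|-1} det(A[S]) ≥ 0. -/
open Matrix Finset Polynomial

theorem det_unit_rows {m : Type*} [Fintype m] [DecidableEq m] (M : Matrix m m ℝ)
    (S : Finset m) :
    Matrix.det (fun i => if i ∈ S then M i else Pi.single i (1:ℝ)) =
      (M.submatrix (fun i : {x // x ∈ S} => (i : m)) (fun i : {x // x ∈ S} => (i : m))).det := by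
  classical
  set N : Matrix m m ℝ := fun i => if i ∈ S then M i else Pi.single i (1:ℝ) with hN
  rw [← Matrix.det_submatrix_equiv_self (Equiv.sumCompl (fun x => x ∈ S)) N]
  have : N.submatrix (Equiv.sumCompl (fun x => x ∈ S)) (Equiv.sumCompl (fun x => x ∈ S)) =
    Matrix.fromBlocks
      (M.submatrix (fun i : {x // x ∈ S} => (i : m)) (fun i : {x // x ∈ S} => (i : m)))
      (M.submatrix (fun i : {x // x ∈ S} => (i : m)) (fun i : {x // ¬ x ∈ S} => (i : m)))
      0 1 := by
    ext (i | i) (j | j)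
    all_goals rw [Matrix.submatrix_apply]
    · simp [N, i.2]
    · simp [N, i.2]
    · simp only [N, Matrix.submatrix_apply, Equiv.sumCompl_apply_inl,
        Equiv.sumCompl_apply_inr, if_neg i.2, Matrix.fromBlocks_apply₂₁, Matrix.zero_apply,
        Pi.single_apply]
      rw [if_neg]; intro h; exact absurd (h ▸ j.2) i.2
    · simp only [N, Matrix.submatrix_apply, Equiv.sumCompl_apply_inr, if_neg i.2,
        Matrix.fromBlocks_apply₂₂, Matrix.one_apply, Pi.single_apply]
      simp [Subtype.ext_iff, eq_comm]
  rw [this, Matrix.det_fromBlocks_zero₂₁]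
  simp

theorem det_smul_one_add {m : Type*} [Fintype m] [DecidableEq m] (M : Matrix m m ℝ) (x : ℝ) :
    (x • (1 : Matrix m m ℝ) + M).det =
      ∑ S : Finset m, x ^ (Sᶜ.card) *
        (M.submatrix (fun i : {x // x ∈ S} => (i : m)) (fun i : {x // x ∈ S} => (i : m))).det := by
  classical
  set E : m → m → ℝ := fun i => Pi.single i (1:ℝ) with hE
  set xE : m → m → ℝ := fun i => x • (Pi.single i (1:ℝ) : m → ℝ) with hxE
  set Mf : m → m → ℝ := fun i => M i with hMf
  set f := (Matrix.detRowAlternating : (m → ℝ) [⋀^m]→ₗ[ℝ] ℝ).toMultilinearMap with hf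
  have h0 : (x • (1 : Matrix m m ℝ) + M) = Matrix.of (Mf + xE) := by
    ext i j
    simp [Mf, xE, Matrix.one_apply, Pi.single_apply, add_comm, mul_comm, eq_comm]
  rw [h0]
  show f (Mf + xE) = _
  rw [MultilinearMap.map_add_univ]
  refine Finset.sum_congr rfl fun S _ => ?_
  have h2 : S.piecewise Mf xE
      = Sᶜ.piecewise (fun i => x • (S.piecewise Mf E i)) (S.piecewise Mf E) := by
    ext i j
    by_cases h : i ∈ S <;> simp [E, xE, Mf, Finset.piecewise, h]
  rw [h2, MultilinearMap.map_piecewise_smul]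
  simp only [Finset.prod_const, smul_eq_mul]
  congr 1
  have h3 : S.piecewise Mf E = fun i => if i ∈ S then M i else Pi.single i (1:ℝ) := by
    ext i j; by_cases h : i ∈ S <;> simp [E, Mf, Finset.piecewise, h]
  rw [show f (S.piecewise Mf E) = Matrix.det (S.piecewise Mf E) from rfl, h3, det_unit_rows]

theorem det_smul_one_add_herm {m : Type*} [Fintype m] [DecidableEq m] {A : Matrix m m ℝ}
    (hA : A.IsHermitian) (x : ℝ) :
    (x • (1 : Matrix m m ℝ) + A).det = ∏ i, (x + hA.eigenvalues i) := by
  have h := hA.spectral_theorem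
  set U := (hA.eigenvectorUnitary : Matrix m m ℝ) with hU
  have h1 : x • (1 : Matrix m m ℝ) + A
      = U * (x • 1 + Matrix.diagonal (RCLike.ofReal ∘ hA.eigenvalues)) * (star U) := by
    rw [mul_add, add_mul]
    conv_lhs => rw [h, Unitary.conjStarAlgAut_apply]
    congr 1
    rw [Matrix.mul_smul, Matrix.smul_mul, Matrix.mul_one]
    congr 1
    exact (Matrix.mem_unitaryGroup_iff.mp hA.eigenvectorUnitary.2).symm
  rw [h1, Matrix.det_mul, Matrix.det_mul, mul_comm, ← mul_assoc, ← Matrix.det_mul,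
    (Matrix.mem_unitaryGroup_iff'.mp hA.eigenvectorUnitary.2), Matrix.det_one, one_mul]
  have h2 : x • (1 : Matrix m m ℝ) + Matrix.diagonal (RCLike.ofReal ∘ hA.eigenvalues)
      = Matrix.diagonal (fun i => x + hA.eigenvalues i) := by
    rw [smul_eq_diagonal_mul]
    ext i j
    by_cases hij : i = j <;> simp [Matrix.diagonal, hij]
  rw [h2, Matrix.det_diagonal]

theorem key_identity {m : Type*} [Fintype m] [DecidableEq m] {A : Matrix m m ℝ}
    (hA : A.IsHermitian) (x : ℝ) :
    ∏ i, (x - hA.eigenvalues i) =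
      ∑ S : Finset m, (-1 : ℝ) ^ S.card * x ^ (Sᶜ.card) *
        (A.submatrix (fun i : {x // x ∈ S} => (i : m)) (fun i : {x // x ∈ S} => (i : m))).det := by
  have h1 : ((-x) • (1 : Matrix m m ℝ) + A).det = ∏ i, (-x + hA.eigenvalues i) :=
    det_smul_one_add_herm hA (-x)
  have h2 : ((-x) • (1 : Matrix m m ℝ) + A) = -(x • (1 : Matrix m m ℝ) + (-A)) := by
    ext i j; simp; ring
  have h3 : (x • (1 : Matrix m m ℝ) + (-A)).det =
      ∑ S : Finset m, x ^ (Sᶜ.card) *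
        ((-A).submatrix (fun i : {x // x ∈ S} => (i : m))
          (fun i : {x // x ∈ S} => (i : m))).det := det_smul_one_add (-A) x
  have h4 : ∀ S : Finset m,
      ((-A).submatrix (fun i : {x // x ∈ S} => (i : m)) (fun i : {x // x ∈ S} => (i : m))).det
      = (-1:ℝ)^S.card *
        (A.submatrix (fun i : {x // x ∈ S} => (i : m)) (fun i : {x // x ∈ S} => (i : m))).det := by
    intro S
    have : ((-A).submatrix (fun i : {x // x ∈ S} => (i : m)) (fun i : {x // x ∈ S} => (i : m)))
        = -(A.submatrix (fun i : {x // x ∈ S} => (i : m)) (fun i : {x // x ∈ S} => (i : m))) := by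
      ext i j; simp
    rw [this, Matrix.det_neg, Fintype.card_coe]
  have h5 : ∏ i, (-x + hA.eigenvalues i) = (-1:ℝ)^(Fintype.card m) * ∏ i, (x - hA.eigenvalues i) := by
    calc ∏ i, (-x + hA.eigenvalues i) = ∏ i, ((-1) * (x - hA.eigenvalues i)) :=
          Finset.prod_congr rfl fun i _ => by ring
      _ = (∏ _i : m, (-1:ℝ)) * ∏ i, (x - hA.eigenvalues i) := Finset.prod_mul_distrib
      _ = (-1:ℝ)^(Fintype.card m) * ∏ i, (x - hA.eigenvalues i) := by
          rw [Finset.prod_const, Finset.card_univ]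
  rw [h2, Matrix.det_neg, h3, h5] at h1
  have hcard : ((-1:ℝ)^(Fintype.card m)) ≠ 0 := by positivity
  field_simp at h1
  rw [← h1]
  refine Finset.sum_congr rfl fun S _ => ?_
  rw [h4 S]
  ring

lemma root_sum {m : Type*} [Fintype m] [DecidableEq m] (c : Finset m → ℝ) (hce : c ∅ = 1)
    {r : ℝ} (hfr : ∑ S : Finset m, c S * r ^ (Sᶜ.card) = 0) :
    ∑ S ∈ (Finset.univ : Finset (Finset m)).erase ∅, (-(c S)) * r ^ (Sᶜ.card)
      = r ^ (Fintype.card m) := by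
  have h := Finset.sum_erase_add (Finset.univ : Finset (Finset m))
    (fun S => c S * r ^ (Sᶜ.card)) (Finset.mem_univ ∅)
  rw [hfr] at h
  beta_reduce at h
  rw [hce, one_mul, Finset.compl_empty, Finset.card_univ] at h
  have h3 : ∑ S ∈ (Finset.univ : Finset (Finset m)).erase ∅, (-(c S)) * r ^ (Sᶜ.card)
      = -∑ S ∈ (Finset.univ : Finset (Finset m)).erase ∅, (c S) * r ^ (Sᶜ.card) := by
    rw [← Finset.sum_neg_distrib]
    exact Finset.sum_congr rfl fun S _ => by ring
  rw [h3]
  linarith [h]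

lemma aux_two {m : Type*} [Fintype m] [DecidableEq m] (c : Finset m → ℝ) (hce : c ∅ = 1)
    (hc : ∀ S : Finset m, S ≠ ∅ → c S ≤ 0) {a b : ℝ} (hb : 0 < b) (hab : b < a)
    (hfa : ∑ S : Finset m, c S * a ^ (Sᶜ.card) = 0)
    (hfb : ∑ S : Finset m, c S * b ^ (Sᶜ.card) = 0) : False := by
  have ha : (0:ℝ) < a := lt_trans hb hab
  set n := Fintype.card m with hn
  have hA := root_sum c hce hfa
  have hB := root_sum c hce hfb
  -- there is a nonempty S with c S < 0
  have hex : ∃ S ∈ (Finset.univ : Finset (Finset m)).erase ∅, 0 < (-(c S)) * a ^ (Sᶜ.card) := by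
    by_contra hcon
    push_neg at hcon
    have : ∑ S ∈ (Finset.univ : Finset (Finset m)).erase ∅, (-(c S)) * a ^ (Sᶜ.card) ≤ 0 :=
      Finset.sum_nonpos hcon
    nlinarith [pow_pos ha n]
  -- compare the two sums multiplied crosswise
  have hcard : ∀ S : Finset m, S ∈ (Finset.univ : Finset (Finset m)).erase ∅ → Sᶜ.card < n := by
    intro S hS
    have hSne : S ≠ ∅ := Finset.ne_of_mem_erase hS
    have : 0 < S.card := Finset.card_pos.mpr (Finset.nonempty_iff_ne_empty.mpr hSne)
    have hsu := Finset.card_le_univ S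
    rw [Finset.card_compl]
    omega
  have hterm : ∀ S ∈ (Finset.univ : Finset (Finset m)).erase ∅,
      (-(c S)) * a ^ (Sᶜ.card) * b ^ n ≤ (-(c S)) * b ^ (Sᶜ.card) * a ^ n := by
    intro S hS
    have h1 : 0 ≤ -(c S) := by
      have := hc S (Finset.ne_of_mem_erase hS); linarith
    have hk := hcard S hS
    set k := Sᶜ.card
    have h2 : a ^ k * b ^ n ≤ b ^ k * a ^ n := by
      have hkn : k ≤ n := le_of_lt hk
      rw [show n = k + (n - k) by omega, pow_add, pow_add]
      have : b ^ (n - k) ≤ a ^ (n - k) :=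
        pow_le_pow_left₀ (le_of_lt hb) (le_of_lt hab) _
      have hbk : (0:ℝ) < b ^ k := pow_pos hb k
      have hak : (0:ℝ) < a ^ k := pow_pos ha k
      calc a ^ k * (b ^ k * b ^ (n-k)) = (a^k * b^k) * b^(n-k) := by ring
        _ ≤ (a^k * b^k) * a^(n-k) := by
            apply mul_le_mul_of_nonneg_left this; positivity
        _ = b ^ k * (a ^ k * a ^ (n-k)) := by ring
    calc (-(c S)) * a ^ k * b ^ n = (-(c S)) * (a ^ k * b ^ n) := by ring
      _ ≤ (-(c S)) * (b ^ k * a ^ n) := mul_le_mul_of_nonneg_left h2 h1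
      _ = (-(c S)) * b ^ k * a ^ n := by ring
  -- strictness at the witness
  obtain ⟨S0, hS0, hS0pos⟩ := hex
  have hstrict : (-(c S0)) * a ^ (S0ᶜ.card) * b ^ n < (-(c S0)) * b ^ (S0ᶜ.card) * a ^ n := by
    have h1 : 0 < -(c S0) := by
      by_contra hcon
      push_neg at hcon
      nlinarith [pow_pos ha (S0ᶜ.card)]
    have hk := hcard S0 hS0
    set k := S0ᶜ.card
    have h2 : a ^ k * b ^ n < b ^ k * a ^ n := by
      have hkn : k ≤ n := le_of_lt hk
      rw [show n = k + (n - k) by omega, pow_add, pow_add]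
      have hlt : b ^ (n - k) < a ^ (n - k) := by
        apply pow_lt_pow_left₀ hab (le_of_lt hb)
        omega
      have hbk : (0:ℝ) < b ^ k := pow_pos hb k
      have hak : (0:ℝ) < a ^ k := pow_pos ha k
      calc a ^ k * (b ^ k * b ^ (n-k)) = (a^k * b^k) * b^(n-k) := by ring
        _ < (a^k * b^k) * a^(n-k) := by
            apply mul_lt_mul_of_pos_left hlt; positivity
        _ = b ^ k * (a ^ k * a ^ (n-k)) := by ring
    nlinarith
  have hsum : ∑ S ∈ (Finset.univ : Finset (Finset m)).erase ∅, (-(c S)) * a ^ (Sᶜ.card) * b ^ n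
      < ∑ S ∈ (Finset.univ : Finset (Finset m)).erase ∅, (-(c S)) * b ^ (Sᶜ.card) * a ^ n :=
    Finset.sum_lt_sum hterm ⟨S0, hS0, hstrict⟩
  rw [← Finset.sum_mul, ← Finset.sum_mul, hA, hB] at hsum
  nlinarith [hsum]

lemma aux_double {m : Type*} [Fintype m] [DecidableEq m] (c : Finset m → ℝ) (hce : c ∅ = 1)
    (hc : ∀ S : Finset m, S ≠ ∅ → c S ≤ 0) {a : ℝ} (ha : 0 < a)
    (hdvd : (Polynomial.X - Polynomial.C a) ^ 2 ∣
      (∑ S : Finset m, Polynomial.C (c S) * Polynomial.X ^ (Sᶜ.card))) : False := by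
  classical
  set n := Fintype.card m with hn
  set Q : Polynomial ℝ := ∑ S : Finset m, Polynomial.C (c S) * Polynomial.X ^ (Sᶜ.card) with hQ
  obtain ⟨R, hR⟩ := hdvd
  -- eval at a is zero
  have heval : Q.eval a = 0 := by
    rw [hR]; simp
  have hfa : ∑ S : Finset m, c S * a ^ (Sᶜ.card) = 0 := by
    have : Q.eval a = ∑ S : Finset m, c S * a ^ (Sᶜ.card) := by
      rw [hQ, Polynomial.eval_finset_sum]
      exact Finset.sum_congr rfl fun S _ => by simp
    rw [← this, heval]
  -- derivative at a is zero
  have hder : (Polynomial.derivative Q).eval a = 0 := by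
    rw [hR]
    rw [Polynomial.derivative_mul]
    simp [Polynomial.derivative_pow]
  have hderval : (Polynomial.derivative Q).eval a
      = ∑ S : Finset m, c S * (Sᶜ.card : ℝ) * a ^ (Sᶜ.card - 1) := by
    rw [hQ, map_sum, Polynomial.eval_finset_sum]
    refine Finset.sum_congr rfl fun S _ => ?_
    rw [Polynomial.derivative_C_mul_X_pow]
    simp [mul_comm]
  have hda : ∑ S : Finset m, c S * (Sᶜ.card : ℝ) * a ^ (Sᶜ.card - 1) = 0 := by
    rw [← hderval, hder]
  -- multiply by a
  have hda2 : ∑ S : Finset m, c S * (Sᶜ.card : ℝ) * a ^ (Sᶜ.card) = 0 := by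
    calc ∑ S : Finset m, c S * (Sᶜ.card : ℝ) * a ^ (Sᶜ.card)
        = ∑ S : Finset m, (c S * (Sᶜ.card : ℝ) * a ^ (Sᶜ.card - 1)) * a := by
          refine Finset.sum_congr rfl fun S _ => ?_
          rcases Nat.eq_zero_or_pos (Sᶜ.card) with h | h
          · rw [h]; simp
          · have hpow : a ^ (Sᶜ.card) = a ^ (Sᶜ.card - 1) * a := by
              rw [← pow_succ]; congr 1; omega
            rw [hpow]; ring
      _ = (∑ S : Finset m, c S * (Sᶜ.card : ℝ) * a ^ (Sᶜ.card - 1)) * a :=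
          (Finset.sum_mul _ _ _).symm
      _ = 0 := by rw [hda]; ring
  -- cast fact
  have hcast : ∀ S : Finset m, (S.card : ℝ) = (n : ℝ) - (Sᶜ.card : ℝ) := by
    intro S
    have h1 : Sᶜ.card = Fintype.card m - S.card := Finset.card_compl S
    have h2 : S.card ≤ Fintype.card m := Finset.card_le_univ S
    have h3 : Sᶜ.card + S.card = n := by omega
    have h4 : ((Sᶜ.card + S.card : ℕ) : ℝ) = (n : ℝ) := by exact_mod_cast congrArg Nat.cast h3
    push_cast at h4
    linarith
  -- combine
  have h1 := congrArg (fun t : ℝ => (n : ℝ) * t) hfa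
  simp only [mul_zero, Finset.mul_sum] at h1
  have hcomb : ∑ S : Finset m, (S.card : ℝ) * ((-(c S)) * a ^ (Sᶜ.card)) = 0 := by
    calc ∑ S : Finset m, (S.card : ℝ) * ((-(c S)) * a ^ (Sᶜ.card))
        = ∑ S : Finset m, (c S * (Sᶜ.card : ℝ) * a ^ (Sᶜ.card)
            - (n : ℝ) * (c S * a ^ (Sᶜ.card))) := by
          refine Finset.sum_congr rfl fun S _ => ?_
          rw [hcast S]; ring
      _ = (∑ S : Finset m, c S * (Sᶜ.card : ℝ) * a ^ (Sᶜ.card))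
            - ∑ S : Finset m, (n : ℝ) * (c S * a ^ (Sᶜ.card)) := Finset.sum_sub_distrib _ _
      _ = 0 := by rw [hda2, h1]; ring
  -- final contradiction
  have hsplit := Finset.sum_erase_add (Finset.univ : Finset (Finset m))
    (fun S => (S.card : ℝ) * ((-(c S)) * a ^ (Sᶜ.card))) (Finset.mem_univ ∅)
  rw [hcomb] at hsplit
  beta_reduce at hsplit
  simp only [Finset.card_empty, Nat.cast_zero, zero_mul, add_zero] at hsplit
  have hge : ∑ S ∈ (Finset.univ : Finset (Finset m)).erase ∅, (-(c S)) * a ^ (Sᶜ.card)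
      ≤ ∑ S ∈ (Finset.univ : Finset (Finset m)).erase ∅,
          (S.card : ℝ) * ((-(c S)) * a ^ (Sᶜ.card)) := by
    refine Finset.sum_le_sum fun S hS => ?_
    have hne : S ≠ ∅ := Finset.ne_of_mem_erase hS
    have hpos : 0 < S.card := Finset.card_pos.mpr (Finset.nonempty_iff_ne_empty.mpr hne)
    have h1c : (1 : ℝ) ≤ (S.card : ℝ) := by exact_mod_cast hpos
    have hnn : 0 ≤ (-(c S)) * a ^ (Sᶜ.card) := by
      have := hc S hne
      have := pow_pos ha (Sᶜ.card)
      nlinarith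
    nlinarith
  have hrs := root_sum c hce hfa
  have : (0:ℝ) < a ^ n := pow_pos ha n
  rw [hrs] at hge
  rw [hsplit] at hge
  linarith

theorem backward {m : Type*} [Fintype m] [DecidableEq m] {A : Matrix m m ℝ}
    (hA : A.IsHermitian)
    (hyp : ∀ S : Finset m, S.Nonempty →
      0 ≤ (-1 : ℝ) ^ (S.card - 1) *
        (A.submatrix (fun i : {x // x ∈ S} => (i : m)) (fun i : {x // x ∈ S} => (i : m))).det) :
    (Finset.univ.filter fun i => 0 < hA.eigenvalues i).card ≤ 1 := by
  classical
  by_contra hcon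
  push_neg at hcon
  obtain ⟨i, hi, j, hj, hij⟩ := Finset.one_lt_card.mp hcon
  rw [Finset.mem_filter] at hi hj
  have hi' : 0 < hA.eigenvalues i := hi.2
  have hj' : 0 < hA.eigenvalues j := hj.2
  set c : Finset m → ℝ := fun S =>
    (-1 : ℝ) ^ S.card *
      (A.submatrix (fun i : {x // x ∈ S} => (i : m)) (fun i : {x // x ∈ S} => (i : m))).det
    with hcdef
  have hce : c ∅ = 1 := by
    haveI : IsEmpty {x // x ∈ (∅ : Finset m)} := by
      simp [Finset.isEmpty_coe_sort]; exact ⟨fun x => x.2⟩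
    simp [hcdef, Matrix.det_isEmpty]
  have hc : ∀ S : Finset m, S ≠ ∅ → c S ≤ 0 := by
    intro S hS
    have hne : S.Nonempty := Finset.nonempty_iff_ne_empty.mpr hS
    have h1 := hyp S hne
    have hcard : S.card = (S.card - 1) + 1 :=
      (Nat.succ_pred_eq_of_pos (Finset.card_pos.mpr hne)).symm
    rw [hcdef]
    simp only
    rw [hcard, pow_succ]
    nlinarith
  have id1 : ∀ x : ℝ, ∏ k, (x - hA.eigenvalues k) = ∑ S : Finset m, c S * x ^ (Sᶜ.card) := by
    intro x
    rw [key_identity hA x]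
    exact Finset.sum_congr rfl fun S _ => by rw [hcdef]; ring
  have hroot : ∀ k : m, ∑ S : Finset m, c S * (hA.eigenvalues k) ^ (Sᶜ.card) = 0 := by
    intro k
    rw [← id1]
    exact Finset.prod_eq_zero (Finset.mem_univ k) (by ring)
  rcases lt_trichotomy (hA.eigenvalues i) (hA.eigenvalues j) with h | h | h
  · exact aux_two c hce hc hi' h (hroot j) (hroot i)
  · -- equal: double root
    set a := hA.eigenvalues i with hadef
    have hQ : (∑ S : Finset m, Polynomial.C (c S) * Polynomial.X ^ (Sᶜ.card))
        = ∏ k, (Polynomial.X - Polynomial.C (hA.eigenvalues k)) := by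
      apply Polynomial.funext
      intro x
      rw [Polynomial.eval_finset_sum, Polynomial.eval_prod]
      simp only [Polynomial.eval_mul, Polynomial.eval_pow, Polynomial.eval_C,
        Polynomial.eval_X, Polynomial.eval_sub]
      rw [← id1]
    have hdvd : (Polynomial.X - Polynomial.C a) ^ 2 ∣
        (∑ S : Finset m, Polynomial.C (c S) * Polynomial.X ^ (Sᶜ.card)) := by
      rw [hQ]
      have h1 : ∏ k, (Polynomial.X - Polynomial.C (hA.eigenvalues k))
          = (Polynomial.X - Polynomial.C (hA.eigenvalues i)) *
            ∏ k ∈ Finset.univ.erase i, (Polynomial.X - Polynomial.C (hA.eigenvalues k)) :=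
        (Finset.mul_prod_erase Finset.univ _ (Finset.mem_univ i)).symm
      have hjmem : j ∈ Finset.univ.erase i := Finset.mem_erase.mpr ⟨hij.symm, Finset.mem_univ j⟩
      have h2 : ∏ k ∈ Finset.univ.erase i, (Polynomial.X - Polynomial.C (hA.eigenvalues k))
          = (Polynomial.X - Polynomial.C (hA.eigenvalues j)) *
            ∏ k ∈ (Finset.univ.erase i).erase j,
              (Polynomial.X - Polynomial.C (hA.eigenvalues k)) :=
        (Finset.mul_prod_erase _ _ hjmem).symm
      refine ⟨∏ k ∈ (Finset.univ.erase i).erase j,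
          (Polynomial.X - Polynomial.C (hA.eigenvalues k)), ?_⟩
      rw [h1, h2, ← h, ← hadef, sq, mul_assoc]
    exact aux_double c hce hc hi' hdvd
  · exact aux_two c hce hc hj' h (hroot i) (hroot j)

section Fwd

variable {m : Type*} [Fintype m] [DecidableEq m]

lemma qf_eq_sum {M : Matrix m m ℝ} (hM : M.IsHermitian) (w : m → ℝ) :
    w ⬝ᵥ (M *ᵥ w) = ∑ i, hM.eigenvalues i *
      (hM.eigenvectorBasis.repr ((WithLp.equiv 2 (m → ℝ)).symm w) i) ^ 2 := by
  classical
  set b := hM.eigenvectorBasis with hb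
  set W : EuclideanSpace ℝ m := (WithLp.equiv 2 (m → ℝ)).symm w with hW
  have hsymm : (Matrix.toEuclideanLin M).IsSymmetric := Matrix.isHermitian_iff_isSymmetric.1 hM
  have hTb : ∀ i, Matrix.toEuclideanLin M (b i) = hM.eigenvalues i • b i := by
    intro i
    apply (WithLp.equiv 2 (m → ℝ)).injective
    have h1 := hM.mulVec_eigenvectorBasis i
    simpa using h1
  -- LHS as inner product
  have hL : w ⬝ᵥ (M *ᵥ w) = (inner ℝ W (Matrix.toEuclideanLin M W) : ℝ) := by
    rw [hW]
    simp [Matrix.toEuclideanLin_toLp, EuclideanSpace.inner_toLp_toLp, dotProduct_comm]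
  rw [hL]
  -- expand via repr isometry
  have hP : (inner ℝ W (Matrix.toEuclideanLin M W) : ℝ)
      = ∑ i, (b.repr W i) * (b.repr (Matrix.toEuclideanLin M W) i) := by
    calc (inner ℝ W (Matrix.toEuclideanLin M W) : ℝ)
        = inner ℝ (b.repr W) (b.repr (Matrix.toEuclideanLin M W)) :=
          (b.repr.inner_map_map _ _).symm
      _ = ∑ i, (b.repr W i) * (b.repr (Matrix.toEuclideanLin M W) i) := by
          rw [PiLp.inner_apply]
          exact Finset.sum_congr rfl fun i _ => by
            simp [RCLike.inner_apply, conj_trivial, mul_comm]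
  rw [hP]
  refine Finset.sum_congr rfl fun i _ => ?_
  have h2 : b.repr (Matrix.toEuclideanLin M W) i = hM.eigenvalues i * b.repr W i := by
    rw [b.repr_apply_apply, ← hsymm (b i) W, hTb i]
    rw [inner_smul_left]
    simp only [conj_trivial, RCLike.conj_to_real]
    rw [← b.repr_apply_apply]
  rw [h2]
  ring

-- definition of extension by zero
def extZ (S : Finset m) (u : {x // x ∈ S} → ℝ) : m → ℝ :=
  fun i => if h : i ∈ S then u ⟨i, h⟩ else 0

lemma sum_univ_to_sub (S : Finset m) (g : m → ℝ) (h0 : ∀ j, j ∉ S → g j = 0) :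
    ∑ j : m, g j = ∑ j : {x // x ∈ S}, g j := by
  rw [Finset.sum_coe_sort S g]
  exact (Finset.sum_subset (Finset.subset_univ S) fun j _ hj => h0 j hj).symm

lemma extZ_qf (S : Finset m) (A : Matrix m m ℝ) (u v : {x // x ∈ S} → ℝ) :
    (extZ S u) ⬝ᵥ (A *ᵥ (extZ S v)) =
      u ⬝ᵥ ((A.submatrix (fun i : {x // x ∈ S} => (i : m)) (fun i : {x // x ∈ S} => (i : m)))
        *ᵥ v) := by
  classical
  have hmv : ∀ i : {x // x ∈ S},
      (A *ᵥ (extZ S v)) (i : m)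
        = ((A.submatrix (fun i : {x // x ∈ S} => (i : m)) (fun i : {x // x ∈ S} => (i : m)))
            *ᵥ v) i := by
    intro i
    show ∑ j, A i j * extZ S v j = ∑ j : {x // x ∈ S}, A i j * v j
    rw [sum_univ_to_sub S (fun j => A i j * extZ S v j) (fun j hj => by simp [extZ, hj])]
    exact Finset.sum_congr rfl fun j _ => by simp [extZ, j.2]
  show ∑ i, extZ S u i * (A *ᵥ (extZ S v)) i = ∑ i : {x // x ∈ S}, u i * _
  rw [sum_univ_to_sub S (fun i => extZ S u i * (A *ᵥ (extZ S v)) i)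
    (fun i hi => by simp [extZ, hi])]
  refine Finset.sum_congr rfl fun i _ => ?_
  rw [hmv i]
  congr 1
  simp [extZ, i.2]

lemma dot_eigenvectorBasis {M : Matrix m m ℝ} (hM : M.IsHermitian) (p q : m) :
    (⇑(hM.eigenvectorBasis p) : m → ℝ) ⬝ᵥ (⇑(hM.eigenvectorBasis q) : m → ℝ)
      = if p = q then 1 else 0 := by
  have h := orthonormal_iff_ite.mp hM.eigenvectorBasis.orthonormal p q
  rw [EuclideanSpace.inner_eq_star_dotProduct] at h
  rw [dotProduct_comm]
  simpa using h

lemma repr_extension_zero {M : Matrix m m ℝ} (hM : M.IsHermitian)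
    (hcount : (Finset.univ.filter fun i => 0 < hM.eigenvalues i).card ≤ 1)
    (x y : m → ℝ)
    (hxy : ∀ c d : ℝ, (c ≠ 0 ∨ d ≠ 0) →
      0 < (c • x + d • y) ⬝ᵥ (M *ᵥ (c • x + d • y))) : False := by
  classical
  set b := hM.eigenvectorBasis with hb
  have hqf : ∀ w : m → ℝ, w ⬝ᵥ (M *ᵥ w)
      = ∑ i, hM.eigenvalues i * (b.repr ((WithLp.equiv 2 (m → ℝ)).symm w) i) ^ 2 :=
    fun w => qf_eq_sum hM w
  rcases Finset.eq_empty_or_nonempty (Finset.univ.filter fun i => 0 < hM.eigenvalues i)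
    with hemp | ⟨i0, hi0⟩
  · have hall : ∀ i : m, hM.eigenvalues i ≤ 0 := by
      intro i
      by_contra hcon
      push_neg at hcon
      have hmem : i ∈ Finset.univ.filter fun i => 0 < hM.eigenvalues i :=
        Finset.mem_filter.mpr ⟨Finset.mem_univ i, hcon⟩
      rw [hemp] at hmem
      exact Finset.notMem_empty i hmem
    have h1 := hxy 1 0 (Or.inl one_ne_zero)
    have h2 : ((1:ℝ) • x + (0:ℝ) • y) ⬝ᵥ (M *ᵥ ((1:ℝ) • x + (0:ℝ) • y)) ≤ 0 := by
      rw [hqf]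
      exact Finset.sum_nonpos fun i _ => mul_nonpos_of_nonpos_of_nonneg (hall i) (sq_nonneg _)
    linarith
  · have hother : ∀ k : m, k ≠ i0 → hM.eigenvalues k ≤ 0 := by
      intro k hk
      by_contra hcon
      push_neg at hcon
      have hkmem : k ∈ Finset.univ.filter fun i => 0 < hM.eigenvalues i :=
        Finset.mem_filter.mpr ⟨Finset.mem_univ k, hcon⟩
      exact hk (Finset.card_le_one.mp hcount k hkmem i0 hi0)
    set α := b.repr ((WithLp.equiv 2 (m → ℝ)).symm x) i0 with hα
    set β := b.repr ((WithLp.equiv 2 (m → ℝ)).symm y) i0 with hβ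
    obtain ⟨c, d, hcd, hz⟩ : ∃ c d : ℝ, (c ≠ 0 ∨ d ≠ 0) ∧ c * α + d * β = 0 := by
      by_cases hα0 : α = 0
      · by_cases hβ0 : β = 0
        · exact ⟨1, 0, Or.inl one_ne_zero, by rw [hα0, hβ0]; ring⟩
        · exact ⟨β, -α, Or.inl hβ0, by ring⟩
      · exact ⟨β, -α, Or.inr (by simpa using hα0), by ring⟩
    have e1 : (WithLp.equiv 2 (m → ℝ)).symm (c • x + d • y)
        = c • ((WithLp.equiv 2 (m → ℝ)).symm x) + d • ((WithLp.equiv 2 (m → ℝ)).symm y) := rfl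
    have hzcoef : b.repr ((WithLp.equiv 2 (m → ℝ)).symm (c • x + d • y)) i0 = 0 := by
      rw [e1, map_add, _root_.map_smul, _root_.map_smul]
      show c * α + d * β = 0
      exact hz
    have hle : (c • x + d • y) ⬝ᵥ (M *ᵥ (c • x + d • y)) ≤ 0 := by
      rw [hqf]
      refine Finset.sum_nonpos fun i _ => ?_
      by_cases hii : i = i0
      · rw [hii, hzcoef]; simp
      · exact mul_nonpos_of_nonpos_of_nonneg (hother i hii) (sq_nonneg _)
    linarith [hxy c d hcd]

lemma submatrix_count {A : Matrix m m ℝ} (hA : A.IsHermitian)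
    (hcount : (Finset.univ.filter fun i => 0 < hA.eigenvalues i).card ≤ 1) (S : Finset m)
    (hB : (A.submatrix (fun i : {x // x ∈ S} => (i : m))
      (fun i : {x // x ∈ S} => (i : m))).IsHermitian) :
    (Finset.univ.filter fun i => 0 < hB.eigenvalues i).card ≤ 1 := by
  classical
  set B := A.submatrix (fun i : {x // x ∈ S} => (i : m)) (fun i : {x // x ∈ S} => (i : m))
    with hBdef
  by_contra hcon
  push_neg at hcon
  obtain ⟨p, hp, q, hq, hpq⟩ := Finset.one_lt_card.mp hcon
  rw [Finset.mem_filter] at hp hq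
  have hp' : 0 < hB.eigenvalues p := hp.2
  have hq' : 0 < hB.eigenvalues q := hq.2
  set u : {x // x ∈ S} → ℝ := ⇑(hB.eigenvectorBasis p) with hu
  set v : {x // x ∈ S} → ℝ := ⇑(hB.eigenvectorBasis q) with hv
  refine repr_extension_zero hA hcount (extZ S u) (extZ S v) fun c d hcd => ?_
  have hext : c • (extZ S u) + d • (extZ S v) = extZ S (c • u + d • v) := by
    funext i
    by_cases h : i ∈ S <;> simp [extZ, h]
  rw [hext, extZ_qf]
  have hmv : B *ᵥ (c • u + d • v)
      = c • (hB.eigenvalues p • u) + d • (hB.eigenvalues q • v) := by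
    rw [Matrix.mulVec_add, Matrix.mulVec_smul, Matrix.mulVec_smul]
    rw [hu, hv, hB.mulVec_eigenvectorBasis, hB.mulVec_eigenvectorBasis]
  rw [hmv]
  have horth1 : u ⬝ᵥ u = 1 := by
    have := dot_eigenvectorBasis hB p p; simpa [hu] using this
  have horth2 : v ⬝ᵥ v = 1 := by
    have := dot_eigenvectorBasis hB q q; simpa [hv] using this
  have horth3 : u ⬝ᵥ v = 0 := by
    have := dot_eigenvectorBasis hB p q; simpa [hu, hv, hpq] using this
  have horth4 : v ⬝ᵥ u = 0 := by
    have := dot_eigenvectorBasis hB q p; simpa [hu, hv, Ne.symm hpq] using this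
  have hexpand : (c • u + d • v) ⬝ᵥ (c • (hB.eigenvalues p • u) + d • (hB.eigenvalues q • v))
      = c^2 * hB.eigenvalues p + d^2 * hB.eigenvalues q := by
    rw [add_dotProduct, smul_dotProduct, smul_dotProduct,
      dotProduct_add, dotProduct_add,
      dotProduct_smul, dotProduct_smul, dotProduct_smul,
      dotProduct_smul]
    rw [dotProduct_smul, dotProduct_smul, dotProduct_smul,
      dotProduct_smul] 
    rw [horth1, horth2, horth3, horth4]
    simp only [smul_eq_mul]
    ring
  rw [hexpand]
  rcases hcd with hc | hd
  · have : 0 < c^2 := by positivity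
    nlinarith [sq_nonneg d]
  · have : 0 < d^2 := by positivity
    nlinarith [sq_nonneg c]

lemma forward_dir {A : Matrix m m ℝ} (hA : A.IsHermitian) (hnn : ∀ i j, 0 ≤ A i j)
    (hcount : (Finset.univ.filter fun i => 0 < hA.eigenvalues i).card ≤ 1)
    (S : Finset m) (hS : S.Nonempty) :
    0 ≤ (-1 : ℝ) ^ (S.card - 1) *
      (A.submatrix (fun i : {x // x ∈ S} => (i : m)) (fun i : {x // x ∈ S} => (i : m))).det := by
  classical
  set B := A.submatrix (fun i : {x // x ∈ S} => (i : m)) (fun i : {x // x ∈ S} => (i : m))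
    with hBdef
  have hB : B.IsHermitian := hA.submatrix _
  have hcB := submatrix_count hA hcount S hB
  haveI : Nonempty {x // x ∈ S} := ⟨⟨hS.choose, hS.choose_spec⟩⟩
  obtain ⟨i0, -, hmax⟩ := Finset.exists_max_image Finset.univ hB.eigenvalues
    Finset.univ_nonempty
  have hmax' : ∀ j, hB.eigenvalues j ≤ hB.eigenvalues i0 := fun j => hmax j (Finset.mem_univ j)
  -- top eigenvalue is nonnegative
  have hmax0 : 0 ≤ hB.eigenvalues i0 := by
    by_contra hcon
    push_neg at hcon
    set e : {x // x ∈ S} → ℝ := Pi.single i0 (1:ℝ) with he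
    have hq1 : e ⬝ᵥ (B *ᵥ e) = B i0 i0 := by
      rw [Matrix.mulVec_single]
      simp [he, single_dotProduct]
    have hq2 : e ⬝ᵥ (B *ᵥ e)
        = ∑ i, hB.eigenvalues i * (hB.eigenvectorBasis.repr
            ((WithLp.equiv 2 ({x // x ∈ S} → ℝ)).symm e) i) ^ 2 := qf_eq_sum hB e
    have hnn2 : 0 ≤ e ⬝ᵥ (B *ᵥ e) := by rw [hq1, hBdef]; exact hnn _ _
    have hterm : ∀ i ∈ Finset.univ, hB.eigenvalues i * (hB.eigenvectorBasis.repr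
        ((WithLp.equiv 2 ({x // x ∈ S} → ℝ)).symm e) i) ^ 2 ≤ 0 := fun i _ =>
      mul_nonpos_of_nonpos_of_nonneg (le_trans (hmax' i) (le_of_lt hcon)) (sq_nonneg _)
    have hzero : ∀ i ∈ Finset.univ, hB.eigenvalues i * (hB.eigenvectorBasis.repr
        ((WithLp.equiv 2 ({x // x ∈ S} → ℝ)).symm e) i) ^ 2 = 0 := by
      rw [← Finset.sum_eq_zero_iff_of_nonpos hterm]
      have := Finset.sum_nonpos hterm
      rw [← hq2] at this ⊢
      linarith
    have hcz : hB.eigenvectorBasis.repr ((WithLp.equiv 2 ({x // x ∈ S} → ℝ)).symm e) = 0 := by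
      ext i
      have h := hzero i (Finset.mem_univ i)
      have hμ : hB.eigenvalues i < 0 := lt_of_le_of_lt (hmax' i) hcon
      have : (hB.eigenvectorBasis.repr ((WithLp.equiv 2 ({x // x ∈ S} → ℝ)).symm e) i) ^ 2 = 0 := by
        by_contra hc2
        have : 0 < (hB.eigenvectorBasis.repr ((WithLp.equiv 2 ({x // x ∈ S} → ℝ)).symm e) i)^2 :=
          lt_of_le_of_ne (sq_nonneg _) (Ne.symm hc2)
        nlinarith
      simpa using pow_eq_zero_iff (n := 2) (by norm_num) |>.mp this
    have hez : (WithLp.equiv 2 ({x // x ∈ S} → ℝ)).symm e = 0 := by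
      have := hB.eigenvectorBasis.repr.map_eq_zero_iff.mp hcz
      exact this
    have : e i0 = 0 := by
      have := congrFun (congrArg (WithLp.equiv 2 ({x // x ∈ S} → ℝ)) hez) i0
      simpa using this
    rw [he] at this
    simp at this
  -- all other eigenvalues nonpositive
  have hother : ∀ k, k ≠ i0 → hB.eigenvalues k ≤ 0 := by
    intro k hk
    by_contra hcon
    push_neg at hcon
    have hkmem : k ∈ Finset.univ.filter fun i => 0 < hB.eigenvalues i :=
      Finset.mem_filter.mpr ⟨Finset.mem_univ k, hcon⟩
    have hi0mem : i0 ∈ Finset.univ.filter fun i => 0 < hB.eigenvalues i :=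
      Finset.mem_filter.mpr ⟨Finset.mem_univ i0, lt_of_lt_of_le hcon (hmax' k)⟩
    exact hk (Finset.card_le_one.mp hcB k hkmem i0 hi0mem)
  -- determinant as product of eigenvalues
  have hdet : B.det = ∏ i, hB.eigenvalues i := by
    have := hB.det_eq_prod_eigenvalues
    simpa using this
  have hsplit : ∏ i, hB.eigenvalues i
      = hB.eigenvalues i0 * ∏ j ∈ Finset.univ.erase i0, hB.eigenvalues j :=
    (Finset.mul_prod_erase Finset.univ _ (Finset.mem_univ i0)).symm
  have hcard : (Finset.univ.erase i0).card = S.card - 1 := by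
    rw [Finset.card_erase_of_mem (Finset.mem_univ i0), Finset.card_univ, Fintype.card_coe]
  have hprodneg : (-1:ℝ) ^ (S.card - 1) * ∏ j ∈ Finset.univ.erase i0, hB.eigenvalues j
      = ∏ j ∈ Finset.univ.erase i0, (-(hB.eigenvalues j)) := by
    rw [← hcard]
    calc (-1:ℝ) ^ (Finset.univ.erase i0).card * ∏ j ∈ Finset.univ.erase i0, hB.eigenvalues j
        = (∏ _j ∈ Finset.univ.erase i0, (-1:ℝ)) * ∏ j ∈ Finset.univ.erase i0, hB.eigenvalues j := by
          rw [Finset.prod_const]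
      _ = ∏ j ∈ Finset.univ.erase i0, (-(hB.eigenvalues j)) := by
          rw [← Finset.prod_mul_distrib]
          exact Finset.prod_congr rfl fun j _ => by ring
  have hfin : (-1:ℝ) ^ (S.card - 1) * B.det
      = hB.eigenvalues i0 * ∏ j ∈ Finset.univ.erase i0, (-(hB.eigenvalues j)) := by
    rw [hdet, hsplit, ← hprodneg]; ring
  rw [hfin]
  exact mul_nonneg hmax0 (Finset.prod_nonneg fun j hj =>
    neg_nonneg.mpr (hother j (Finset.ne_of_mem_erase hj)))

end Fwd

/-- A real symmetric (Hermitian) matrix with nonnegative entries has at most one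
positive eigenvalue iff every principal minor indexed by a nonempty `S` satisfies
`(-1)^(|S|-1) det(A[S]) ≥ 0`. -/
theorem stmt0 {n : ℕ} (A : Matrix (Fin n) (Fin n) ℝ) (hA : A.IsHermitian)
    (hnn : ∀ i j, 0 ≤ A i j) :
    (Finset.univ.filter fun i => 0 < hA.eigenvalues i).card ≤ 1 ↔
      ∀ S : Finset (Fin n), S.Nonempty →
        0 ≤ (-1 : ℝ) ^ (S.card - 1) *
          (A.submatrix (fun i : {x // x ∈ S} => (i : Fin n))
            (fun i : {x // x ∈ S} => (i : Fin n))).det := by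
  constructor
  · intro h S hS
    exact forward_dir hA hnn h S hS
  · intro h
    exact backward hA h
end

section
/- Let A be an n×n real symmetric matrix with nonnegative entries having at most one positive eigenvalue. Then for every nonempty subset S of {1,...,n}, the principal submatrix A[S] also has at most one positive eigenvalue, and (-1)^{|S|-1} det(A[S]) ≥ 0. -/
open Matrix Finset

section Aux

variable {n : Type*} [Fintype n] [DecidableEq n]

lemma herm_trace_eq_sum (A : Matrix n n ℝ) (hA : A.IsHermitian) :
    A.trace = ∑ i, hA.eigenvalues i := by
  conv_lhs => rw [hA.spectral_theorem]
  rw [Unitary.conjStarAlgAut_apply, Matrix.trace_mul_cycle,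
    show (star (hA.eigenvectorUnitary : Matrix n n ℝ)) * (hA.eigenvectorUnitary : Matrix n n ℝ)
      = 1 from Unitary.coe_star_mul_self hA.eigenvectorUnitary]
  simp [Matrix.trace_diagonal]

lemma herm_entry_eq (A : Matrix n n ℝ) (hA : A.IsHermitian) (j l : n) :
    A j l = ∑ k, hA.eigenvalues k * (hA.eigenvectorBasis k j * hA.eigenvectorBasis k l) := by
  conv_lhs => rw [hA.spectral_theorem]
  simp [Matrix.mul_apply, Matrix.diagonal_apply, Finset.sum_mul, Finset.mul_sum]
  exact Finset.sum_congr rfl fun k _ => by ring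

/-- quadratic form expansion in eigenbasis -/
lemma herm_quadform (A : Matrix n n ℝ) (hA : A.IsHermitian) (x : n → ℝ) :
    x ⬝ᵥ (A *ᵥ x) = ∑ k, hA.eigenvalues k * ((⇑(hA.eigenvectorBasis k) : n → ℝ) ⬝ᵥ x)^2 := by
  simp only [dotProduct, Matrix.mulVec, dotProduct]
  calc ∑ j, x j * ∑ l, A j l * x l
      = ∑ j, ∑ l, ∑ k, hA.eigenvalues k *
          (hA.eigenvectorBasis k j * x j) * (hA.eigenvectorBasis k l * x l) := by
        refine Finset.sum_congr rfl fun j _ => ?_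
        rw [Finset.mul_sum]
        refine Finset.sum_congr rfl fun l _ => ?_
        rw [herm_entry_eq A hA j l, Finset.sum_mul, Finset.mul_sum]
        exact Finset.sum_congr rfl fun k _ => by ring
    _ = ∑ j, ∑ k, ∑ l, hA.eigenvalues k *
          (hA.eigenvectorBasis k j * x j) * (hA.eigenvectorBasis k l * x l) :=
        Finset.sum_congr rfl fun j _ => Finset.sum_comm
    _ = ∑ k, ∑ j, ∑ l, hA.eigenvalues k *
          (hA.eigenvectorBasis k j * x j) * (hA.eigenvectorBasis k l * x l) :=
        Finset.sum_comm
    _ = ∑ k, hA.eigenvalues k * (∑ j, hA.eigenvectorBasis k j * x j)^2 := by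
        refine Finset.sum_congr rfl fun k _ => ?_
        rw [pow_two, Finset.sum_mul_sum, Finset.mul_sum]
        refine Finset.sum_congr rfl fun j _ => ?_
        rw [Finset.mul_sum]
        exact Finset.sum_congr rfl fun l _ => by ring

/-- orthonormality of the eigenbasis w.r.t. dot product -/
lemma herm_orth (A : Matrix n n ℝ) (hA : A.IsHermitian) (k l : n) :
    (⇑(hA.eigenvectorBasis k) : n → ℝ) ⬝ᵥ ⇑(hA.eigenvectorBasis l) = if k = l then 1 else 0 := by
  have h := (orthonormal_iff_ite.mp hA.eigenvectorBasis.orthonormal) k l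
  simp [PiLp.inner_apply] at h
  rw [← h, dotProduct]
  exact Finset.sum_congr rfl fun _ _ => mul_comm _ _

variable (S : Finset n)

noncomputable def inclVec (x : {a // a ∈ S} → ℝ) : n → ℝ :=
  fun j => if h : j ∈ S then x ⟨j, h⟩ else 0

lemma inclVec_dot (f : n → ℝ) (x : {a // a ∈ S} → ℝ) :
    f ⬝ᵥ inclVec S x = ∑ k : {a // a ∈ S}, f k * x k := by
  rw [dotProduct]
  rw [← Finset.sum_subset (Finset.subset_univ S)
    (by intro j _ hj; simp [inclVec, hj])]
  rw [← Finset.sum_coe_sort]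
  exact Finset.sum_congr rfl fun k _ => by simp [inclVec, k.2]

lemma dot_inclVec (f : n → ℝ) (x : {a // a ∈ S} → ℝ) :
    inclVec S x ⬝ᵥ f = ∑ k : {a // a ∈ S}, x k * f k := by
  rw [dotProduct_comm, inclVec_dot]
  exact Finset.sum_congr rfl fun k _ => mul_comm _ _

lemma inclVec_smul_add (a b : ℝ) (u v : {a // a ∈ S} → ℝ) :
    inclVec S (a • u + b • v) = a • inclVec S u + b • inclVec S v := by
  funext j
  by_cases h : j ∈ S <;> simp [inclVec, h]

lemma inclVec_quad (A : Matrix n n ℝ) (u v : {a // a ∈ S} → ℝ) :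
    inclVec S u ⬝ᵥ (A *ᵥ inclVec S v)
      = u ⬝ᵥ ((A.submatrix (fun i : {x // x ∈ S} => (i : n))
          (fun i : {x // x ∈ S} => (i : n))) *ᵥ v) := by
  rw [dot_inclVec]
  refine Finset.sum_congr rfl fun k _ => ?_
  congr 1
  rw [Matrix.mulVec, Matrix.mulVec, inclVec_dot (S := S) (f := fun j => A k j)]
  rfl

end Aux

lemma sign_lemma {m : Type*} [Fintype m] [DecidableEq m] [Nonempty m] (μ : m → ℝ)
    (hcard : (univ.filter fun i => 0 < μ i).card ≤ 1)
    (htr : 0 ≤ ∑ i, μ i) :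
    0 ≤ (-1:ℝ)^(Fintype.card m - 1) * ∏ i, μ i := by
  by_cases hex : ∃ i, 0 < μ i
  · obtain ⟨i₀, hi₀⟩ := hex
    have hrest : ∀ j, j ≠ i₀ → μ j ≤ 0 := by
      intro j hj
      by_contra h
      push_neg at h
      have : 1 < (univ.filter fun i => 0 < μ i).card :=
        Finset.one_lt_card.mpr ⟨i₀, by simp [hi₀], j, by simp [h], Ne.symm hj⟩
      omega
    have hcardm : (univ.erase i₀).card = Fintype.card m - 1 := by
      rw [Finset.card_erase_of_mem (mem_univ i₀), Finset.card_univ]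
    have h1 : ∏ i, μ i = μ i₀ * ∏ j ∈ univ.erase i₀, μ j :=
      (Finset.mul_prod_erase univ μ (mem_univ i₀)).symm
    have h2 : ∏ j ∈ univ.erase i₀, (-μ j)
        = (-1:ℝ)^(Fintype.card m - 1) * ∏ j ∈ univ.erase i₀, μ j := by
      calc ∏ j ∈ univ.erase i₀, (-μ j) = ∏ j ∈ univ.erase i₀, ((-1) * μ j) := by
            refine Finset.prod_congr rfl fun j _ => by ring
        _ = (∏ _j ∈ univ.erase i₀, (-1:ℝ)) * ∏ j ∈ univ.erase i₀, μ j :=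
            Finset.prod_mul_distrib
        _ = _ := by rw [Finset.prod_const, hcardm]
    have h3 : 0 ≤ ∏ j ∈ univ.erase i₀, (-μ j) :=
      Finset.prod_nonneg fun j hj => by
        have := hrest j (Finset.ne_of_mem_erase hj); linarith
    have h4 : 0 ≤ μ i₀ * ∏ j ∈ univ.erase i₀, (-μ j) :=
      mul_nonneg hi₀.le h3
    have hsq : ((-1:ℝ)^(Fintype.card m - 1)) * ((-1:ℝ)^(Fintype.card m - 1)) = 1 := by
      rw [← pow_add]
      exact Even.neg_one_pow ⟨_, rfl⟩
    calc (0:ℝ) ≤ μ i₀ * ∏ j ∈ univ.erase i₀, (-μ j) := h4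
      _ = (-1:ℝ)^(Fintype.card m - 1) * ∏ i, μ i := by
          rw [h2, h1]
          nlinarith [hsq]
  · push_neg at hex
    by_cases hzero : ∃ i, μ i = 0
    · obtain ⟨i, hi⟩ := hzero
      rw [Finset.prod_eq_zero (mem_univ i) hi]
      simp
    · push_neg at hzero
      have h5 : ∀ i, μ i < 0 := fun i => lt_of_le_of_ne (hex i) (hzero i)
      have : ∑ i, μ i < 0 := by
        have := Finset.sum_lt_sum_of_nonempty (Finset.univ_nonempty) (fun i _ => h5 i)
        simpa using this
      linarith

/-- If a real symmetric (Hermitian) matrix with nonnegative entries has at most one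
positive eigenvalue, then every principal submatrix `A[S]` (for nonempty `S`) has at most one
positive eigenvalue, and `(-1)^(|S|-1) det(A[S]) ≥ 0`. -/
theorem stmt1 {n : ℕ} (A : Matrix (Fin n) (Fin n) ℝ) (hA : A.IsHermitian)
    (hnn : ∀ i j, 0 ≤ A i j)
    (hpos : (Finset.univ.filter fun i => 0 < hA.eigenvalues i).card ≤ 1) :
    ∀ S : Finset (Fin n), S.Nonempty →
      (Finset.univ.filter fun i =>
        0 < (hA.submatrix (fun i : {x // x ∈ S} => (i : Fin n))).eigenvalues i).card ≤ 1 ∧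
      0 ≤ (-1 : ℝ) ^ (S.card - 1) *
        (A.submatrix (fun i : {x // x ∈ S} => (i : Fin n))
          (fun i : {x // x ∈ S} => (i : Fin n))).det := by
  intro S hS
  set B := A.submatrix (fun i : {x // x ∈ S} => (i : Fin n))
    (fun i : {x // x ∈ S} => (i : Fin n)) with hBdef
  set hB := hA.submatrix (fun i : {x // x ∈ S} => (i : Fin n)) with hBdef'
  have key1 : (Finset.univ.filter fun i => 0 < hB.eigenvalues i).card ≤ 1 := by
    by_contra hcon
    push_neg at hcon
    obtain ⟨i, hi, j, hj, hij⟩ := Finset.one_lt_card.mp hcon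
    simp only [Finset.mem_filter, Finset.mem_univ, true_and] at hi hj
    -- quadratic form of B on the 2-dim eigenspace span
    have hq : ∀ a b : ℝ,
        ((a • ⇑(hB.eigenvectorBasis i) + b • ⇑(hB.eigenvectorBasis j)) : {x // x ∈ S} → ℝ) ⬝ᵥ
          (B *ᵥ (a • ⇑(hB.eigenvectorBasis i) + b • ⇑(hB.eigenvectorBasis j)))
        = hB.eigenvalues i * a^2 + hB.eigenvalues j * b^2 := by
      intro a b
      rw [Matrix.mulVec_add, Matrix.mulVec_smul, Matrix.mulVec_smul,
        hB.mulVec_eigenvectorBasis, hB.mulVec_eigenvectorBasis]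
      simp only [dotProduct_add, add_dotProduct, dotProduct_smul,
        smul_dotProduct, smul_smul, smul_eq_mul]
      rw [herm_orth B hB i i, herm_orth B hB j j, herm_orth B hB i j, herm_orth B hB j i]
      simp [hij, Ne.symm hij]
      ring
    -- choose coefficients orthogonal (inside the big space) to all positive eigenvectors of A
    obtain ⟨a, b, hab, hker⟩ : ∃ a b : ℝ, ¬(a = 0 ∧ b = 0) ∧
        ∀ k, 0 < hA.eigenvalues k →
          (⇑(hA.eigenvectorBasis k) : Fin n → ℝ) ⬝ᵥ
            inclVec S (a • ⇑(hB.eigenvectorBasis i) + b • ⇑(hB.eigenvectorBasis j)) = 0 := by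
      by_cases hex : ∃ k, 0 < hA.eigenvalues k
      · obtain ⟨k₀, hk₀⟩ := hex
        have huniq : ∀ k, 0 < hA.eigenvalues k → k = k₀ := by
          intro k hk
          by_contra hne
          have : 1 < (Finset.univ.filter fun i => 0 < hA.eigenvalues i).card :=
            Finset.one_lt_card.mpr ⟨k, by simp [hk], k₀, by simp [hk₀], hne⟩
          omega
        set α := (⇑(hA.eigenvectorBasis k₀) : Fin n → ℝ) ⬝ᵥ inclVec S ⇑(hB.eigenvectorBasis i)
          with hα
        set β := (⇑(hA.eigenvectorBasis k₀) : Fin n → ℝ) ⬝ᵥ inclVec S ⇑(hB.eigenvectorBasis j)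
          with hβ
        have key : ∀ a b : ℝ,
            (⇑(hA.eigenvectorBasis k₀) : Fin n → ℝ) ⬝ᵥ
              inclVec S (a • ⇑(hB.eigenvectorBasis i) + b • ⇑(hB.eigenvectorBasis j))
            = a * α + b * β := by
          intro a b
          rw [inclVec_smul_add, dotProduct_add, dotProduct_smul,
            dotProduct_smul, hα, hβ]
          simp
        by_cases hz : α = 0 ∧ β = 0
        · exact ⟨1, 0, by simp, fun k hk => by rw [huniq k hk, key]; simp [hz.1, hz.2]⟩
        · refine ⟨β, -α, ?_, fun k hk => by rw [huniq k hk, key]; ring⟩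
          rintro ⟨h1, h2⟩
          exact hz ⟨by linarith [neg_eq_zero.mp h2], h1⟩
      · push_neg at hex
        exact ⟨1, 0, by simp, fun k hk => absurd hk (not_lt.mpr (hex k))⟩
    set z : {x // x ∈ S} → ℝ := a • ⇑(hB.eigenvectorBasis i) + b • ⇑(hB.eigenvectorBasis j)
      with hz
    have hposz : 0 < z ⬝ᵥ (B *ᵥ z) := by
      rw [hz, hq]
      rcases not_and_or.mp hab with h | h
      · have ha2 : 0 < a^2 := lt_of_le_of_ne (sq_nonneg a) (Ne.symm (pow_ne_zero 2 h))
        nlinarith [sq_nonneg b, hi, hj]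
      · have hb2 : 0 < b^2 := lt_of_le_of_ne (sq_nonneg b) (Ne.symm (pow_ne_zero 2 h))
        nlinarith [sq_nonneg a, hi, hj]
    have hEq : inclVec S z ⬝ᵥ (A *ᵥ inclVec S z) = z ⬝ᵥ (B *ᵥ z) := inclVec_quad S A z z
    have hle : inclVec S z ⬝ᵥ (A *ᵥ inclVec S z) ≤ 0 := by
      rw [herm_quadform A hA]
      refine Finset.sum_nonpos fun k _ => ?_
      by_cases hk : 0 < hA.eigenvalues k
      · rw [hker k hk]; simp
      · exact mul_nonpos_iff.mpr (Or.inr ⟨not_lt.mp hk, sq_nonneg _⟩)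
    rw [hEq] at hle
    linarith
  refine ⟨key1, ?_⟩
  have hne : Nonempty {x // x ∈ S} := ⟨⟨hS.choose, hS.choose_spec⟩⟩
  have htr : 0 ≤ ∑ k, hB.eigenvalues k := by
    rw [← herm_trace_eq_sum _ hB]
    exact Finset.sum_nonneg fun k _ => hnn k k
  have hsign := sign_lemma hB.eigenvalues key1 htr
  rw [Fintype.card_coe] at hsign
  have hdet : B.det = ∏ k, hB.eigenvalues k := by
    have := hB.det_eq_prod_eigenvalues
    simpa using this
  rw [hdet]
  exact hsign
end

section
/- Let M be the (n+1)×(n+1) real symmetric matrix with M_{00} = a, M_{0j} = M_{j0} = b for 1 ≤ j ≤ n, M_{jj} = b for 1 ≤ j ≤ n, and M_{jk} = c for 1 ≤ j ≠ k ≤ n, where a, b, c ≥ 0 and b > 0. Then M has at most one positive eigenvalue if and only if b ≤ c and ab + (n-1)ac ≤ nb². -/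
open Polynomial Matrix

noncomputable section

lemma charpoly_conj_aux {m : Type*} [DecidableEq m] [Fintype m] (P B Q : Matrix m m ℝ)
    (h1 : P * Q = 1) : (P * B * Q).charpoly = B.charpoly := by
  have hmap : ∀ X Y : Matrix m m ℝ, (X * Y).map (C : ℝ →+* ℝ[X]) = X.map C * Y.map C := by
    intro X Y; exact Matrix.map_mul
  have hPQ : P.map (C : ℝ →+* ℝ[X]) * Q.map C = 1 := by
    rw [← hmap, h1]; simp
  have hcomm : ∀ A : Matrix m m ℝ[X], Commute (Matrix.scalar m (X : ℝ[X])) A :=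
    fun A => Matrix.scalar_commute _ (fun r' => Commute.all _ _) A
  have key : charmatrix (P * B * Q) = P.map (C : ℝ →+* ℝ[X]) * charmatrix B * Q.map C := by
    simp only [charmatrix, RingHom.mapMatrix_apply, hmap]
    rw [Matrix.mul_sub, Matrix.sub_mul]
    congr 1
    rw [← (hcomm (P.map C)).eq, mul_assoc, hPQ, mul_one]
  rw [Matrix.charpoly, key, det_mul, det_mul, mul_comm, ← mul_assoc, mul_comm ((Q.map (C : ℝ →+* ℝ[X])).det),
    ← det_mul, ← hmap, h1]
  simp [Matrix.charpoly]

lemma charpoly_diag_aux {m : Type*} [DecidableEq m] [Fintype m] [LinearOrder m]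
    (d : m → ℝ) : (Matrix.diagonal d).charpoly = ∏ i : m, (X - C (d i)) := by
  have h : (Matrix.diagonal d).BlockTriangular id := by
    intro i j hij
    exact Matrix.diagonal_apply_ne _ (ne_of_gt hij)
  rw [Matrix.charpoly_of_upperTriangular _ h]
  simp

lemma herm_charpoly {N : ℕ} (A : Matrix (Fin N) (Fin N) ℝ) (hA : A.IsHermitian) :
    A.charpoly = ∏ i, (X - C (hA.eigenvalues i)) := by
  have hU : (hA.eigenvectorUnitary : Matrix (Fin N) (Fin N) ℝ) * star (hA.eigenvectorUnitary : Matrix (Fin N) (Fin N) ℝ) = 1 :=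
    (Matrix.mem_unitaryGroup_iff).mp hA.eigenvectorUnitary.2
  calc A.charpoly = ((hA.eigenvectorUnitary : Matrix (Fin N) (Fin N) ℝ) * diagonal (RCLike.ofReal ∘ hA.eigenvalues)
      * star (hA.eigenvectorUnitary : Matrix (Fin N) (Fin N) ℝ)).charpoly := by rw [← Unitary.conjStarAlgAut_apply (S := ℝ), ← hA.spectral_theorem]
    _ = (diagonal (RCLike.ofReal ∘ hA.eigenvalues)).charpoly := charpoly_conj_aux _ _ _ hU
    _ = ∏ i, (X - C (hA.eigenvalues i)) := by rw [charpoly_diag_aux]; simp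


def S3P22 (m : ℕ) : Matrix (Fin m) (Fin m) ℝ :=
  Matrix.of fun j k => if (j:ℕ) < (k:ℕ) then 1 else if j = k then -((k:ℕ)+1:ℝ) else 0

lemma s3sum (m : ℕ) (k : Fin m) (u t : ℝ) :
    ∑ j : Fin m, (if (j:ℕ) < (k:ℕ) then u else if j = k then t else 0)
      = (k:ℕ) * u + t := by
  have h1 : ∀ j : Fin m, (if (j:ℕ) < (k:ℕ) then u else if j = k then t else 0)
      = (if (j:ℕ) ∈ Finset.range (k:ℕ) then u else 0) + (if j = k then t else 0) := by
    intro j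
    rcases lt_trichotomy (j:ℕ) (k:ℕ) with h | h | h
    · simp [h, Fin.ext_iff, Nat.ne_of_lt h]
    · simp [h, Fin.ext_iff]
    · simp [Nat.lt_asymm h, Fin.ext_iff, Nat.ne_of_gt h, Nat.lt_irrefl, (by omega : ¬ (j:ℕ) < (k:ℕ))]
  rw [Finset.sum_congr rfl (fun j _ => h1 j), Finset.sum_add_distrib]
  congr 1
  · have : ∑ j : Fin m, (if (j:ℕ) ∈ Finset.range (k:ℕ) then u else (0:ℝ))
        = ∑ j ∈ Finset.univ.filter (fun j : Fin m => (j:ℕ) ∈ Finset.range (k:ℕ)), u := by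
      rw [Finset.sum_filter]
    rw [this, Finset.sum_const]
    have hcard : (Finset.univ.filter (fun j : Fin m => (j:ℕ) ∈ Finset.range (k:ℕ))).card = (k:ℕ) := by
      have h2 : Finset.univ.filter (fun j : Fin m => (j:ℕ) ∈ Finset.range (k:ℕ))
          = Finset.univ.filter (fun j : Fin m => j < k) := by
        apply Finset.filter_congr; intro j _
        simp only [Finset.mem_range, Fin.lt_def]
      rw [h2]
      have h3 : Finset.univ.filter (fun j : Fin m => j < k) = Finset.Iio k := by
        ext j; simp
      rw [h3, Fin.card_Iio]
    rw [hcard]; simp [mul_comm]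
  · simp

end

lemma s3colsum (m : ℕ) (k : Fin m) : ∑ j : Fin m, S3P22 m j k = -1 := by
  have := s3sum m k 1 (-((k:ℕ)+1:ℝ))
  simp only [S3P22, Matrix.of_apply]
  rw [this]; ring

lemma s3dot_lt (m : ℕ) (k k' : Fin m) (h : (k:ℕ) < (k':ℕ)) :
    ∑ j : Fin m, S3P22 m j k * S3P22 m j k' = -1 := by
  have h1 : ∀ j : Fin m, S3P22 m j k * S3P22 m j k' = S3P22 m j k := by
    intro j
    simp only [S3P22, Matrix.of_apply]
    rcases lt_trichotomy (j:ℕ) (k:ℕ) with hj | hj | hj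
    · simp [hj, (by omega : (j:ℕ) < (k':ℕ))]
    · have hne : ¬ (j:ℕ) < (k:ℕ) := by omega
      have hjk : j = k := Fin.ext hj
      have hlt : (j:ℕ) < (k':ℕ) := by omega
      simp [hne, hjk, hlt.trans_le (le_refl _), (by omega : (k:ℕ) < (k':ℕ))]
    · have h2 : ¬ (j:ℕ) < (k:ℕ) := by omega
      have h3 : ¬ j = k := by simp [Fin.ext_iff]; omega
      simp [h2, h3]
  rw [Finset.sum_congr rfl (fun j _ => h1 j), s3colsum]

lemma s3dot_self (m : ℕ) (k : Fin m) :
    ∑ j : Fin m, S3P22 m j k * S3P22 m j k = (k:ℕ) + ((k:ℕ)+1:ℝ)^2 := by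
  have h1 : ∀ j : Fin m, S3P22 m j k * S3P22 m j k
      = (if (j:ℕ) < (k:ℕ) then 1 else if j = k then ((k:ℕ)+1:ℝ)^2 else 0) := by
    intro j
    simp only [S3P22, Matrix.of_apply]
    rcases lt_trichotomy (j:ℕ) (k:ℕ) with hj | hj | hj
    · simp [hj]
    · have : ¬ (j:ℕ) < (k:ℕ) := by omega
      simp [this, hj, Fin.ext_iff]; ring
    · have h2 : ¬ (j:ℕ) < (k:ℕ) := by omega
      have h3 : ¬ j = k := by simp [Fin.ext_iff]; omega
      simp [h2, h3]
  rw [Finset.sum_congr rfl (fun j _ => h1 j), s3sum]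
  simp [mul_comm]

lemma s3rowmix (m : ℕ) (j : Fin m) (b c : ℝ) (v : Fin m → ℝ) :
    ∑ l : Fin m, (if j = l then b else c) * v l = (b - c) * v j + c * ∑ l : Fin m, v l := by
  have h1 : ∀ l : Fin m, (if j = l then b else c) * v l
      = (if l = j then (b - c) * v l else 0) + c * v l := by
    intro l
    by_cases h : l = j
    · simp [h]; ring
    · have h' : ¬ j = l := fun hh => h hh.symm
      simp [h, h']
  rw [Finset.sum_congr rfl (fun l _ => h1 l), Finset.sum_add_distrib,
    Finset.sum_ite_eq' Finset.univ j]
  simp [Finset.mul_sum]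

lemma s3pick (m : ℕ) (k : Fin m) (w : Fin m → ℝ) (t : ℝ) :
    ∑ x : Fin m, w x * (if x = k then t else 0) = w k * t := by
  have h1 : ∀ x : Fin m, w x * (if x = k then t else 0) = if x = k then w x * t else 0 := by
    intro x; split <;> simp
  rw [Finset.sum_congr rfl (fun x _ => h1 x), Finset.sum_ite_eq' Finset.univ k]
  simp

def S3M (m : ℕ) (a b c : ℝ) : Matrix (Fin 2 ⊕ Fin m) (Fin 2 ⊕ Fin m) ℝ :=
  fromBlocks !![a, b; b, b] (Matrix.of fun i _ => if i = 0 then b else c)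
    (Matrix.of fun _ i => if i = 0 then b else c) (Matrix.of fun j k => if j = k then b else c)

def S3P (m : ℕ) : Matrix (Fin 2 ⊕ Fin m) (Fin 2 ⊕ Fin m) ℝ :=
  fromBlocks 1 (Matrix.of fun i _ => if i = 0 then 0 else 1)
    (Matrix.of fun _ i => if i = 0 then 0 else 1) (S3P22 m)

def S3B (m : ℕ) (a b c : ℝ) : Matrix (Fin 2 ⊕ Fin m) (Fin 2 ⊕ Fin m) ℝ :=
  fromBlocks !![a, ((m:ℝ)+1)*b; b, b + (m:ℝ)*c] 0 0
    (Matrix.of fun j k => if j = k then b - c else 0)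

lemma s3MP (m : ℕ) (a b c : ℝ) : S3M m a b c * S3P m = S3P m * S3B m a b c := by
  rw [S3M, S3P, S3B, fromBlocks_multiply, fromBlocks_multiply]
  have hcol := s3colsum m
  apply Matrix.ext
  rintro (i | j) (i' | k) <;>
    simp only [fromBlocks_apply₁₁, fromBlocks_apply₁₂, fromBlocks_apply₂₁, fromBlocks_apply₂₂,
      Matrix.add_apply, Matrix.mul_apply, Matrix.of_apply, Matrix.one_apply, Matrix.zero_apply,
      mul_zero, zero_mul, Finset.sum_const_zero, add_zero, zero_add]
  · -- (1,1)
    rw [Fin.sum_univ_two, Fin.sum_univ_two, Finset.sum_const]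
    fin_cases i <;> fin_cases i' <;>
      simp [Fin.ext_iff] <;> push_cast <;> ring
  · -- (1,2)
    rw [Fin.sum_univ_two, ← Finset.mul_sum, hcol, s3pick]
    fin_cases i <;> simp [Fin.ext_iff] <;> ring
  · -- (2,1)
    rw [Fin.sum_univ_two, Fin.sum_univ_two]
    have h3 : ∑ k : Fin m, (if j = k then b else c) * (if i' = 0 then (0:ℝ) else 1)
        = ((b - c) + c * m) * (if i' = 0 then (0:ℝ) else 1) := by
      rw [← Finset.sum_mul]
      congr 1
      have := s3rowmix m j b c (fun _ => 1)
      simpa using this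
    rw [h3]
    fin_cases i' <;> simp [Fin.ext_iff] <;> ring
  · -- (2,2)
    rw [Fin.sum_univ_two, s3rowmix m j b c (fun l => S3P22 m l k), hcol,
      s3pick m k (fun l => S3P22 m j l) (b - c)]
    simp
    ring

def S3E (m : ℕ) : Matrix (Fin 2 ⊕ Fin m) (Fin 2 ⊕ Fin m) ℝ :=
  fromBlocks !![1, 0; 0, (m:ℝ)+1] 0 0
    (Matrix.of fun j k => if j = k then ((k:ℕ)+1:ℝ) * ((k:ℕ)+2) else 0)

lemma s3gram (m : ℕ) : (S3P m)ᵀ * S3P m = S3E m := by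
  rw [S3P, S3E, fromBlocks_transpose, fromBlocks_multiply]
  apply Matrix.ext
  rintro (i | j) (i' | k) <;>
    simp only [fromBlocks_apply₁₁, fromBlocks_apply₁₂, fromBlocks_apply₂₁, fromBlocks_apply₂₂,
      Matrix.add_apply, Matrix.mul_apply, Matrix.of_apply, Matrix.one_apply,
      Matrix.transpose_apply, Matrix.zero_apply, mul_zero, zero_mul,
      Finset.sum_const_zero, add_zero, zero_add]
  · -- (1,1)
    rw [Fin.sum_univ_two]
    have : ∑ x : Fin m, (if i = 0 then (0:ℝ) else 1) * (if i' = 0 then (0:ℝ) else 1)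
        = m * ((if i = 0 then (0:ℝ) else 1) * (if i' = 0 then (0:ℝ) else 1)) := by
      rw [Finset.sum_const]; simp
    rw [this]
    fin_cases i <;> fin_cases i' <;> simp [Fin.ext_iff, Matrix.one_apply] <;> ring
  · -- (1,2)
    rw [Fin.sum_univ_two]
    have : ∑ x : Fin m, (if i = 0 then (0:ℝ) else 1) * S3P22 m x k
        = (if i = 0 then (0:ℝ) else 1) * (-1) := by
      rw [← Finset.mul_sum, s3colsum]
    rw [this]
    fin_cases i <;> simp [Fin.ext_iff, Matrix.one_apply]
  · -- (2,1)
    rw [Fin.sum_univ_two]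
    have : ∑ x : Fin m, S3P22 m x j * (if i' = 0 then (0:ℝ) else 1)
        = (-1) * (if i' = 0 then (0:ℝ) else 1) := by
      rw [← Finset.sum_mul, s3colsum]
    rw [this]
    fin_cases i' <;> simp [Fin.ext_iff, Matrix.one_apply]
  · -- (2,2)
    rw [Fin.sum_univ_two]
    rcases lt_trichotomy ((j:ℕ)) ((k:ℕ)) with h | h | h
    · rw [s3dot_lt m j k h]
      have : ¬ j = k := by simp [Fin.ext_iff]; omega
      simp [this, Fin.ext_iff]
    · have hjk : j = k := Fin.ext h
      subst hjk
      rw [s3dot_self m j]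
      simp; ring
    · have h2 : ∑ x : Fin m, S3P22 m x j * S3P22 m x k = -1 := by
        rw [Finset.sum_congr rfl (fun x _ => mul_comm _ _), s3dot_lt m k j h]
      rw [h2]
      have : ¬ j = k := by simp [Fin.ext_iff]; omega
      simp [this, Fin.ext_iff]

lemma s3P_isUnit (m : ℕ) : IsUnit (S3P m) := by
  rw [Matrix.isUnit_iff_isUnit_det, isUnit_iff_ne_zero]
  intro h0
  have hdet : ((S3P m)ᵀ * S3P m).det = (S3E m).det := by rw [s3gram]
  rw [Matrix.det_mul, Matrix.det_transpose, h0, mul_zero] at hdet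
  have hE : (S3E m).det ≠ 0 := by
    rw [S3E, Matrix.det_fromBlocks_zero₁₂]
    have h1 : (!![1, 0; 0, (m:ℝ)+1]).det = (m:ℝ)+1 := by
      simp [Matrix.det_fin_two]
    have h2 : (Matrix.of fun j k : Fin m => if j = k then ((k:ℕ)+1:ℝ) * ((k:ℕ)+2) else 0)
        = Matrix.diagonal (fun k : Fin m => ((k:ℕ)+1:ℝ) * ((k:ℕ)+2)) := by
      apply Matrix.ext; intro j k
      by_cases h : j = k <;> simp [h, Matrix.diagonal]
    rw [h1, h2, Matrix.det_diagonal]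
    apply mul_ne_zero
    · positivity
    · apply Finset.prod_ne_zero_iff.mpr
      intro k _
      positivity
  exact hE hdet.symm

lemma s3charpoly_fin_two (A : Matrix (Fin 2) (Fin 2) ℝ) :
    A.charpoly = X^2 - C (A 0 0 + A 1 1) * X + C (A 0 0 * A 1 1 - A 0 1 * A 1 0) := by
  rw [Matrix.charpoly, Matrix.det_fin_two, Matrix.charmatrix_apply_eq, Matrix.charmatrix_apply_eq,
    Matrix.charmatrix_apply_ne _ _ _ (by decide), Matrix.charmatrix_apply_ne _ _ _ (by decide)]
  simp only [C_add, C_mul, C_sub]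
  ring

lemma s3charB (m : ℕ) (a b c : ℝ) :
    (S3B m a b c).charpoly
      = (X^2 - C (a + b + (m:ℝ)*c) * X + C (a*(b + (m:ℝ)*c) - ((m:ℝ)+1)*b^2)) * (X - C (b-c))^m := by
  rw [S3B, Matrix.charpoly_fromBlocks_zero₁₂]
  congr 1
  · rw [s3charpoly_fin_two]
    congr 2 <;> simp <;> ring
  · have h2 : (Matrix.of fun j k : Fin m => if j = k then b - c else 0)
        = Matrix.diagonal (fun _ : Fin m => b - c) := by
      apply Matrix.ext; intro j k
      by_cases h : j = k <;> simp [h, Matrix.diagonal]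
    rw [h2, charpoly_diag_aux, Finset.prod_const, Finset.card_univ, Fintype.card_fin]

lemma s3quad (T D : ℝ) (h : 0 ≤ T^2 - 4*D) :
    (X^2 - C T * X + C D : ℝ[X])
      = (X - C ((T + Real.sqrt (T^2-4*D))/2)) * (X - C ((T - Real.sqrt (T^2-4*D))/2)) := by
  have hs : Real.sqrt (T^2-4*D) ^ 2 = T^2 - 4*D := Real.sq_sqrt h
  set s := Real.sqrt (T^2-4*D) with hs'
  have hsum : (T + s)/2 + (T - s)/2 = T := by ring
  have hprod : ((T + s)/2) * ((T - s)/2) = D := by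
    have : ((T + s)/2) * ((T - s)/2) = (T^2 - s^2)/4 := by ring
    rw [this, hs]; ring
  have expand : ∀ p q : ℝ, (X - C p) * (X - C q) = X^2 - C (p+q) * X + C (p*q) := by
    intro p q; simp only [C_add, C_mul]; ring
  rw [expand, hsum, hprod]

lemma s3countP_replicate (k : ℕ) (x : ℝ) (p : ℝ → Prop) [DecidablePred p] :
    Multiset.countP p (Multiset.replicate k x) = if p x then k else 0 := by
  induction k with
  | zero => simp
  | succ k ih =>
    rw [Multiset.replicate_succ, Multiset.countP_cons, ih]
    by_cases h : p x <;> simp [h]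

lemma s3key {m : ℕ} (a b c : ℝ)
    (M : Matrix (Fin (m+2)) (Fin (m+2)) ℝ)
    (hM : ∀ i j : Fin (m+2), M i j =
      if i = 0 ∧ j = 0 then a
      else if i = 0 ∨ j = 0 then b
      else if i = j then b else c)
    (hherm : M.IsHermitian) :
    (Finset.univ.val.map hherm.eigenvalues) =
      ((a+b+(m:ℝ)*c + Real.sqrt ((a+b+(m:ℝ)*c)^2 - 4*(a*(b+(m:ℝ)*c) - ((m:ℝ)+1)*b^2)))/2) ::ₘ
      ((a+b+(m:ℝ)*c - Real.sqrt ((a+b+(m:ℝ)*c)^2 - 4*(a*(b+(m:ℝ)*c) - ((m:ℝ)+1)*b^2)))/2) ::ₘ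
      Multiset.replicate m (b - c) := by
  set T : ℝ := a+b+(m:ℝ)*c with hT
  set D : ℝ := a*(b+(m:ℝ)*c) - ((m:ℝ)+1)*b^2 with hD
  have hdisc : 0 ≤ T^2 - 4*D := by
    have : T^2 - 4*D = (a - b - (m:ℝ)*c)^2 + 4*((m:ℝ)+1)*b^2 - 4*b^2 + 4*b^2 := by ring
    nlinarith [sq_nonneg (a - b - (m:ℝ)*c), sq_nonneg b, Nat.cast_nonneg (α := ℝ) m]
  -- the equivalence
  let e : (Fin 2 ⊕ Fin m) ≃ Fin (m+2) := finSumFinEquiv.trans (finCongr (by omega))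
  have heval : ∀ x : Fin 2 ⊕ Fin m,
      ((e x : Fin (m+2)) : ℕ) = Sum.elim (fun i : Fin 2 => (i:ℕ)) (fun k : Fin m => 2 + (k:ℕ)) x := by
    rintro (i | k)
    · simp [e, finSumFinEquiv]
    · simp [e, finSumFinEquiv]; omega
  have he0 : e (Sum.inl 0) = 0 := by
    apply Fin.ext; rw [heval]; simp
  have he1 : e (Sum.inl 1) ≠ 0 := by
    intro h
    have h2 : ((e (Sum.inl 1) : Fin (m+2)) : ℕ) = 0 := by rw [h]; rfl
    rw [heval] at h2; simp at h2
  have hek : ∀ k : Fin m, e (Sum.inr k) ≠ 0 := by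
    intro k h
    have h2 : ((e (Sum.inr k) : Fin (m+2)) : ℕ) = 0 := by rw [h]; rfl
    rw [heval] at h2; simp at h2
  have hsub : M.submatrix e e = S3M m a b c := by
    apply Matrix.ext
    rintro (i | j) (i' | k) <;>
      simp only [Matrix.submatrix_apply, hM, S3M, fromBlocks_apply₁₁, fromBlocks_apply₁₂,
        fromBlocks_apply₂₁, fromBlocks_apply₂₂, Matrix.of_apply]
    · fin_cases i <;> fin_cases i' <;>
        simp [he0, he1, e.injective.eq_iff]
    · fin_cases i <;> simp [he0, he1, hek, e.injective.eq_iff]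
    · fin_cases i' <;> simp [he0, he1, hek, e.injective.eq_iff]
    · simp [hek, e.injective.eq_iff]
  -- charpoly of M
  obtain ⟨Q, hQ1, hQ2⟩ : ∃ Q, S3P m * Q = 1 ∧ Q * S3P m = 1 := by
    obtain ⟨u, hu⟩ := s3P_isUnit m
    exact ⟨u.inv, by rw [← hu]; exact u.mul_inv, by rw [← hu]; exact u.inv_mul⟩
  have hconj : S3M m a b c = S3P m * S3B m a b c * Q := by
    have := s3MP m a b c
    calc S3M m a b c = S3M m a b c * (S3P m * Q) := by rw [hQ1, mul_one]
      _ = (S3M m a b c * S3P m) * Q := by rw [mul_assoc]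
      _ = (S3P m * S3B m a b c) * Q := by rw [this]
  have hcharM : M.charpoly = (S3M m a b c).charpoly := by
    have : M.submatrix e e = Matrix.reindex e.symm e.symm M := by
      simp [Matrix.reindex_apply]
    rw [← hsub, this, Matrix.charpoly_reindex]
  have hchar : M.charpoly
      = (X - C ((T + Real.sqrt (T^2-4*D))/2)) * ((X - C ((T - Real.sqrt (T^2-4*D))/2))
        * (X - C (b-c))^m) := by
    rw [hcharM, hconj, charpoly_conj_aux _ _ _ hQ1, s3charB, ← hT, ← hD, s3quad T D hdisc,
      mul_assoc]
  have hprod := herm_charpoly M hherm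
  -- turn into multiset equality
  have hmul : (Multiset.map (fun r => X - C r) (Finset.univ.val.map hherm.eigenvalues)).prod
      = (Multiset.map (fun r => X - C r)
          (((T + Real.sqrt (T^2-4*D))/2) ::ₘ ((T - Real.sqrt (T^2-4*D))/2) ::ₘ
            Multiset.replicate m (b - c))).prod := by
    rw [Multiset.map_map]
    have h1 : (Multiset.map (fun i => X - C (hherm.eigenvalues i)) Finset.univ.val).prod
        = ∏ i, (X - C (hherm.eigenvalues i)) := rfl
    rw [Function.comp_def, h1, ← hprod, hchar]
    simp [Multiset.map_cons, Multiset.prod_cons, Multiset.map_replicate, Multiset.prod_replicate]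
  have := congrArg Polynomial.roots hmul
  rwa [Polynomial.roots_multiset_prod_X_sub_C, Polynomial.roots_multiset_prod_X_sub_C] at this


/-- For the (n+1)×(n+1) symmetric matrix `M` with `M₀₀ = a`, `M₀ⱼ = Mⱼ₀ = b`,
`Mⱼⱼ = b`, and `Mⱼₖ = c` (j ≠ k, j,k ≥ 1), where `a,c ≥ 0`, `b > 0` and `n ≥ 2`:
`M` has at most one positive eigenvalue iff `b ≤ c` and `ab + (n-1)ac ≤ nb²`. -/
theorem stmt3 {n : ℕ} (hn : 2 ≤ n) (a b c : ℝ) (ha : 0 ≤ a) (hb : 0 < b) (hc : 0 ≤ c)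
    (M : Matrix (Fin (n + 1)) (Fin (n + 1)) ℝ)
    (hM : ∀ i j : Fin (n + 1), M i j =
      if i = 0 ∧ j = 0 then a
      else if i = 0 ∨ j = 0 then b
      else if i = j then b else c)
    (hherm : M.IsHermitian) :
    (Finset.univ.filter fun i => 0 < hherm.eigenvalues i).card ≤ 1 ↔
      b ≤ c ∧ a * b + ((n : ℝ) - 1) * a * c ≤ (n : ℝ) * b ^ 2 := by
  obtain ⟨m, rfl⟩ : ∃ m, n = m + 1 := ⟨n - 1, by omega⟩
  have hm : 1 ≤ m := by omega
  have hkey := s3key a b c M hM hherm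
  set T : ℝ := a + b + (m:ℝ)*c with hT
  set D : ℝ := a*(b + (m:ℝ)*c) - ((m:ℝ)+1)*b^2 with hD
  set s : ℝ := Real.sqrt (T^2 - 4*D) with hs
  have hdisc : 0 ≤ T^2 - 4*D := by
    rw [hT, hD]; nlinarith [sq_nonneg (a - b - (m:ℝ)*c), sq_nonneg b, Nat.cast_nonneg (α := ℝ) m]
  have hsq : s^2 = T^2 - 4*D := Real.sq_sqrt hdisc
  have hs0 : 0 ≤ s := Real.sqrt_nonneg _
  have hm0 : (0:ℝ) ≤ (m:ℝ) := Nat.cast_nonneg m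
  have hTpos : 0 < T := by nlinarith
  have hlp : 0 < (T + s)/2 := by positivity
  have hcount : (Finset.univ.filter fun i => 0 < hherm.eigenvalues i).card
      = Multiset.countP (fun x : ℝ => 0 < x) (Finset.univ.val.map hherm.eigenvalues) := by
    rw [Multiset.countP_map]
    rfl
  rw [hcount, hkey, Multiset.countP_cons, Multiset.countP_cons, s3countP_replicate,
    if_pos hlp]
  have hcast : ((m:ℝ) + 1) = (((m+1:ℕ)):ℝ) := by push_cast; ring
  constructor
  · intro h
    have h1 : (if 0 < b - c then m else 0) = 0 := by omega
    have h2 : (if 0 < (T - s)/2 then 1 else 0) = 0 := by omega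
    constructor
    · by_contra hbc
      rw [if_pos (by linarith : 0 < b - c)] at h1
      omega
    · have hlm : ¬ 0 < (T - s)/2 := by
        intro hpos; rw [if_pos hpos] at h2; omega
      push_neg at hlm
      have hTs : T ≤ s := by linarith
      have hDle : D ≤ 0 := by nlinarith
      push_cast
      nlinarith [hDle]
  · rintro ⟨hbc, hD2⟩
    have hDle : D ≤ 0 := by
      rw [hD]; push_cast at hD2; nlinarith
    have hTs : T ≤ s := by nlinarith
    have h2 : ¬ 0 < (T - s)/2 := by
      intro hpos; linarith
    rw [if_neg (by linarith : ¬ 0 < b - c), if_neg h2]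
end

section
/- (Rado) Let λ = (λ_1 ≥ ... ≥ λ_n) be a partition of d. A point t = (t_1,...,t_n) ∈ ℝ^n belongs to the permutohedron P(λ) if and only if ∑ t_i = d and for every nonempty subset {i_1,...,i_k} ⊆ [n], t_{i_1} + ... + t_{i_k} ≤ λ_1 + ... + λ_k. -/
open Finset

/-- Abel summation identity. -/
private lemma abel_identity (b w : ℕ → ℝ) (n : ℕ) :
    ∑ k ∈ range n, b k * w k =
      ∑ j ∈ range n, (b j - b (j + 1)) * (∑ k ∈ range (j + 1), w k)
        + b n * (∑ k ∈ range n, w k) := by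
  induction n with
  | zero => simp
  | succ n ih =>
      rw [Finset.sum_range_succ, ih, Finset.sum_range_succ (f := fun j =>
        (b j - b (j + 1)) * (∑ k ∈ range (j + 1), w k)),
        Finset.sum_range_succ (f := w)]
      ring

/-- Abel summation inequality. -/
private lemma abel_le (b w : ℕ → ℝ) (n : ℕ)
    (hb : ∀ k, k + 1 < n → b (k + 1) ≤ b k)
    (hw : ∀ m, m < n → ∑ k ∈ range (m + 1), w k ≤ 0)
    (hw0 : ∑ k ∈ range n, w k = 0) :
    ∑ k ∈ range n, b k * w k ≤ 0 := by
  rw [abel_identity, hw0, mul_zero, add_zero]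
  apply Finset.sum_nonpos
  intro j hj
  rw [Finset.mem_range] at hj
  rcases eq_or_lt_of_le (Nat.succ_le_of_lt hj) with h | h
  · have hn : j + 1 = n := h
    have : ∑ k ∈ range (j + 1), w k = 0 := by rw [hn, hw0]
    rw [this, mul_zero]
  · exact mul_nonpos_of_nonneg_of_nonpos (by linarith [hb j h]) (hw j hj)

private lemma strictMono_fin_le {k n : ℕ} {f : Fin k → Fin n} (hf : StrictMono f) :
    ∀ i : Fin k, (i : ℕ) ≤ (f i : ℕ) := by
  suffices h : ∀ m : ℕ, ∀ i : Fin k, (i : ℕ) = m → (i : ℕ) ≤ (f i : ℕ) by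
    intro i; exact h _ i rfl
  intro m
  induction m with
  | zero => intro i hi; omega
  | succ m ih =>
      intro i hi
      have hik := i.isLt
      have hm : m < k := by omega
      have h1 := ih ⟨m, hm⟩ rfl
      have h2 : (⟨m, hm⟩ : Fin k) < i := by rw [Fin.lt_def]; simp; omega
      have h3 := hf h2
      rw [Fin.lt_def] at h3
      have hd : ((⟨m, hm⟩ : Fin k) : ℕ) = m := rfl
      omega

/-- The filter of indices `< c` is the image of `Fin.castLE`. -/
private lemma filter_eq_image_castLE {n c : ℕ} (hc : c ≤ n) :
    Finset.univ.filter (fun i : Fin n => (i : ℕ) < c)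
      = Finset.univ.image (Fin.castLE hc) := by
  ext j
  simp only [Finset.mem_filter, Finset.mem_univ, true_and, Finset.mem_image]
  constructor
  · intro hj
    exact ⟨⟨(j : ℕ), hj⟩, rfl⟩
  · rintro ⟨i, rfl⟩
    exact i.2

private lemma sum_filter_castLE {n c : ℕ} (hc : c ≤ n) (l : Fin n → ℝ) :
    ∑ i ∈ Finset.univ.filter (fun i : Fin n => (i : ℕ) < c), l i
      = ∑ i : Fin c, l (Fin.castLE hc i) := by
  rw [filter_eq_image_castLE hc,
    Finset.sum_image (fun x _ y _ h => Fin.castLE_injective hc h)]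

/-- Key combinatorial fact: for antitone `l`, any `k`-subset sum is at most the first-`k` sum. -/
private lemma sum_subset_le {n : ℕ} {l : Fin n → ℝ} (hlA : Antitone l)
    (T : Finset (Fin n)) :
    ∑ i ∈ T, l i ≤ ∑ i ∈ Finset.univ.filter (fun i : Fin n => (i : ℕ) < T.card), l i := by
  have hk : T.card ≤ n := by
    simpa using Finset.card_le_univ T
  set emb := T.orderEmbOfFin rfl with hemb
  have hT : T = Finset.univ.image emb := by
    apply Finset.coe_injective
    rw [Finset.coe_image, Finset.coe_univ, Set.image_univ, Finset.range_orderEmbOfFin]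
  rw [sum_filter_castLE hk]
  conv_lhs => rw [hT]
  rw [Finset.sum_image (fun x _ y _ h => emb.injective h)]
  apply Finset.sum_le_sum
  intro i _
  apply hlA
  rw [Fin.le_def]
  exact strictMono_fin_le emb.strictMono i

/-- Rado: `t ∈ P(λ)` iff `t` is a weak composition of `d` (nonnegative entries
summing to `d`) and for every nonempty `S ⊆ [n]`, `∑_{i ∈ S} t_i ≤ λ_1 + ⋯ + λ_{|S|}`. -/
theorem stmt10 {n : ℕ} (d : ℝ) (l : Fin n → ℝ)
    (hlA : Antitone l) (hlnn : ∀ i, 0 ≤ l i) (hld : ∑ i, l i = d) (t : Fin n → ℝ) :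
    t ∈ convexHull ℝ {x : Fin n → ℝ | ∃ σ : Equiv.Perm (Fin n), x = l ∘ σ} ↔
      ((∀ i, 0 ≤ t i) ∧ ∑ i, t i = d ∧
        ∀ S : Finset (Fin n), S.Nonempty →
          ∑ i ∈ S, t i ≤ ∑ i ∈ Finset.univ.filter (fun i : Fin n => (i : ℕ) < S.card), l i) := by
  constructor
  · -- forward direction
    set C : Set (Fin n → ℝ) := {y | (∀ i, 0 ≤ y i) ∧ ∑ i, y i = d ∧
        ∀ S : Finset (Fin n), S.Nonempty →
          ∑ i ∈ S, y i ≤ ∑ i ∈ Finset.univ.filter (fun i : Fin n => (i : ℕ) < S.card), l i}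
      with hC
    intro ht
    have hconv : Convex ℝ C := by
      intro x hx y hy a b ha hb hab
      obtain ⟨hx1, hx2, hx3⟩ := hx
      obtain ⟨hy1, hy2, hy3⟩ := hy
      refine ⟨fun i => ?_, ?_, fun S hS => ?_⟩
      · have : (a • x + b • y) i = a * x i + b * y i := rfl
        rw [this]
        have := hx1 i; have := hy1 i
        positivity
      · have : ∀ i, (a • x + b • y) i = a * x i + b * y i := fun _ => rfl
        simp_rw [this, Finset.sum_add_distrib, ← Finset.mul_sum, hx2, hy2]
        rw [← add_mul, hab, one_mul]
      · have : ∀ i, (a • x + b • y) i = a * x i + b * y i := fun _ => rfl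
        simp_rw [this, Finset.sum_add_distrib, ← Finset.mul_sum]
        calc a * ∑ i ∈ S, x i + b * ∑ i ∈ S, y i
            ≤ a * (∑ i ∈ Finset.univ.filter (fun i : Fin n => (i : ℕ) < S.card), l i)
              + b * (∑ i ∈ Finset.univ.filter (fun i : Fin n => (i : ℕ) < S.card), l i) := by
              gcongr <;> [exact hx3 S hS; exact hy3 S hS]
          _ = _ := by rw [← add_mul, hab, one_mul]
    have hgen : {x : Fin n → ℝ | ∃ σ : Equiv.Perm (Fin n), x = l ∘ σ} ⊆ C := by
      rintro x ⟨σ, rfl⟩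
      refine ⟨fun i => hlnn _, ?_, fun S hS => ?_⟩
      · rw [show ∑ i, (l ∘ σ) i = ∑ i, l (σ i) from rfl, Equiv.sum_comp σ l, hld]
      · have hinj : ∀ x ∈ S, ∀ y ∈ S, σ x = σ y → x = y :=
          fun x _ y _ h => σ.injective h
        have h1 : ∑ i ∈ S, (l ∘ σ) i = ∑ i ∈ S.image σ, l i :=
          (Finset.sum_image hinj).symm
        have h2 : (S.image σ).card = S.card :=
          Finset.card_image_of_injective S σ.injective
        calc ∑ i ∈ S, (l ∘ σ) i = ∑ i ∈ S.image σ, l i := h1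
          _ ≤ ∑ i ∈ Finset.univ.filter (fun i : Fin n => (i : ℕ) < (S.image σ).card), l i :=
              sum_subset_le hlA _
          _ = _ := by rw [h2]
    exact convexHull_min hgen hconv ht
  · -- backward direction
    rintro ⟨htn, htd, hts⟩
    by_contra hmem
    set V : Set (Fin n → ℝ) := {x | ∃ σ : Equiv.Perm (Fin n), x = l ∘ σ} with hV
    have hVfin : V.Finite := by
      have : V = Set.range (fun σ : Equiv.Perm (Fin n) => l ∘ σ) := by
        ext x; simp [hV, Set.mem_range, eq_comm]
      rw [this]
      exact Set.finite_range _
    obtain ⟨f, u, hfu, hut⟩ :=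
      geometric_hahn_banach_closed_point (convex_convexHull ℝ V)
        (hVfin.isClosed_convexHull ℝ) hmem
    set c : Fin n → ℝ := fun i => f (fun j => if i = j then 1 else 0) with hc
    have hf : ∀ x : Fin n → ℝ, f x = ∑ i, x i * c i := by
      intro x
      conv_lhs => rw [pi_eq_sum_univ x]
      rw [map_sum]
      exact Finset.sum_congr rfl fun i _ => by rw [map_smul, smul_eq_mul]
    set τ : Equiv.Perm (Fin n) := Tuple.sort (fun i => -(c i)) with hτ
    have hbA : Antitone (fun i => c (τ i)) := by
      intro i j hij
      have := Tuple.monotone_sort (fun i => -(c i)) hij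
      simp only [Function.comp_apply] at this
      linarith
    set b : ℕ → ℝ := fun k => if h : k < n then c (τ ⟨k, h⟩) else 0 with hb
    set w : ℕ → ℝ := fun k => if h : k < n then t (τ ⟨k, h⟩) - l ⟨k, h⟩ else 0 with hw
    have hkey : ∑ k ∈ range n, b k * w k ≤ 0 := by
      apply abel_le
      · intro k hk
        rw [hb]
        simp only []
        rw [dif_pos hk, dif_pos (Nat.lt_of_succ_lt hk)]
        exact hbA (by rw [Fin.le_def]; simp)
      · intro m hm
        have hm' : m + 1 ≤ n := hm
        set S : Finset (Fin n) :=
          Finset.univ.image (fun i : Fin (m + 1) => τ (Fin.castLE hm' i)) with hS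
        have hSinj : Function.Injective (fun i : Fin (m + 1) => τ (Fin.castLE hm' i)) :=
          fun x y h => Fin.castLE_injective hm' (τ.injective h)
        have hScard : S.card = m + 1 := by
          rw [hS, Finset.card_image_of_injective _ hSinj, Finset.card_univ,
            Fintype.card_fin]
        have hSne : S.Nonempty := Finset.card_pos.mp (by omega)
        have hle := hts S hSne
        rw [hScard] at hle
        have hsum1 : ∑ i ∈ S, t i = ∑ i : Fin (m + 1), t (τ (Fin.castLE hm' i)) := by
          rw [hS, Finset.sum_image (fun x _ y _ h => hSinj h)]
        have hsum2 : ∑ i ∈ Finset.univ.filter (fun i : Fin n => (i : ℕ) < m + 1), l i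
            = ∑ i : Fin (m + 1), l (Fin.castLE hm' i) := sum_filter_castLE hm' l
        have hrange : ∑ k ∈ range (m + 1), w k
            = ∑ i : Fin (m + 1), (t (τ (Fin.castLE hm' i)) - l (Fin.castLE hm' i)) := by
          rw [← Fin.sum_univ_eq_sum_range w (m + 1)]
          apply Finset.sum_congr rfl
          intro i _
          have hi : (i : ℕ) < n := lt_of_lt_of_le i.2 hm'
          rw [hw]
          simp only []
          rw [dif_pos hi]
          rfl
        rw [hrange, Finset.sum_sub_distrib, ← hsum1, ← hsum2]
        linarith
      · have : ∑ k ∈ range n, w k = ∑ i : Fin n, (t (τ i) - l i) := by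
          rw [← Fin.sum_univ_eq_sum_range w n]
          apply Finset.sum_congr rfl
          intro i _
          rw [hw]
          simp only []
          rw [dif_pos i.2]
        rw [this, Finset.sum_sub_distrib, Equiv.sum_comp τ t, htd, hld, sub_self]
    have hbw : ∑ k ∈ range n, b k * w k
        = ∑ i : Fin n, c (τ i) * (t (τ i) - l i) := by
      rw [← Fin.sum_univ_eq_sum_range (fun k => b k * w k) n]
      apply Finset.sum_congr rfl
      intro i _
      rw [hb, hw]
      simp only []
      rw [dif_pos i.2, dif_pos i.2]
    have hmain : f t ≤ f (l ∘ τ.symm) := by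
      rw [hf t, hf (l ∘ τ.symm)]
      have h1 : ∑ i, t i * c i = ∑ i, t (τ i) * c (τ i) :=
        (Equiv.sum_comp τ (fun i => t i * c i)).symm
      have h2 : ∑ i, (l ∘ τ.symm) i * c i = ∑ i, l i * c (τ i) := by
        rw [← Equiv.sum_comp τ (fun i => (l ∘ τ.symm) i * c i)]
        apply Finset.sum_congr rfl
        intro i _
        simp [Equiv.symm_apply_apply]
      rw [h1, h2]
      have := hkey
      rw [hbw] at this
      have hexp : ∑ i : Fin n, c (τ i) * (t (τ i) - l i)
          = ∑ i, t (τ i) * c (τ i) - ∑ i, l i * c (τ i) := by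
        rw [← Finset.sum_sub_distrib]
        apply Finset.sum_congr rfl
        intro i _
        ring
      rw [hexp] at this
      linarith
    have hmem' : (l ∘ τ.symm) ∈ convexHull ℝ V :=
      subset_convexHull ℝ V ⟨τ.symm, rfl⟩
    linarith [hfu _ hmem']
end

section
/- For all integers k ≥ ℓ ≥ 2, the ballot numbers satisfy (k+ℓ-3)·C_{k,ℓ}·C_{k-2,ℓ-2} ≤ (k+ℓ-2)·C_{k-1,ℓ-1}². -/
/-- The ballot number `C_{k,ℓ} = binom(k+ℓ,ℓ) - binom(k+ℓ,ℓ-1)`. -/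
def ballot (k l : ℕ) : ℤ := ((k + l).choose l : ℤ) - ((k + l).choose (l - 1) : ℤ)

lemma ballotF (d j : ℕ) :
    ((j:ℤ) + d + 2) * ballot (j + d + 1) (j + 1) =
      ((d:ℤ) + 1) * ((2*j + d + 2).choose (j + 1) : ℤ) := by
  have h := Nat.choose_succ_right_eq (2*j + d + 2) j
  have h2 : 2*j + d + 2 - j = j + d + 2 := by omega
  rw [h2] at h
  have hc : ((2*j+d+2).choose (j+1) : ℤ) * (j+1) = ((2*j+d+2).choose j : ℤ) * (j+d+2) := by
    exact_mod_cast congrArg (Nat.cast : ℕ → ℤ) h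
  unfold ballot
  have h3 : j + d + 1 + (j + 1) = 2*j + d + 2 := by omega
  rw [h3]
  simp only [Nat.add_sub_cancel]
  linear_combination hc

lemma chooseG (d j : ℕ) :
    ((2*j+d+2 : ℤ)) * (2*j+d+1) * ((2*j+d).choose j : ℤ) =
      ((j:ℤ)+1) * ((j:ℤ)+d+1) * ((2*j+d+2).choose (j+1) : ℤ) := by
  have s1 : (2*j+d).choose j = (2*j+d).choose (j+d) := by
    have := Nat.choose_symm (n := 2*j+d) (k := j+d) (by omega)
    have e : 2*j+d - (j+d) = j := by omega
    rw [e] at this; exact this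
  have s2 : (2*j+d+1).choose (j+d+1) = (2*j+d+1).choose j := by
    have := Nat.choose_symm (n := 2*j+d+1) (k := j) (by omega)
    have e : 2*j+d+1 - j = j+d+1 := by omega
    rw [e] at this; exact this
  have h1 := Nat.add_one_mul_choose_eq (2*j+d) (j+d)
  rw [s2] at h1
  have h3 := Nat.add_one_mul_choose_eq (2*j+d+1) j
  rw [s1]
  have h1' : ((2*j+d+1 : ℤ)) * ((2*j+d).choose (j+d) : ℤ) = ((2*j+d+1).choose j : ℤ) * ((j:ℤ)+d+1) := by
    exact_mod_cast congrArg (Nat.cast : ℕ → ℤ) h1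
  have h3' : ((2*j+d+2 : ℤ)) * ((2*j+d+1).choose j : ℤ) = ((2*j+d+2).choose (j+1) : ℤ) * ((j:ℤ)+1) := by
    exact_mod_cast congrArg (Nat.cast : ℕ → ℤ) h3
  linear_combination ((2*j+d+2 : ℤ)) * h1' + ((j:ℤ)+d+1) * h3'

set_option maxHeartbeats 1000000 in
lemma key (f d : ℕ) :
    (2*(f:ℤ)+d+3) * ballot (f+d+3) (f+3) * ballot (f+d+1) (f+1) ≤
      (2*(f:ℤ)+d+4) * ballot (f+d+2) (f+2) ^ 2 := by
  have hF1 := ballotF d (f+2)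
  rw [show f+2+d+1 = f+d+3 from by omega, show f+2+1 = f+3 from by omega,
      show 2*(f+2)+d+2 = 2*f+d+6 from by omega] at hF1
  have hF2 := ballotF d (f+1)
  rw [show f+1+d+1 = f+d+2 from by omega, show f+1+1 = f+2 from by omega,
      show 2*(f+1)+d+2 = 2*f+d+4 from by omega] at hF2
  have hF3 := ballotF d f
  have hG1 := chooseG d (f+2)
  rw [show 2*(f+2)+d+2 = 2*f+d+6 from by omega, show 2*(f+2)+d = 2*f+d+4 from by omega,
      show f+2+1 = f+3 from by omega] at hG1
  have hG2 := chooseG d (f+1)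
  rw [show 2*(f+1)+d+2 = 2*f+d+4 from by omega, show 2*(f+1)+d = 2*f+d+2 from by omega,
      show f+1+1 = f+2 from by omega] at hG2
  push_cast at hF1 hF2 hF3 hG1 hG2
  set F := (f:ℤ) with hFdef
  set D := (d:ℤ) with hDdef
  set A := ((2*f+d+6).choose (f+3) : ℤ) with hA
  set B := ((2*f+d+4).choose (f+2) : ℤ) with hB
  set C := ((2*f+d+2).choose (f+1) : ℤ) with hC
  set X := ballot (f+d+3) (f+3) with hX
  set Y := ballot (f+d+2) (f+2) with hY
  set Z := ballot (f+d+1) (f+1) with hZ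
  -- hF1 : (F+D+4) * X = (D+1) * A
  -- hF2 : (F+D+3) * Y = (D+1) * B
  -- hF3 : (F+D+2) * Z = (D+1) * C
  -- hG1 : (2F+D+6)*(2F+D+5)*B = (F+3)*(F+D+3)*A
  -- hG2 : (2F+D+4)*(2F+D+3)*C = (F+2)*(F+D+2)*B
  have hf : (0:ℤ) ≤ F := Int.natCast_nonneg f
  have hd : (0:ℤ) ≤ D := Int.natCast_nonneg d
  have core : (F+D+3)*(2*F+D+6)*(2*F+D+5)*(F+2) ≤ (F+D+4)*(F+3)*(2*F+D+4)^2 := by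
    nlinarith [mul_nonneg hf hd, mul_nonneg (mul_nonneg hf hf) hf,
      mul_nonneg (mul_nonneg hd hd) hd, mul_nonneg (mul_nonneg hf hf) hd,
      mul_nonneg (mul_nonneg hf hd) hd, mul_nonneg hf hf, mul_nonneg hd hd]
  have e13 : (F+D+4)*X*((F+D+2)*Z) = (D+1)^2*A*C := by
    linear_combination ((F+D+2)*Z)*hF1 + ((D+1)*A)*hF3
  have e2 : (F+D+3)^2*Y^2 = (D+1)^2*B^2 := by
    linear_combination ((F+D+3)*Y + (D+1)*B)*hF2
  have eAC : ((F+3)*(F+D+3))*((2*F+D+4)*(2*F+D+3))*(A*C) =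
      (2*F+D+6)*(2*F+D+5)*(F+2)*(F+D+2)*B^2 := by
    linear_combination (-(2*F+D+4)*(2*F+D+3)*C)*hG1 + ((2*F+D+6)*(2*F+D+5)*B)*hG2
  have hmul : (F+D+3)*(2*F+D+6)*(2*F+D+5)*(F+2) * ((D+1)^2*(2*F+D+3)*(F+D+2)*B^2)
      ≤ (F+D+4)*(F+3)*(2*F+D+4)^2 * ((D+1)^2*(2*F+D+3)*(F+D+2)*B^2) := by
    apply mul_le_mul_of_nonneg_right core
    positivity
  have hM : (0:ℤ) < (F+D+4)*(F+D+2)*(F+D+3)^2*(F+3)*(2*F+D+4)*(2*F+D+3) := by positivity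
  apply le_of_mul_le_mul_left _ hM
  calc (F+D+4)*(F+D+2)*(F+D+3)^2*(F+3)*(2*F+D+4)*(2*F+D+3) * ((2*F+D+3)*X*Z)
      = (F+D+3)*(2*F+D+6)*(2*F+D+5)*(F+2) * ((D+1)^2*(2*F+D+3)*(F+D+2)*B^2) := by
        linear_combination ((F+D+3)^2*(F+3)*(2*F+D+4)*(2*F+D+3)^2)*e13
          + ((D+1)^2*(2*F+D+3)*(F+D+3))*eAC
    _ ≤ (F+D+4)*(F+3)*(2*F+D+4)^2 * ((D+1)^2*(2*F+D+3)*(F+D+2)*B^2) := hmul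
    _ = (F+D+4)*(F+D+2)*(F+D+3)^2*(F+3)*(2*F+D+4)*(2*F+D+3) * ((2*F+D+4)*Y^2) := by
        linear_combination (-(F+D+4)*(F+D+2)*(F+3)*(2*F+D+4)^2*(2*F+D+3))*e2

/-- For `k ≥ ℓ ≥ 2`,
`(k+ℓ-3)·C_{k,ℓ}·C_{k-2,ℓ-2} ≤ (k+ℓ-2)·C_{k-1,ℓ-1}²`. -/
theorem stmt13 (k l : ℕ) (hl : 2 ≤ l) (hk : l ≤ k) :
    ((k : ℤ) + l - 3) * ballot k l * ballot (k - 2) (l - 2) ≤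
      ((k : ℤ) + l - 2) * ballot (k - 1) (l - 1) ^ 2 := by
  obtain ⟨e, rfl⟩ : ∃ e, l = e + 2 := ⟨l - 2, by omega⟩
  obtain ⟨d, rfl⟩ : ∃ d, k = e + 2 + d := ⟨k - (e + 2), by omega⟩
  rw [show e + 2 + d - 1 = e + d + 1 from by omega,
      show e + 2 + d - 2 = e + d from by omega,
      show e + 2 - 1 = e + 1 from by omega,
      show e + 2 - 2 = e from by omega]
  rcases e with _ | f
  · -- l = 2 case: ballot (0+d) 0 = 0
    have hz : ballot (0 + d) 0 = 0 := by simp [ballot]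
    rw [hz, mul_zero]
    have hc : (0:ℤ) ≤ ((0+2+d : ℕ) : ℤ) + ((0+2 : ℕ) : ℤ) - 2 := by push_cast; omega
    exact mul_nonneg hc (sq_nonneg _)
  · rw [show f + 1 + 2 + d = f + d + 3 from by omega,
        show f + 1 + 2 = f + 3 from by omega,
        show f + 1 + d + 1 = f + d + 2 from by omega,
        show f + 1 + 1 = f + 2 from by omega,
        show f + 1 + d = f + d + 1 from by omega]
    have c1 : ((f + d + 3 : ℕ) : ℤ) + ((f + 3 : ℕ) : ℤ) - 3 = 2*(f:ℤ)+d+3 := by push_cast; ring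
    have c2 : ((f + d + 3 : ℕ) : ℤ) + ((f + 3 : ℕ) : ℤ) - 2 = 2*(f:ℤ)+d+4 := by push_cast; ring
    rw [c1, c2]
    exact key f d
end

section
/- For positive integers m, n, the polynomial identity ∏_{i=1}^n ∏_{j=1}^m (x_i + y_j) = ∑_λ s_λ(x_1,...,x_n) · s_{(λ')^c}(y_1,...,y_m) holds, where the sum ranges over partitions λ with at most n parts and largest part at most m, λ' is the conjugate partition, and (λ')^c is the complement of λ' in the m×n rectangle, i.e., ((λ')^c)_k = n - λ'_{m+1-k}. -/
/-- The Schur polynomial in `m` variables via the bialternant formula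
`s_λ = det(y_i^(λ_j + m - j)) / det(y_i^(m - j))`. -/
noncomputable def schur {m : ℕ} (lam : Fin m → ℕ) (y : Fin m → ℝ) : ℝ :=
  (Matrix.of fun i j : Fin m => y i ^ (lam j + (m - 1 - (j : ℕ)))).det /
    (Matrix.of fun i j : Fin m => y i ^ (m - 1 - (j : ℕ))).det

open Finset Equiv Matrix

namespace Stmt16

variable {n m : ℕ}

/-- exponent sequence for the partition `l` on the `x`-side. -/
def sN (l : Fin n → ℕ) (j : Fin n) : ℕ := l j + (n - 1 - (j : ℕ))

/-- number of parts of `l` that are `≥ c`. -/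
def AA (l : Fin n → ℕ) (c : ℕ) : ℕ := (Finset.univ.filter fun i => c ≤ l i).card

/-- exponent sequence for the complementary-conjugate partition on the `y`-side. -/
def tN (m : ℕ) (l : Fin n → ℕ) (k : Fin m) : ℕ :=
  (n - AA l (m - (k : ℕ))) + (m - 1 - (k : ℕ))

lemma AA_le (l : Fin n → ℕ) (c : ℕ) : AA l c ≤ n := by
  classical
  exact (Finset.card_filter_le _ _).trans (by simp)

lemma AA_anti (l : Fin n → ℕ) {c c' : ℕ} (h : c ≤ c') : AA l c' ≤ AA l c := by
  classical
  apply Finset.card_le_card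
  intro i hi
  simp only [Finset.mem_filter, Finset.mem_univ, true_and] at *
  omega

lemma lt_AA_iff {l : Fin n → ℕ} (hl : Antitone l) {c : ℕ} (i : Fin n) :
    c ≤ l i ↔ (i : ℕ) < AA l c := by
  classical
  constructor
  · intro h
    have hsub : Finset.Iic i ⊆ Finset.univ.filter fun i' => c ≤ l i' := by
      intro i' hi'
      simp only [Finset.mem_Iic] at hi'
      simp only [Finset.mem_filter, Finset.mem_univ, true_and]
      exact le_trans h (hl hi')
    have := Finset.card_le_card hsub
    rw [Fin.card_Iic] at this
    unfold AA
    omega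
  · intro h
    by_contra hc
    have hsub : (Finset.univ.filter fun i' => c ≤ l i') ⊆ Finset.Iio i := by
      intro i' hi'
      simp only [Finset.mem_filter, Finset.mem_univ, true_and] at hi'
      simp only [Finset.mem_Iio]
      by_contra hge
      exact hc (le_trans hi' (hl (not_lt.mp hge)))
    have := Finset.card_le_card hsub
    rw [Fin.card_Iio] at this
    unfold AA at h
    omega

lemma sN_lt {l : Fin n → ℕ} (hm' : ∀ i, l i ≤ m) (j : Fin n) : sN l j < n + m := by
  have := j.2; have := hm' j; unfold sN; omega

lemma sN_anti {l : Fin n → ℕ} (hl : Antitone l) {j j' : Fin n} (h : j < j') :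
    sN l j' < sN l j := by
  have h1 : l j' ≤ l j := hl h.le
  have h2 : (j : ℕ) < (j' : ℕ) := h
  have := j'.2
  unfold sN; omega

lemma tN_lt {l : Fin n → ℕ} (k : Fin m) : tN m l k < n + m := by
  have := k.2; unfold tN; omega

lemma tN_anti {l : Fin n → ℕ} {k k' : Fin m} (h : k < k') : tN m l k' < tN m l k := by
  have h1 : AA l (m - (k : ℕ)) ≤ AA l (m - (k' : ℕ)) := AA_anti l (by have : (k:ℕ) < k' := h; omega)
  have h2 := AA_le l (m - (k : ℕ))
  have h3 := AA_le l (m - (k' : ℕ))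
  have h4 : (k : ℕ) < (k' : ℕ) := h
  have := k'.2
  unfold tN; omega

lemma sN_ne_tN {l : Fin n → ℕ} (hl : Antitone l) (hm' : ∀ i, l i ≤ m)
    (j : Fin n) (k : Fin m) : sN l j ≠ tN m l k := by
  intro h
  have hk := k.2
  have hj := j.2
  have hA := AA_le l (m - (k : ℕ))
  have hlj := hm' j
  unfold sN tN at h
  by_cases hc : (m : ℕ) - (k : ℕ) ≤ l j
  · have h1 : (j : ℕ) < AA l (m - (k : ℕ)) := (lt_AA_iff hl j).1 hc
    omega
  · have h1 : ¬ (j : ℕ) < AA l (m - (k : ℕ)) := fun hx => hc ((lt_AA_iff hl j).2 hx)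
    omega


/-- `sN` as a `Fin (n+m)`-valued map. -/
def sF (m : ℕ) (l : Fin n → ℕ) (j : Fin n) : Fin (n + m) :=
  ⟨sN l j % (n + m), Nat.mod_lt _ (by have := j.2; omega)⟩

/-- `tN` as a `Fin (n+m)`-valued map. -/
def tF (l : Fin n → ℕ) (k : Fin m) : Fin (n + m) :=
  ⟨tN m l k % (n + m), Nat.mod_lt _ (by have := k.2; omega)⟩

lemma sF_val {l : Fin n → ℕ} (hm' : ∀ i, l i ≤ m) (j : Fin n) :
    (sF m l j : ℕ) = sN l j := Nat.mod_eq_of_lt (sN_lt hm' j)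

lemma tF_val (l : Fin n → ℕ) (k : Fin m) : (tF l k : ℕ) = tN m l k :=
  Nat.mod_eq_of_lt (tN_lt k)

/-- the shuffle function. -/
def FF (m : ℕ) (l : Fin n → ℕ) : Fin (n + m) → Fin (n + m) :=
  Fin.addCases (sF m l) (tF l)

lemma FF_inj {l : Fin n → ℕ} (hl : Antitone l) (hm' : ∀ i, l i ≤ m) :
    Function.Injective (FF m l) := by
  have hs : ∀ j j' : Fin n, sN l j = sN l j' → j = j' := by
    intro j j' h
    rcases lt_trichotomy j j' with hc | hc | hc
    · exact absurd h (by have := sN_anti hl hc; omega)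
    · exact hc
    · exact absurd h (by have := sN_anti hl hc; omega)
  have ht : ∀ k k' : Fin m, tN m l k = tN m l k' → k = k' := by
    intro k k' h
    rcases lt_trichotomy k k' with hc | hc | hc
    · exact absurd h (by have := tN_anti (l := l) hc; omega)
    · exact hc
    · exact absurd h (by have := tN_anti (l := l) hc; omega)
  intro r r'
  induction r using Fin.addCases with
  | left j =>
    induction r' using Fin.addCases with
    | left j' =>
      intro h
      unfold FF at h
      rw [Fin.addCases_left, Fin.addCases_left] at h
      have hval : sN l j = sN l j' := by
        have := congrArg Fin.val h
        rwa [sF_val hm', sF_val hm'] at this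
      rw [hs _ _ hval]
    | right k' =>
      intro h
      unfold FF at h
      rw [Fin.addCases_left, Fin.addCases_right] at h
      have hval : sN l j = tN m l k' := by
        have := congrArg Fin.val h
        rwa [sF_val hm', tF_val] at this
      exact absurd hval (sN_ne_tN hl hm' j k')
  | right k =>
    induction r' using Fin.addCases with
    | left j' =>
      intro h
      unfold FF at h
      rw [Fin.addCases_right, Fin.addCases_left] at h
      have hval : sN l j' = tN m l k := by
        have := congrArg Fin.val h
        rw [tF_val, sF_val hm'] at this
        exact this.symm
      exact absurd hval (sN_ne_tN hl hm' j' k)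
    | right k' =>
      intro h
      unfold FF at h
      rw [Fin.addCases_right, Fin.addCases_right] at h
      have hval : tN m l k = tN m l k' := by
        have := congrArg Fin.val h
        rwa [tF_val, tF_val] at this
      rw [ht _ _ hval]

/-- the shuffle permutation attached to a partition. -/
noncomputable def piP (l : Fin n → ℕ) (hl : Antitone l) (hm' : ∀ i, l i ≤ m) :
    Equiv.Perm (Fin (n + m)) :=
  Equiv.ofBijective (FF m l) (Finite.injective_iff_bijective.1 (FF_inj hl hm'))

lemma piP_apply {l : Fin n → ℕ} (hl : Antitone l) (hm' : ∀ i, l i ≤ m) (r : Fin (n + m)) :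
    piP l hl hm' r = FF m l r := rfl

/-- block permutation. -/
def blockP (τ : Equiv.Perm (Fin n)) (ρ : Equiv.Perm (Fin m)) : Equiv.Perm (Fin (n + m)) :=
  finSumFinEquiv.permCongr (τ.sumCongr ρ)

lemma blockP_castAdd (τ : Equiv.Perm (Fin n)) (ρ : Equiv.Perm (Fin m)) (i : Fin n) :
    blockP τ ρ (Fin.castAdd m i) = Fin.castAdd m (τ i) := by
  simp [blockP, Equiv.permCongr_apply, finSumFinEquiv_symm_apply_castAdd,
    finSumFinEquiv_apply_left]

lemma blockP_natAdd (τ : Equiv.Perm (Fin n)) (ρ : Equiv.Perm (Fin m)) (k : Fin m) :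
    blockP τ ρ (Fin.natAdd n k) = Fin.natAdd n (ρ k) := by
  simp [blockP, Equiv.permCongr_apply, finSumFinEquiv_symm_apply_natAdd,
    finSumFinEquiv_apply_right]

lemma AA_zero (c : ℕ) (hc : 1 ≤ c) : AA (fun _ : Fin n => 0) c = 0 := by
  unfold AA
  rw [Finset.card_eq_zero, Finset.filter_eq_empty_iff]
  intro i _
  show ¬ c ≤ 0
  omega

lemma tN_zero (k : Fin m) : tN m (fun _ : Fin n => 0) k = n + (m - 1 - (k : ℕ)) := by
  have := k.2
  unfold tN
  rw [AA_zero _ (by omega)]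
  omega

lemma piP_zero :
    piP (fun _ : Fin n => 0) (antitone_const) (fun _ => Nat.zero_le m) =
      blockP Fin.revPerm Fin.revPerm := by
  apply Equiv.ext
  intro r
  induction r using Fin.addCases with
  | left j =>
    rw [piP_apply, blockP_castAdd]
    unfold FF
    rw [Fin.addCases_left]
    apply Fin.ext
    rw [sF_val (fun _ => Nat.zero_le m)]
    simp only [Fin.coe_castAdd, Fin.revPerm_apply, Fin.val_rev]
    show (fun _ : Fin n => 0) j + (n - 1 - (j : ℕ)) = _
    have := j.2
    simp only []
    omega
  | right k =>
    rw [piP_apply, blockP_natAdd]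
    unfold FF
    rw [Fin.addCases_right]
    apply Fin.ext
    rw [tF_val]
    simp only [Fin.coe_natAdd, Fin.revPerm_apply, Fin.val_rev]
    rw [tN_zero]
    have := k.2
    omega


lemma sign_piP_aux (s : ℕ) : ∀ (l : Fin n → ℕ) (hl : Antitone l) (hm' : ∀ i, l i ≤ m),
    (∑ i, l i) = s →
    (Equiv.Perm.sign (piP l hl hm') : ℤˣ) * (-1) ^ (∑ k : Fin m, tN m l k) =
      (Equiv.Perm.sign (piP (fun _ : Fin n => 0) antitone_const (fun _ => Nat.zero_le m)) : ℤˣ) *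
        (-1) ^ (∑ k : Fin m, tN m (fun _ : Fin n => 0) k) := by
  induction s using Nat.strong_induction_on with
  | _ s IH =>
  intro l hl hm' hsum
  rcases Nat.eq_zero_or_pos s with h0 | hpos
  · subst h0
    have hz : ∀ i, l i = 0 := by
      intro i
      have := Finset.sum_eq_zero_iff.1 hsum i (Finset.mem_univ i)
      exact this
    have hl0 : l = fun _ : Fin n => 0 := funext hz
    subst hl0
    rfl
  · -- find the last positive index
    have hQ : (Finset.univ.filter fun i : Fin n => 0 < l i).Nonempty := by
      by_contra hc
      rw [Finset.not_nonempty_iff_eq_empty, Finset.filter_eq_empty_iff] at hc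
      have : ∀ i : Fin n, l i = 0 := fun i => by have := hc (Finset.mem_univ i); omega
      rw [Finset.sum_congr rfl fun i _ => this i] at hsum
      simp at hsum
      omega
    set i₀ := (Finset.univ.filter fun i : Fin n => 0 < l i).max' hQ with hi₀def
    have hi₀pos : 0 < l i₀ := by
      have := Finset.max'_mem _ hQ
      rw [Finset.mem_filter] at this
      exact this.2
    have hafter : ∀ i : Fin n, i₀ < i → l i = 0 := by
      intro i hi
      by_contra hc
      have hmem : i ∈ Finset.univ.filter fun i : Fin n => 0 < l i := by
        rw [Finset.mem_filter]; exact ⟨Finset.mem_univ i, by omega⟩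
      have := Finset.le_max' _ i hmem
      exact absurd (lt_of_lt_of_le hi this) (lt_irrefl _)
    set l' : Fin n → ℕ := Function.update l i₀ (l i₀ - 1) with hl'def
    have hl'eq : ∀ i, l' i = if i = i₀ then l i₀ - 1 else l i := by
      intro i
      rw [hl'def]
      by_cases h : i = i₀
      · subst h; rw [Function.update_self, if_pos rfl]
      · rw [Function.update_of_ne h, if_neg h]
    have hl' : Antitone l' := by
      intro a b hab
      rw [hl'eq, hl'eq]
      by_cases hb : b = i₀
      · rw [if_pos hb]
        by_cases ha : a = i₀
        · rw [if_pos ha]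
        · rw [if_neg ha]
          have : l i₀ ≤ l a := hl (hb ▸ hab)
          omega
      · rw [if_neg hb]
        by_cases ha : a = i₀
        · rw [if_pos ha]
          have hlt : i₀ < b := lt_of_le_of_ne (ha ▸ hab) (Ne.symm hb)
          have := hafter b hlt
          omega
        · rw [if_neg ha]; exact hl hab
    have hm'' : ∀ i, l' i ≤ m := by
      intro i; rw [hl'eq]; split <;> [skip; exact hm' i]
      have := hm' i₀; omega
    have hsum' : (∑ i, l' i) = s - 1 := by
      rw [hl'def, Finset.sum_update_of_mem (Finset.mem_univ i₀)]
      have h := Finset.add_sum_erase Finset.univ l (Finset.mem_univ i₀)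
      rw [Finset.erase_eq] at h
      omega
    -- the two swapped values
    set v : Fin (n + m) := sF m l' i₀ with hv
    set w : Fin (n + m) := sF m l i₀ with hw
    have hvval : (v : ℕ) = sN l' i₀ := sF_val hm'' i₀
    have hwval : (w : ℕ) = sN l i₀ := sF_val hm' i₀
    have hl'i₀ : l' i₀ = l i₀ - 1 := by rw [hl'eq, if_pos rfl]
    have hvw : (w : ℕ) = (v : ℕ) + 1 := by
      rw [hvval, hwval]
      unfold sN
      rw [hl'i₀]
      omega
    have hvwne : v ≠ w := fun h => by rw [h] at hvw; omega
    -- counting lemmas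
    have hA_eq : ∀ c, c ≠ l i₀ → AA l' c = AA l c := by
      intro c hc
      unfold AA
      congr 1
      apply Finset.filter_congr
      intro i _
      rw [hl'eq]
      split
      · next h =>
        subst h
        constructor <;> (intro; omega)
      · rfl
    have hA_at : AA l (l i₀) = (i₀ : ℕ) + 1 := by
      unfold AA
      have : (Finset.univ.filter fun i : Fin n => l i₀ ≤ l i) = Finset.Iic i₀ := by
        ext i
        simp only [Finset.mem_filter, Finset.mem_univ, true_and, Finset.mem_Iic]
        constructor
        · intro h
          by_contra hc
          have := hafter i (not_le.mp hc)
          omega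
        · intro h
          exact hl h
      rw [this, Fin.card_Iic]
    have hA'_at : AA l' (l i₀) = (i₀ : ℕ) := by
      unfold AA
      have : (Finset.univ.filter fun i : Fin n => l i₀ ≤ l' i) = Finset.Iio i₀ := by
        ext i
        simp only [Finset.mem_filter, Finset.mem_univ, true_and, Finset.mem_Iio]
        rw [hl'eq]
        constructor
        · intro h
          rcases lt_trichotomy i i₀ with hc | hc | hc
          · exact hc
          · exfalso; rw [if_pos hc] at h; omega
          · exfalso
            rw [if_neg (ne_of_gt hc)] at h
            have := hafter i hc
            omega
        · intro h
          rw [if_neg (ne_of_lt h)]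
          exact hl h.le
      rw [this, Fin.card_Iio]
    obtain ⟨k₀, hk₀v⟩ : ∃ k : Fin m, (k : ℕ) = m - l i₀ :=
      ⟨⟨m - l i₀, by have := hm' i₀; omega⟩, rfl⟩
    have hk₀c : m - (k₀ : ℕ) = l i₀ := by
      have := hm' i₀
      omega
    have htN_eq : ∀ k : Fin m, k ≠ k₀ → tN m l' k = tN m l k := by
      intro k hk
      unfold tN
      rw [hA_eq]
      intro hc
      apply hk
      apply Fin.ext
      have hkm := k.2
      have := hm' i₀
      omega
    have htN_l : tN m l k₀ = (v : ℕ) := by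
      rw [hvval]
      unfold tN sN
      rw [hk₀c, hA_at, hl'i₀]
      have := hm' i₀
      have := i₀.2
      have := hk₀v
      omega
    have htN_l' : tN m l' k₀ = (w : ℕ) := by
      rw [hwval]
      unfold tN sN
      rw [hk₀c, hA'_at]
      have := hm' i₀
      have := i₀.2
      have := hk₀v
      omega
    -- the swap identity
    have hswap : piP l hl hm' = Equiv.swap v w * piP l' hl' hm'' := by
      apply Equiv.ext
      intro r
      rw [Equiv.Perm.mul_apply, piP_apply, piP_apply]
      induction r using Fin.addCases with
      | left j =>
        unfold FF
        rw [Fin.addCases_left, Fin.addCases_left]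
        rcases eq_or_ne j i₀ with hj | hj
        · subst hj
          rw [← hv, ← hw, Equiv.swap_apply_left]
        · have hlj : l' j = l j := by rw [hl'eq, if_neg hj]
          have hsame : sF m l' j = sF m l j := by
            apply Fin.ext
            rw [sF_val hm'', sF_val hm']
            unfold sN
            rw [hlj]
          rw [hsame]
          refine (Equiv.swap_apply_of_ne_of_ne ?_ ?_).symm
          · intro hc
            have := congrArg Fin.val hc
            rw [sF_val hm', hvval] at this
            have h1 : sN l j = sN l' j := by unfold sN; rw [hlj]
            rcases lt_trichotomy j i₀ with hcc | hcc | hcc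
            · have := sN_anti hl' hcc; omega
            · exact hj hcc
            · have := sN_anti hl' hcc; omega
          · intro hc
            have := congrArg Fin.val hc
            rw [sF_val hm', hwval] at this
            rcases lt_trichotomy j i₀ with hcc | hcc | hcc
            · have := sN_anti hl hcc; omega
            · exact hj hcc
            · have := sN_anti hl hcc; omega
      | right k =>
        unfold FF
        rw [Fin.addCases_right, Fin.addCases_right]
        rcases eq_or_ne k k₀ with hk | hk
        · subst hk
          have h1 : tF l' k = w := by
            apply Fin.ext; rw [tF_val, htN_l']
          have h2 : tF l k = v := by
            apply Fin.ext; rw [tF_val, htN_l]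
          rw [h1, h2, Equiv.swap_apply_right]
        · have hsame : tF l' k = tF l k := by
            apply Fin.ext
            rw [tF_val, tF_val, htN_eq k hk]
          rw [hsame]
          refine (Equiv.swap_apply_of_ne_of_ne ?_ ?_).symm
          · intro hc
            have := congrArg Fin.val hc
            rw [tF_val, hvval] at this
            have h1 : sN l' i₀ = tN m l' k := by rw [← this, htN_eq k hk]
            exact absurd h1 (sN_ne_tN hl' hm'' i₀ k)
          · intro hc
            have := congrArg Fin.val hc
            rw [tF_val, hwval] at this
            exact absurd this.symm (sN_ne_tN hl hm' i₀ k)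
    -- sums of tN
    have hsumt : (∑ k : Fin m, tN m l' k) = (∑ k : Fin m, tN m l k) + 1 := by
      rw [← Finset.add_sum_erase Finset.univ (fun k => tN m l' k) (Finset.mem_univ k₀),
        ← Finset.add_sum_erase Finset.univ (fun k => tN m l k) (Finset.mem_univ k₀)]
      have herase : ∑ k ∈ Finset.univ.erase k₀, tN m l' k = ∑ k ∈ Finset.univ.erase k₀, tN m l k := by
        apply Finset.sum_congr rfl
        intro k hk
        exact htN_eq k (Finset.ne_of_mem_erase hk)
      rw [herase, htN_l, htN_l']
      omega
    have hsign : Equiv.Perm.sign (piP l hl hm') = - Equiv.Perm.sign (piP l' hl' hm'') := by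
      rw [hswap, Equiv.Perm.sign_mul, Equiv.Perm.sign_swap hvwne]
      simp
    have hIH := IH (s - 1) (by omega) l' hl' hm'' (by omega)
    rw [hsign, ← hIH, hsumt, pow_succ]
    simp [neg_mul, mul_neg, mul_assoc]


section Helpers

variable {p N : ℕ}

lemma le_of_strictMono {f : Fin p → Fin N} (hf : StrictMono f) (i : Fin p) :
    (i : ℕ) ≤ (f i : ℕ) := by
  obtain ⟨i, hi⟩ := i
  induction i with
  | zero => exact Nat.zero_le _
  | succ i ih =>
    have h1 : (⟨i, by omega⟩ : Fin p) < ⟨i + 1, hi⟩ := by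
      rw [Fin.lt_def]
      simp
    have h2 := hf h1
    have h3 := ih (by omega)
    rw [Fin.lt_def] at h2
    have e1 : ((⟨i, by omega⟩ : Fin p) : ℕ) = i := rfl
    have e2 : ((⟨i + 1, hi⟩ : Fin p) : ℕ) = i + 1 := rfl
    omega

lemma gap_of_strictMono {f : Fin p → Fin N} (hf : StrictMono f) :
    ∀ (d : ℕ) (a b : Fin p), (b : ℕ) = (a : ℕ) + d → (f a : ℕ) + d ≤ (f b : ℕ) := by
  intro d
  induction d with
  | zero =>
    intro a b hab
    have : a = b := Fin.ext (by omega)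
    subst this
    omega
  | succ d ih =>
    intro a b hab
    have hb := b.2
    set b' : Fin p := ⟨(a : ℕ) + d, by omega⟩ with hb'
    have h1 := ih a b' rfl
    have h2 : b' < b := by rw [Fin.lt_def]; simp [hb']; omega
    have h3 := hf h2
    rw [Fin.lt_def] at h3
    omega

lemma apply_le_of_strictMono (hpN : p ≤ N) {f : Fin p → Fin N} (hf : StrictMono f) (i : Fin p) :
    (f i : ℕ) ≤ (i : ℕ) + (N - p) := by
  have hrev : StrictMono (fun j : Fin p => Fin.rev (f (Fin.rev j))) := by
    intro a b hab
    rw [Fin.rev_lt_rev]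
    apply hf
    rwa [Fin.rev_lt_rev]
  have h := le_of_strictMono hrev (Fin.rev i)
  simp only [Fin.rev_rev, Fin.val_rev] at h
  have := i.2
  have := (f i).2
  omega

lemma strictMono_unique {f g : Fin p → Fin N} (hf : StrictMono f) (hg : StrictMono g)
    (h : Finset.univ.image f = Finset.univ.image g) : f = g := by
  classical
  have hcard : (Finset.univ.image f).card = p := by
    rw [Finset.card_image_of_injective _ hf.injective, Finset.card_univ, Fintype.card_fin]
  have h1 : f = (Finset.univ.image f).orderEmbOfFin hcard := by
    apply Finset.orderEmbOfFin_unique _ (fun j => Finset.mem_image_of_mem f (Finset.mem_univ j)) hf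
  have hcard' : (Finset.univ.image f).card = p := hcard
  have h2 : g = (Finset.univ.image f).orderEmbOfFin hcard := by
    apply Finset.orderEmbOfFin_unique _ (fun j => by
      rw [h]; exact Finset.mem_image_of_mem g (Finset.mem_univ j)) hg
  rw [h1, h2]

lemma strictAnti_unique {f g : Fin p → Fin N} (hf : StrictAnti f) (hg : StrictAnti g)
    (h : Finset.univ.image f = Finset.univ.image g) : f = g := by
  classical
  have hf' : StrictMono (f ∘ Fin.rev) := by
    intro a b hab
    exact hf (by rwa [Fin.rev_lt_rev])
  have hg' : StrictMono (g ∘ Fin.rev) := by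
    intro a b hab
    exact hg (by rwa [Fin.rev_lt_rev])
  have himg : ∀ (u : Fin p → Fin N), Finset.univ.image (u ∘ Fin.rev) = Finset.univ.image u := by
    intro u
    ext r
    simp only [Finset.mem_image, Finset.mem_univ, true_and, Function.comp_apply]
    constructor
    · rintro ⟨a, ha⟩; exact ⟨_, ha⟩
    · rintro ⟨a, ha⟩; exact ⟨Fin.rev a, by rwa [Fin.rev_rev]⟩
  have := strictMono_unique hf' hg' (by rw [himg, himg, h])
  funext j
  have := congrFun this (Fin.rev j)
  simpa [Fin.rev_rev] using this

end Helpers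

/-- generalized Vandermonde determinant as a sum over permutations. -/
lemma det_pow_eq (p : ℕ) (w : Fin p → ℝ) (g : Fin p → ℕ) :
    (Matrix.of fun i j : Fin p => w i ^ g j).det =
      ∑ τ : Equiv.Perm (Fin p), ((Equiv.Perm.sign τ : ℤ) : ℝ) * ∏ i, w i ^ g (τ i) := by
  rw [Matrix.det_apply']
  apply Fintype.sum_equiv (Equiv.inv (Equiv.Perm (Fin p)))
  intro σ
  simp only [Equiv.inv_apply, Equiv.Perm.sign_inv, Matrix.of_apply]
  have hprod : ∏ i, w (σ i) ^ g i = ∏ i, w i ^ g (σ⁻¹ i) := by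
    apply Fintype.prod_equiv σ
    intro i
    rw [Equiv.Perm.inv_def, Equiv.symm_apply_apply]
  rw [hprod]


lemma sF_strictAnti {l : Fin n → ℕ} (hl : Antitone l) (hm' : ∀ i, l i ≤ m) :
    StrictAnti (sF m l) := by
  intro a b hab
  rw [Fin.lt_def, sF_val hm', sF_val hm']
  exact sN_anti hl hab

lemma tF_strictAnti (l : Fin n → ℕ) : StrictAnti (tF l : Fin m → Fin (n + m)) := by
  intro a b hab
  rw [Fin.lt_def, tF_val, tF_val]
  exact tN_anti hab

/-- bound coming from the type `Fin (m+1)`. -/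
lemma lbound (l : Fin n → Fin (m + 1)) : ∀ i, ((l i : ℕ)) ≤ m :=
  fun i => Nat.lt_succ_iff.mp (l i).2

/-- total version of `piP`. -/
noncomputable def piA (l : Fin n → Fin (m + 1)) : Equiv.Perm (Fin (n + m)) :=
  if h : Antitone (fun i => ((l i : ℕ))) then piP (fun i => ((l i : ℕ))) h (lbound l) else 1

lemma piA_pos {l : Fin n → Fin (m + 1)} (h : Antitone (fun i => ((l i : ℕ)))) :
    piA l = piP (fun i => ((l i : ℕ))) h (lbound l) := dif_pos h

/-- the global reindexing map for the Laplace expansion. -/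
noncomputable def Phi (p : (Fin n → Fin (m + 1)) × Equiv.Perm (Fin n) × Equiv.Perm (Fin m)) :
    Equiv.Perm (Fin (n + m)) := piA p.1 * blockP p.2.1 p.2.2

lemma Phi_castAdd {l : Fin n → Fin (m + 1)} (h : Antitone (fun i => ((l i : ℕ))))
    (τ : Equiv.Perm (Fin n)) (ρ : Equiv.Perm (Fin m)) (i : Fin n) :
    Phi (l, τ, ρ) (Fin.castAdd m i) = sF m (fun i' => ((l i' : ℕ))) (τ i) := by
  show (piA l * blockP τ ρ) _ = _
  rw [Equiv.Perm.mul_apply, blockP_castAdd, piA_pos h, piP_apply]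
  unfold FF
  rw [Fin.addCases_left]

lemma Phi_natAdd {l : Fin n → Fin (m + 1)} (h : Antitone (fun i => ((l i : ℕ))))
    (τ : Equiv.Perm (Fin n)) (ρ : Equiv.Perm (Fin m)) (k : Fin m) :
    Phi (l, τ, ρ) (Fin.natAdd n k) = tF (fun i' => ((l i' : ℕ))) (ρ k) := by
  show (piA l * blockP τ ρ) _ = _
  rw [Equiv.Perm.mul_apply, blockP_natAdd, piA_pos h, piP_apply]
  unfold FF
  rw [Fin.addCases_right]

lemma image_comp_perm {p : ℕ} {α : Type*} [DecidableEq α] (f : Fin p → α)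
    (τ : Equiv.Perm (Fin p)) :
    Finset.univ.image (fun i => f (τ i)) = Finset.univ.image f := by
  ext r
  simp only [Finset.mem_image, Finset.mem_univ, true_and]
  constructor
  · rintro ⟨a, ha⟩; exact ⟨τ a, ha⟩
  · rintro ⟨a, ha⟩; exact ⟨τ.symm a, by rwa [Equiv.apply_symm_apply]⟩

lemma Phi_inj {p p' : (Fin n → Fin (m + 1)) × Equiv.Perm (Fin n) × Equiv.Perm (Fin m)}
    (hp : Antitone (fun i => ((p.1 i : ℕ)))) (hp' : Antitone (fun i => ((p'.1 i : ℕ))))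
    (h : Phi p = Phi p') : p = p' := by
  obtain ⟨l, τ, ρ⟩ := p
  obtain ⟨l', τ', ρ'⟩ := p'
  simp only at hp hp'
  have happ : ∀ i : Fin n, sF m (fun i' => ((l i' : ℕ))) (τ i)
      = sF m (fun i' => ((l' i' : ℕ))) (τ' i) := by
    intro i
    rw [← Phi_castAdd hp τ ρ, ← Phi_castAdd hp' τ' ρ', h]
  have him : Finset.univ.image (sF m (fun i' => ((l i' : ℕ))))
      = Finset.univ.image (sF m (fun i' => ((l' i' : ℕ)))) := by
    rw [← image_comp_perm (sF m (fun i' => ((l i' : ℕ)))) τ,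
      ← image_comp_perm (sF m (fun i' => ((l' i' : ℕ)))) τ']
    exact Finset.image_congr (fun i _ => happ i)
  have hfeq := strictAnti_unique (sF_strictAnti hp (lbound l)) (sF_strictAnti hp' (lbound l')) him
  have hll : l = l' := by
    funext j
    have := congrArg Fin.val (congrFun hfeq j)
    rw [sF_val (lbound l), sF_val (lbound l')] at this
    simp only [sN] at this
    apply Fin.ext
    omega
  subst hll
  have hblock : blockP τ ρ = blockP τ' ρ' := by
    have := h
    unfold Phi at this
    simp only at this
    exact mul_left_cancel this
  have hτ : τ = τ' := by
    apply Equiv.ext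
    intro i
    have := congrArg (fun e : Equiv.Perm (Fin (n + m)) => e (Fin.castAdd m i)) hblock
    simp only [blockP_castAdd] at this
    exact Fin.castAdd_injective _ _ this
  have hρ : ρ = ρ' := by
    apply Equiv.ext
    intro k
    have := congrArg (fun e : Equiv.Perm (Fin (n + m)) => e (Fin.natAdd n k)) hblock
    simp only [blockP_natAdd] at this
    apply Fin.ext
    have := congrArg Fin.val this
    simp only [Fin.coe_natAdd] at this
    omega
  rw [hτ, hρ]

lemma Phi_surj (σ : Equiv.Perm (Fin (n + m))) :
    ∃ p : (Fin n → Fin (m + 1)) × Equiv.Perm (Fin n) × Equiv.Perm (Fin m),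
      Antitone (fun i => ((p.1 i : ℕ))) ∧ Phi p = σ := by
  classical
  set T : Finset (Fin (n + m)) := Finset.univ.image (fun i : Fin n => σ (Fin.castAdd m i)) with hT
  have hinj1 : Function.Injective (fun i : Fin n => σ (Fin.castAdd m i)) :=
    fun a b hab => Fin.castAdd_injective _ _ (σ.injective hab)
  have hTcard : T.card = n := by
    rw [hT, Finset.card_image_of_injective _ hinj1, Finset.card_univ, Fintype.card_fin]
  set eT := T.orderEmbOfFin hTcard with heT
  have heTmono : StrictMono eT := eT.strictMono
  set sh : Fin n → Fin (n + m) := fun j => eT (Fin.rev j) with hsh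
  have hLB : ∀ j : Fin n, (n - 1 - (j : ℕ)) ≤ (sh j : ℕ) := by
    intro j
    have h := le_of_strictMono heTmono (Fin.rev j)
    rw [Fin.val_rev] at h
    simp only [hsh]
    omega
  have hUB : ∀ j : Fin n, (sh j : ℕ) ≤ (n - 1 - (j : ℕ)) + m := by
    intro j
    have h := apply_le_of_strictMono (Nat.le_add_right n m) heTmono (Fin.rev j)
    rw [Fin.val_rev] at h
    have := j.2
    simp only [hsh]
    omega
  set lv : Fin n → ℕ := fun j => (sh j : ℕ) - (n - 1 - (j : ℕ)) with hlv
  have hlvm : ∀ j, lv j ≤ m := by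
    intro j
    have := hUB j
    simp only [hlv]
    omega
  have hlv_anti : Antitone lv := by
    intro a b hab
    rcases eq_or_lt_of_le hab with hq | hq
    · rw [hq]
    · have hd : ((Fin.rev a : ℕ)) = (Fin.rev b : ℕ) + ((b : ℕ) - (a : ℕ)) := by
        rw [Fin.val_rev, Fin.val_rev]
        have := b.2
        have : (a : ℕ) < (b : ℕ) := hq
        omega
      have hgap := gap_of_strictMono heTmono ((b : ℕ) - (a : ℕ)) (Fin.rev b) (Fin.rev a) hd
      have hlb := hLB b
      have hlba := hLB a
      simp only [hsh] at hlb hlba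
      have : (a : ℕ) < (b : ℕ) := hq
      have := b.2
      simp only [hlv, hsh]
      omega
  have hsFl : ∀ j, sF m lv j = sh j := by
    intro j
    apply Fin.ext
    rw [sF_val hlvm]
    simp only [sN, hlv, hsh]
    have := hLB j
    simp only [hsh] at this
    omega
  set lF : Fin n → Fin (m + 1) := fun j => ⟨lv j, Nat.lt_succ_of_le (hlvm j)⟩ with hlF
  have hlFval : (fun i => ((lF i : ℕ))) = lv := rfl
  -- the permutation τ
  set eI := T.orderIsoOfFin hTcard with heI
  have hcoe : ∀ j, ((eI j : Fin (n + m))) = eT j := fun j => Finset.coe_orderIsoOfFin_apply T hTcard j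
  have hmemT : ∀ i : Fin n, σ (Fin.castAdd m i) ∈ T := fun i =>
    Finset.mem_image_of_mem _ (Finset.mem_univ i)
  set τf : Fin n → Fin n := fun i => Fin.rev (eI.symm ⟨σ (Fin.castAdd m i), hmemT i⟩) with hτf
  have hτinj : Function.Injective τf := by
    intro a b hab
    simp only [hτf] at hab
    have h1 := Fin.rev_injective hab
    have h2 : (⟨σ (Fin.castAdd m a), hmemT a⟩ : {z // z ∈ T})
        = ⟨σ (Fin.castAdd m b), hmemT b⟩ := by
      have := congrArg eI h1
      rwa [OrderIso.apply_symm_apply, OrderIso.apply_symm_apply] at this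
    exact hinj1 (congrArg Subtype.val h2)
  set τ := Equiv.ofBijective τf (Finite.injective_iff_bijective.1 hτinj) with hτ
  have hshτ : ∀ i, sh (τ i) = σ (Fin.castAdd m i) := by
    intro i
    show sh (τf i) = _
    simp only [hsh, hτf]
    rw [Fin.rev_rev, ← hcoe, OrderIso.apply_symm_apply]
  -- the complement
  set Tc : Finset (Fin (n + m)) := Tᶜ with hTc
  have hTc_card : Tc.card = m := by
    rw [hTc, Finset.card_compl, hTcard, Fintype.card_fin]
    omega
  set eC := Tc.orderEmbOfFin hTc_card with heC
  have heCmono : StrictMono eC := eC.strictMono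
  set eCI := Tc.orderIsoOfFin hTc_card with heCI
  have hcoeC : ∀ j, ((eCI j : Fin (n + m))) = eC j := fun j =>
    Finset.coe_orderIsoOfFin_apply Tc hTc_card j
  have hmemTc : ∀ k : Fin m, σ (Fin.natAdd n k) ∈ Tc := by
    intro k
    rw [hTc, Finset.mem_compl]
    intro hmem
    obtain ⟨i, _, hi⟩ := Finset.mem_image.1 hmem
    have := σ.injective hi
    have := congrArg Fin.val this
    simp only [Fin.coe_castAdd, Fin.coe_natAdd] at this
    have := i.2
    omega
  set th : Fin m → Fin (n + m) := fun k => eC (Fin.rev k) with hth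
  have hthanti : StrictAnti th := by
    intro a b hab
    simp only [hth]
    exact heCmono (by rwa [Fin.rev_lt_rev])
  set ρf : Fin m → Fin m := fun k => Fin.rev (eCI.symm ⟨σ (Fin.natAdd n k), hmemTc k⟩) with hρf
  have hρinj : Function.Injective ρf := by
    intro a b hab
    simp only [hρf] at hab
    have h1 := Fin.rev_injective hab
    have h2 : (⟨σ (Fin.natAdd n a), hmemTc a⟩ : {z // z ∈ Tc})
        = ⟨σ (Fin.natAdd n b), hmemTc b⟩ := by
      have := congrArg eCI h1
      rwa [OrderIso.apply_symm_apply, OrderIso.apply_symm_apply] at this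
    have h3 := congrArg Subtype.val h2
    simp only at h3
    have h4 := σ.injective h3
    have h5 := congrArg Fin.val h4
    simp only [Fin.coe_natAdd] at h5
    exact Fin.ext (by omega)
  set ρ := Equiv.ofBijective ρf (Finite.injective_iff_bijective.1 hρinj) with hρ
  have hthρ : ∀ k, th (ρ k) = σ (Fin.natAdd n k) := by
    intro k
    show th (ρf k) = _
    simp only [hth, hρf]
    rw [Fin.rev_rev, ← hcoeC, OrderIso.apply_symm_apply]
  -- the image of sh is T
  have hTimg : T = Finset.univ.image sh := by
    rw [hT]
    rw [← image_comp_perm sh τ]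
    apply Finset.image_congr
    intro i _
    exact (hshτ i).symm
  -- the image of tF lv is the complement of T
  have htFanti : StrictAnti (tF lv : Fin m → Fin (n + m)) := tF_strictAnti lv
  have htFmem : ∀ k : Fin m, tF lv k ∈ Tc := by
    intro k
    rw [hTc, Finset.mem_compl, hTimg]
    intro hmem
    obtain ⟨j, _, hj⟩ := Finset.mem_image.1 hmem
    have hv := congrArg Fin.val hj
    rw [← hsFl j, sF_val hlvm, tF_val] at hv
    exact sN_ne_tN hlv_anti hlvm j k hv
  have himgtF : Finset.univ.image (tF lv) = Finset.univ.image th := by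
    have h1 : Finset.univ.image (tF lv) ⊆ Tc := by
      intro r hr
      obtain ⟨k, _, hk⟩ := Finset.mem_image.1 hr
      exact hk ▸ htFmem k
    have h2 : Finset.univ.image th = Tc := by
      apply Finset.eq_of_subset_of_card_le
      · intro r hr
        obtain ⟨k, _, hk⟩ := Finset.mem_image.1 hr
        rw [← hk]
        simp only [hth]
        exact Finset.orderEmbOfFin_mem Tc hTc_card (Fin.rev k)
      · rw [hTc_card, Finset.card_image_of_injective _ hthanti.injective,
          Finset.card_univ, Fintype.card_fin]
    have h3 : Finset.univ.image (tF lv) = Tc := by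
      apply Finset.eq_of_subset_of_card_le h1
      rw [hTc_card, Finset.card_image_of_injective _ htFanti.injective,
        Finset.card_univ, Fintype.card_fin]
    rw [h3, h2]
  have htFth : (tF lv : Fin m → Fin (n + m)) = th :=
    strictAnti_unique htFanti hthanti himgtF
  -- conclusion
  refine ⟨(lF, τ, ρ), ?_, ?_⟩
  · show Antitone (fun i => ((lF i : ℕ)))
    rw [hlFval]
    exact hlv_anti
  · apply Equiv.ext
    intro r
    induction r using Fin.addCases with
    | left i =>
      rw [Phi_castAdd (by rw [hlFval]; exact hlv_anti) τ ρ i]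
      have : (fun i' => ((lF i' : ℕ))) = lv := rfl
      rw [this, hsFl (τ i), hshτ i]
    | right k =>
      rw [Phi_natAdd (by rw [hlFval]; exact hlv_anti) τ ρ k]
      have : (fun i' => ((lF i' : ℕ))) = lv := rfl
      rw [this, htFth, hthρ k]


lemma blockP_sign (τ : Equiv.Perm (Fin n)) (ρ : Equiv.Perm (Fin m)) :
    Equiv.Perm.sign (blockP τ ρ) = Equiv.Perm.sign τ * Equiv.Perm.sign ρ := by
  unfold blockP
  rw [Equiv.Perm.sign_permCongr, Equiv.Perm.sign_sumCongr]

lemma term_eq (x : Fin n → ℝ) (y : Fin m → ℝ) (l : Fin n → Fin (m + 1))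
    (h : Antitone (fun i => ((l i : ℕ)))) :
    ∑ q : Equiv.Perm (Fin n) × Equiv.Perm (Fin m),
      ((Equiv.Perm.sign (Phi (l, q.1, q.2)) : ℤ) : ℝ) *
        ∏ r, (Fin.append x (fun k => -(y k))) r ^ ((Phi (l, q.1, q.2) r) : ℕ)
    = ((Equiv.Perm.sign (piA l) : ℤ) : ℝ) *
      ((Matrix.of fun i j : Fin n => x i ^ sN (fun i' => ((l i' : ℕ))) j).det *
       (Matrix.of fun i k : Fin m => (-(y i)) ^ tN m (fun i' => ((l i' : ℕ))) k).det) := by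
  classical
  rw [det_pow_eq, det_pow_eq, Fintype.sum_mul_sum]
  simp only [Finset.mul_sum]
  rw [Fintype.sum_prod_type]
  apply Finset.sum_congr rfl
  intro τ _
  apply Finset.sum_congr rfl
  intro ρ _
  have hsign : ((Equiv.Perm.sign (Phi (l, τ, ρ)) : ℤ) : ℝ)
      = ((Equiv.Perm.sign (piA l) : ℤ) : ℝ) * (((Equiv.Perm.sign τ : ℤ) : ℝ) *
          ((Equiv.Perm.sign ρ : ℤ) : ℝ)) := by
    unfold Phi
    rw [Equiv.Perm.sign_mul, blockP_sign]
    push_cast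
    ring
  have hprod : (∏ r, (Fin.append x (fun k => -(y k))) r ^ ((Phi (l, τ, ρ) r) : ℕ))
      = (∏ i, x i ^ sN (fun i' => ((l i' : ℕ))) (τ i)) *
        (∏ k, (-(y k)) ^ tN m (fun i' => ((l i' : ℕ))) (ρ k)) := by
    rw [Fin.prod_univ_add]
    congr 1
    · apply Finset.prod_congr rfl
      intro i _
      rw [Fin.append_left, Phi_castAdd h τ ρ i, sF_val (lbound l)]
    · apply Finset.prod_congr rfl
      intro k _
      rw [Fin.append_right, Phi_natAdd h τ ρ k, tF_val]
  rw [hsign, hprod]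
  ring

lemma main_det (x : Fin n → ℝ) (y : Fin m → ℝ) :
    (Matrix.vandermonde (Fin.append x (fun k => -(y k)))).det =
      ∑ l : Fin n → Fin (m + 1),
        if Antitone (fun i => ((l i : ℕ))) then
          ((Equiv.Perm.sign (piA l) : ℤ) : ℝ) *
            ((Matrix.of fun i j : Fin n => x i ^ sN (fun i' => ((l i' : ℕ))) j).det *
             (Matrix.of fun i k : Fin m => (-(y i)) ^ tN m (fun i' => ((l i' : ℕ))) k).det)
        else 0 := by
  classical
  have h1 : (Matrix.vandermonde (Fin.append x (fun k => -(y k)))).det =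
      ∑ σ : Equiv.Perm (Fin (n + m)), ((Equiv.Perm.sign σ : ℤ) : ℝ) *
        ∏ r, (Fin.append x (fun k => -(y k))) r ^ ((σ r) : ℕ) := by
    rw [← Matrix.det_transpose, Matrix.det_apply']
    apply Finset.sum_congr rfl
    intro σ _
    congr 1
  rw [h1]
  have h2 : ∑ σ : Equiv.Perm (Fin (n + m)), ((Equiv.Perm.sign σ : ℤ) : ℝ) *
        ∏ r, (Fin.append x (fun k => -(y k))) r ^ ((σ r) : ℕ)
      = ∑ p ∈ (Finset.univ.filter
          fun p : (Fin n → Fin (m + 1)) × Equiv.Perm (Fin n) × Equiv.Perm (Fin m) =>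
            Antitone (fun i => ((p.1 i : ℕ)))),
          ((Equiv.Perm.sign (Phi p) : ℤ) : ℝ) *
            ∏ r, (Fin.append x (fun k => -(y k))) r ^ ((Phi p r) : ℕ) := by
    apply Finset.sum_nbij' (fun σ => Classical.choose (Phi_surj σ)) Phi
    · intro σ _
      have hspec := Classical.choose_spec (Phi_surj σ)
      simp only [Finset.mem_filter, Finset.mem_univ, true_and]
      exact hspec.1
    · intro p _
      exact Finset.mem_univ _
    · intro σ _
      exact (Classical.choose_spec (Phi_surj σ)).2
    · intro p hp
      simp only [Finset.mem_filter, Finset.mem_univ, true_and] at hp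
      have hspec := Classical.choose_spec (Phi_surj (Phi p))
      exact Phi_inj hspec.1 hp hspec.2
    · intro σ _
      rw [(Classical.choose_spec (Phi_surj σ)).2]
  rw [h2, Finset.sum_filter, Fintype.sum_prod_type]
  apply Finset.sum_congr rfl
  intro l _
  by_cases hP : Antitone (fun i => ((l i : ℕ)))
  · rw [if_pos hP, ← term_eq x y l hP]
    simp only [if_pos hP]
  · rw [if_neg hP]
    apply Finset.sum_eq_zero
    intro q _
    rw [if_neg hP]


lemma vand_split (x : Fin n → ℝ) (y : Fin m → ℝ) :
    (Matrix.vandermonde (Fin.append x (fun k => -(y k)))).det =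
      (Matrix.vandermonde x).det *
        (((-1 : ℝ) ^ m) ^ n * ∏ i, ∏ j, (x i + y j)) *
        ((-1 : ℝ) ^ (∑ k : Fin m, (m - 1 - (k : ℕ))) * (Matrix.vandermonde y).det) := by
  classical
  rw [Matrix.det_vandermonde, Matrix.det_vandermonde, Matrix.det_vandermonde]
  set z : Fin (n + m) → ℝ := Fin.append x (fun k => -(y k)) with hz
  have hIoi : ∀ (N' : ℕ) (i : Fin N') (g : Fin N' → ℝ),
      ∏ r' ∈ Finset.Ioi i, g r' = ∏ r' : Fin N', if i < r' then g r' else 1 := by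
    intro N' i g
    rw [← Finset.prod_filter]
    congr 1
    ext r'
    simp [Finset.mem_Ioi]
  have hblock1 : ∀ a : Fin n,
      ∏ r' ∈ Finset.Ioi (Fin.castAdd m a), (z r' - z (Fin.castAdd m a))
      = (∏ a' ∈ Finset.Ioi a, (x a' - x a)) * ∏ b : Fin m, (-(y b) - x a) := by
    intro a
    rw [hIoi, Fin.prod_univ_add]
    congr 1
    · rw [hIoi]
      apply Finset.prod_congr rfl
      intro a' _
      simp only [hz, Fin.append_left]
      refine if_congr ?_ rfl rfl
      rw [Fin.lt_def, Fin.lt_def]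
      simp
    · apply Finset.prod_congr rfl
      intro b _
      have hcond : Fin.castAdd m a < Fin.natAdd n b := by
        rw [Fin.lt_def]
        simp only [Fin.coe_castAdd, Fin.coe_natAdd]
        have := a.2
        omega
      rw [if_pos hcond]
      simp only [hz, Fin.append_left, Fin.append_right]
  have hblock2 : ∀ b : Fin m,
      ∏ r' ∈ Finset.Ioi (Fin.natAdd n b), (z r' - z (Fin.natAdd n b))
      = ∏ b' ∈ Finset.Ioi b, (-(y b') - (-(y b))) := by
    intro b
    rw [hIoi, Fin.prod_univ_add]
    have hfirst : (∏ a' : Fin n,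
        if Fin.natAdd n b < Fin.castAdd m a' then z (Fin.castAdd m a') - z (Fin.natAdd n b) else 1)
        = 1 := by
      apply Finset.prod_eq_one
      intro a' _
      rw [if_neg]
      rw [Fin.lt_def]
      simp only [Fin.coe_castAdd, Fin.coe_natAdd]
      have := a'.2
      omega
    rw [hfirst, one_mul, hIoi]
    apply Finset.prod_congr rfl
    intro b' _
    simp only [hz, Fin.append_right]
    refine if_congr ?_ rfl rfl
    rw [Fin.lt_def, Fin.lt_def]
    simp only [Fin.coe_natAdd]
    omega
  rw [Fin.prod_univ_add
    (fun r : Fin (n + m) => ∏ r' ∈ Finset.Ioi r, (z r' - z r))]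
  rw [Finset.prod_congr rfl (fun a _ => hblock1 a),
    Finset.prod_congr rfl (fun b _ => hblock2 b)]
  rw [Finset.prod_mul_distrib]
  have hmid : (∏ a : Fin n, ∏ b : Fin m, (-(y b) - x a))
      = ((-1 : ℝ) ^ m) ^ n * ∏ i, ∏ j, (x i + y j) := by
    have h1 : ∀ a : Fin n, (∏ b : Fin m, (-(y b) - x a))
        = (-1 : ℝ) ^ m * ∏ b : Fin m, (x a + y b) := by
      intro a
      calc (∏ b : Fin m, (-(y b) - x a)) = ∏ b : Fin m, (-1 : ℝ) * (x a + y b) := by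
            apply Finset.prod_congr rfl
            intro b _
            ring
        _ = (∏ _b : Fin m, (-1 : ℝ)) * ∏ b : Fin m, (x a + y b) := Finset.prod_mul_distrib
        _ = (-1 : ℝ) ^ m * ∏ b : Fin m, (x a + y b) := by
            rw [Finset.prod_const, Finset.card_univ, Fintype.card_fin]
    rw [Finset.prod_congr rfl (fun a _ => h1 a), Finset.prod_mul_distrib,
      Finset.prod_const, Finset.card_univ, Fintype.card_fin]
  have hthird : (∏ b : Fin m, ∏ b' ∈ Finset.Ioi b, (-(y b') - (-(y b))))
      = (-1 : ℝ) ^ (∑ k : Fin m, (m - 1 - (k : ℕ))) *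
        ∏ b : Fin m, ∏ b' ∈ Finset.Ioi b, (y b' - y b) := by
    have h1 : ∀ b : Fin m, (∏ b' ∈ Finset.Ioi b, (-(y b') - (-(y b))))
        = (-1 : ℝ) ^ ((m : ℕ) - 1 - (b : ℕ)) * ∏ b' ∈ Finset.Ioi b, (y b' - y b) := by
      intro b
      calc (∏ b' ∈ Finset.Ioi b, (-(y b') - (-(y b))))
          = ∏ b' ∈ Finset.Ioi b, (-1 : ℝ) * (y b' - y b) := by
            apply Finset.prod_congr rfl
            intro b' _
            ring
        _ = (∏ _b' ∈ Finset.Ioi b, (-1 : ℝ)) * ∏ b' ∈ Finset.Ioi b, (y b' - y b) :=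
            Finset.prod_mul_distrib
        _ = _ := by rw [Finset.prod_const, Fin.card_Ioi]
    rw [Finset.prod_congr rfl (fun b _ => h1 b), Finset.prod_mul_distrib,
      Finset.prod_pow_eq_pow_sum]
  rw [hmid, hthird]


lemma detYbar_eq (y : Fin m → ℝ) (lv : Fin n → ℕ) :
    (Matrix.of fun i k : Fin m => (-(y i)) ^ tN m lv k).det
      = (-1 : ℝ) ^ (∑ k : Fin m, tN m lv k) *
        (Matrix.of fun i k : Fin m => (y i) ^ tN m lv k).det := by
  have h1 : (Matrix.of fun i k : Fin m => (-(y i)) ^ tN m lv k)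
      = Matrix.of (fun i k : Fin m =>
          ((-1 : ℝ) ^ tN m lv k) * ((Matrix.of fun i' k' : Fin m => (y i') ^ tN m lv k') i k)) := by
    ext i k
    simp only [Matrix.of_apply]
    rw [neg_pow]
  rw [h1, Matrix.det_mul_row, Finset.prod_pow_eq_pow_sum]

lemma sum_tN_zero : (∑ k : Fin m, tN m (fun _ : Fin n => 0) k)
    = m * n + ∑ k : Fin m, ((m : ℕ) - 1 - (k : ℕ)) := by
  rw [Finset.sum_congr rfl (fun k _ => tN_zero k), Finset.sum_add_distrib,
    Finset.sum_const, Finset.card_univ, Fintype.card_fin, smul_eq_mul]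

/-- the constant sign factor. -/
lemma sign_const {l : Fin n → Fin (m + 1)} (h : Antitone (fun i => ((l i : ℕ)))) :
    ((Equiv.Perm.sign (piA l) : ℤ) : ℝ) *
        (-1 : ℝ) ^ (∑ k : Fin m, tN m (fun i => ((l i : ℕ))) k)
      = ((Equiv.Perm.sign (Fin.revPerm : Equiv.Perm (Fin n)) : ℤ) : ℝ) *
          ((Equiv.Perm.sign (Fin.revPerm : Equiv.Perm (Fin m)) : ℤ) : ℝ) *
          (-1 : ℝ) ^ (m * n + ∑ k : Fin m, ((m : ℕ) - 1 - (k : ℕ))) := by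
  have haux := sign_piP_aux (∑ i, ((l i : ℕ))) (fun i => ((l i : ℕ))) h (lbound l) rfl
  rw [piP_zero, blockP_sign] at haux
  have hcast := congrArg (fun u : ℤˣ => ((u : ℤ) : ℝ)) haux
  simp only [Units.val_mul, Units.val_pow_eq_pow_val, Int.cast_mul, Int.cast_pow,
    Units.val_neg, Units.val_one, Int.cast_neg, Int.cast_one] at hcast
  rw [piA_pos h, hcast, sum_tN_zero]

lemma vand_ne_zero {p : ℕ} {w : Fin p → ℝ} (hw : Function.Injective w) :
    (Matrix.vandermonde w).det ≠ 0 := by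
  rw [Matrix.det_vandermonde]
  apply Finset.prod_ne_zero_iff.2
  intro i _
  apply Finset.prod_ne_zero_iff.2
  intro j hj
  rw [Finset.mem_Ioi] at hj
  exact sub_ne_zero.2 fun hc => (ne_of_gt hj) (hw hc)

lemma rev_det {p : ℕ} (w : Fin p → ℝ) :
    (Matrix.of fun i j : Fin p => w i ^ ((p : ℕ) - 1 - (j : ℕ))).det
      = ((Equiv.Perm.sign (Fin.revPerm : Equiv.Perm (Fin p)) : ℤ) : ℝ) *
        (Matrix.vandermonde w).det := by
  have h1 : (Matrix.of fun i j : Fin p => w i ^ ((p : ℕ) - 1 - (j : ℕ)))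
      = (Matrix.vandermonde w).submatrix id Fin.revPerm := by
    ext i j
    rw [Matrix.submatrix_apply, Matrix.vandermonde_apply, Matrix.of_apply]
    congr 1
    rw [Fin.revPerm_apply, Fin.val_rev]
    omega
  rw [h1, Matrix.det_permute']


lemma final (x : Fin n → ℝ) (y : Fin m → ℝ)
    (hx : Function.Injective x) (hy : Function.Injective y) :
    (∏ i, ∏ j, (x i + y j)) =
      ∑ l : Fin n → Fin (m + 1),
        if Antitone (fun i => ((l i : ℕ))) then
          ((Matrix.of fun i j : Fin n => x i ^ sN (fun i' => ((l i' : ℕ))) j).det / (Matrix.of fun i j : Fin n => x i ^ ((n : ℕ) - 1 - (j : ℕ))).det) * ((Matrix.of fun i k : Fin m => y i ^ tN m (fun i' => ((l i' : ℕ))) k).det / (Matrix.of fun i j : Fin m => y i ^ ((m : ℕ) - 1 - (j : ℕ))).det)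
        else 0 := by
  classical
  have hcmain : (Matrix.vandermonde (Fin.append x (fun k => -(y k)))).det = (((Equiv.Perm.sign (Fin.revPerm : Equiv.Perm (Fin n)) : ℤ) : ℝ) * ((Equiv.Perm.sign (Fin.revPerm : Equiv.Perm (Fin m)) : ℤ) : ℝ) * (-1 : ℝ) ^ (m * n + (∑ k : Fin m, ((m : ℕ) - 1 - (k : ℕ))))) * (∑ l : Fin n → Fin (m + 1), if Antitone (fun i => ((l i : ℕ))) then (Matrix.of fun i j : Fin n => x i ^ sN (fun i' => ((l i' : ℕ))) j).det * (Matrix.of fun i k : Fin m => y i ^ tN m (fun i' => ((l i' : ℕ))) k).det else 0) := by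
    rw [main_det x y, Finset.mul_sum]
    apply Finset.sum_congr rfl
    intro l _
    by_cases hPl : Antitone (fun i => ((l i : ℕ)))
    · rw [if_pos hPl, if_pos hPl, detYbar_eq y]
      calc ((Equiv.Perm.sign (piA l) : ℤ) : ℝ) *
            ((Matrix.of fun i j : Fin n => x i ^ sN (fun i' => ((l i' : ℕ))) j).det * ((-1 : ℝ) ^ (∑ k : Fin m, tN m (fun i' => ((l i' : ℕ))) k) * (Matrix.of fun i k : Fin m => y i ^ tN m (fun i' => ((l i' : ℕ))) k).det))
          = (((Equiv.Perm.sign (piA l) : ℤ) : ℝ) *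
              (-1 : ℝ) ^ (∑ k : Fin m, tN m (fun i' => ((l i' : ℕ))) k)) * ((Matrix.of fun i j : Fin n => x i ^ sN (fun i' => ((l i' : ℕ))) j).det * (Matrix.of fun i k : Fin m => y i ^ tN m (fun i' => ((l i' : ℕ))) k).det) := by
            ring
        _ = (((Equiv.Perm.sign (Fin.revPerm : Equiv.Perm (Fin n)) : ℤ) : ℝ) * ((Equiv.Perm.sign (Fin.revPerm : Equiv.Perm (Fin m)) : ℤ) : ℝ) * (-1 : ℝ) ^ (m * n + (∑ k : Fin m, ((m : ℕ) - 1 - (k : ℕ))))) * ((Matrix.of fun i j : Fin n => x i ^ sN (fun i' => ((l i' : ℕ))) j).det * (Matrix.of fun i k : Fin m => y i ^ tN m (fun i' => ((l i' : ℕ))) k).det) := by rw [sign_const hPl]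
    · rw [if_neg hPl, if_neg hPl, mul_zero]
  have hen2 : ((Equiv.Perm.sign (Fin.revPerm : Equiv.Perm (Fin n)) : ℤ) : ℝ) * ((Equiv.Perm.sign (Fin.revPerm : Equiv.Perm (Fin n)) : ℤ) : ℝ) = 1 := by
    rw [← Int.cast_mul, ← Units.val_mul, Int.units_mul_self]
    norm_num
  have hem2 : ((Equiv.Perm.sign (Fin.revPerm : Equiv.Perm (Fin m)) : ℤ) : ℝ) * ((Equiv.Perm.sign (Fin.revPerm : Equiv.Perm (Fin m)) : ℤ) : ℝ) = 1 := by
    rw [← Int.cast_mul, ← Units.val_mul, Int.units_mul_self]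
    norm_num
  have hpow2 : (-1 : ℝ) ^ (m * n + (∑ k : Fin m, ((m : ℕ) - 1 - (k : ℕ)))) * (-1 : ℝ) ^ (m * n + (∑ k : Fin m, ((m : ℕ) - 1 - (k : ℕ)))) = 1 := by
    rw [← mul_pow]
    norm_num
  have hcc : (((Equiv.Perm.sign (Fin.revPerm : Equiv.Perm (Fin n)) : ℤ) : ℝ) * ((Equiv.Perm.sign (Fin.revPerm : Equiv.Perm (Fin m)) : ℤ) : ℝ) * (-1 : ℝ) ^ (m * n + (∑ k : Fin m, ((m : ℕ) - 1 - (k : ℕ))))) * (((Equiv.Perm.sign (Fin.revPerm : Equiv.Perm (Fin n)) : ℤ) : ℝ) * ((Equiv.Perm.sign (Fin.revPerm : Equiv.Perm (Fin m)) : ℤ) : ℝ) * (-1 : ℝ) ^ (m * n + (∑ k : Fin m, ((m : ℕ) - 1 - (k : ℕ))))) = 1 := by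
    calc (((Equiv.Perm.sign (Fin.revPerm : Equiv.Perm (Fin n)) : ℤ) : ℝ) * ((Equiv.Perm.sign (Fin.revPerm : Equiv.Perm (Fin m)) : ℤ) : ℝ) * (-1 : ℝ) ^ (m * n + (∑ k : Fin m, ((m : ℕ) - 1 - (k : ℕ))))) * (((Equiv.Perm.sign (Fin.revPerm : Equiv.Perm (Fin n)) : ℤ) : ℝ) * ((Equiv.Perm.sign (Fin.revPerm : Equiv.Perm (Fin m)) : ℤ) : ℝ) * (-1 : ℝ) ^ (m * n + (∑ k : Fin m, ((m : ℕ) - 1 - (k : ℕ)))))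
        = (((Equiv.Perm.sign (Fin.revPerm : Equiv.Perm (Fin n)) : ℤ) : ℝ) * ((Equiv.Perm.sign (Fin.revPerm : Equiv.Perm (Fin n)) : ℤ) : ℝ)) * ((((Equiv.Perm.sign (Fin.revPerm : Equiv.Perm (Fin m)) : ℤ) : ℝ) * ((Equiv.Perm.sign (Fin.revPerm : Equiv.Perm (Fin m)) : ℤ) : ℝ)) *
            ((-1 : ℝ) ^ (m * n + (∑ k : Fin m, ((m : ℕ) - 1 - (k : ℕ)))) * (-1 : ℝ) ^ (m * n + (∑ k : Fin m, ((m : ℕ) - 1 - (k : ℕ)))))) := by ring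
      _ = 1 := by rw [hen2, hem2, hpow2]; norm_num
  have hpow : (-1 : ℝ) ^ (m * n + (∑ k : Fin m, ((m : ℕ) - 1 - (k : ℕ)))) * (((-1 : ℝ) ^ m) ^ n * (-1 : ℝ) ^ (∑ k : Fin m, ((m : ℕ) - 1 - (k : ℕ)))) = 1 := by
    rw [← pow_mul, ← pow_add, ← pow_add]
    exact Even.neg_one_pow ⟨m * n + (∑ k : Fin m, ((m : ℕ) - 1 - (k : ℕ))), by ring⟩
  have hA : (∑ l : Fin n → Fin (m + 1), if Antitone (fun i => ((l i : ℕ))) then (Matrix.of fun i j : Fin n => x i ^ sN (fun i' => ((l i' : ℕ))) j).det * (Matrix.of fun i k : Fin m => y i ^ tN m (fun i' => ((l i' : ℕ))) k).det else 0) = (∏ i, ∏ j, (x i + y j)) * ((Matrix.of fun i j : Fin n => x i ^ ((n : ℕ) - 1 - (j : ℕ))).det * (Matrix.of fun i j : Fin m => y i ^ ((m : ℕ) - 1 - (j : ℕ))).det) := by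
    calc (∑ l : Fin n → Fin (m + 1), if Antitone (fun i => ((l i : ℕ))) then (Matrix.of fun i j : Fin n => x i ^ sN (fun i' => ((l i' : ℕ))) j).det * (Matrix.of fun i k : Fin m => y i ^ tN m (fun i' => ((l i' : ℕ))) k).det else 0) = ((((Equiv.Perm.sign (Fin.revPerm : Equiv.Perm (Fin n)) : ℤ) : ℝ) * ((Equiv.Perm.sign (Fin.revPerm : Equiv.Perm (Fin m)) : ℤ) : ℝ) * (-1 : ℝ) ^ (m * n + (∑ k : Fin m, ((m : ℕ) - 1 - (k : ℕ))))) * (((Equiv.Perm.sign (Fin.revPerm : Equiv.Perm (Fin n)) : ℤ) : ℝ) * ((Equiv.Perm.sign (Fin.revPerm : Equiv.Perm (Fin m)) : ℤ) : ℝ) * (-1 : ℝ) ^ (m * n + (∑ k : Fin m, ((m : ℕ) - 1 - (k : ℕ)))))) * (∑ l : Fin n → Fin (m + 1), if Antitone (fun i => ((l i : ℕ))) then (Matrix.of fun i j : Fin n => x i ^ sN (fun i' => ((l i' : ℕ))) j).det * (Matrix.of fun i k : Fin m => y i ^ tN m (fun i' => ((l i' : ℕ))) k).det else 0) := by rw [hcc,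 one_mul]
      _ = (((Equiv.Perm.sign (Fin.revPerm : Equiv.Perm (Fin n)) : ℤ) : ℝ) * ((Equiv.Perm.sign (Fin.revPerm : Equiv.Perm (Fin m)) : ℤ) : ℝ) * (-1 : ℝ) ^ (m * n + (∑ k : Fin m, ((m : ℕ) - 1 - (k : ℕ))))) * ((((Equiv.Perm.sign (Fin.revPerm : Equiv.Perm (Fin n)) : ℤ) : ℝ) * ((Equiv.Perm.sign (Fin.revPerm : Equiv.Perm (Fin m)) : ℤ) : ℝ) * (-1 : ℝ) ^ (m * n + (∑ k : Fin m, ((m : ℕ) - 1 - (k : ℕ))))) * (∑ l : Fin n → Fin (m + 1), if Antitone (fun i => ((l i : ℕ))) then (Matrix.of fun i j : Fin n => x i ^ sN (fun i' => ((l i' : ℕ))) j).det * (Matrix.of fun i k : Fin m => y i ^ tN m (fun i' => ((l i' : ℕ))) k).det else 0)) := by ring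
      _ = (((Equiv.Perm.sign (Fin.revPerm : Equiv.Perm (Fin n)) : ℤ) : ℝ) * ((Equiv.Perm.sign (Fin.revPerm : Equiv.Perm (Fin m)) : ℤ) : ℝ) * (-1 : ℝ) ^ (m * n + (∑ k : Fin m, ((m : ℕ) - 1 - (k : ℕ))))) * ((Matrix.vandermonde x).det * (((-1 : ℝ) ^ m) ^ n * (∏ i, ∏ j, (x i + y j))) * ((-1 : ℝ) ^ (∑ k : Fin m, ((m : ℕ) - 1 - (k : ℕ))) * (Matrix.vandermonde y).det)) := by rw [← hcmain, vand_split x y]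
      _ = (∏ i, ∏ j, (x i + y j)) * ((((Equiv.Perm.sign (Fin.revPerm : Equiv.Perm (Fin n)) : ℤ) : ℝ) * (Matrix.vandermonde x).det) * (((Equiv.Perm.sign (Fin.revPerm : Equiv.Perm (Fin m)) : ℤ) : ℝ) * (Matrix.vandermonde y).det)) := by
          linear_combination (((Equiv.Perm.sign (Fin.revPerm : Equiv.Perm (Fin n)) : ℤ) : ℝ) * ((Equiv.Perm.sign (Fin.revPerm : Equiv.Perm (Fin m)) : ℤ) : ℝ) * (Matrix.vandermonde x).det * (Matrix.vandermonde y).det * (∏ i, ∏ j, (x i + y j))) * hpow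
      _ = (∏ i, ∏ j, (x i + y j)) * ((Matrix.of fun i j : Fin n => x i ^ ((n : ℕ) - 1 - (j : ℕ))).det * (Matrix.of fun i j : Fin m => y i ^ ((m : ℕ) - 1 - (j : ℕ))).det) := by rw [rev_det x, rev_det y]
  have hVx0 : (Matrix.vandermonde x).det ≠ 0 := vand_ne_zero hx
  have hVy0 : (Matrix.vandermonde y).det ≠ 0 := vand_ne_zero hy
  have hen0 : ((Equiv.Perm.sign (Fin.revPerm : Equiv.Perm (Fin n)) : ℤ) : ℝ) ≠ 0 := by
    rcases Int.units_eq_one_or (Equiv.Perm.sign (Fin.revPerm : Equiv.Perm (Fin n))) with h | h <;>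
      rw [h] <;> norm_num
  have hem0 : ((Equiv.Perm.sign (Fin.revPerm : Equiv.Perm (Fin m)) : ℤ) : ℝ) ≠ 0 := by
    rcases Int.units_eq_one_or (Equiv.Perm.sign (Fin.revPerm : Equiv.Perm (Fin m))) with h | h <;>
      rw [h] <;> norm_num
  have hDx0 : (Matrix.of fun i j : Fin n => x i ^ ((n : ℕ) - 1 - (j : ℕ))).det ≠ 0 := by
    rw [rev_det x]
    exact mul_ne_zero hen0 hVx0
  have hDy0 : (Matrix.of fun i j : Fin m => y i ^ ((m : ℕ) - 1 - (j : ℕ))).det ≠ 0 := by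
    rw [rev_det y]
    exact mul_ne_zero hem0 hVy0
  symm
  calc (∑ l : Fin n → Fin (m + 1),
        if Antitone (fun i => ((l i : ℕ))) then
          ((Matrix.of fun i j : Fin n => x i ^ sN (fun i' => ((l i' : ℕ))) j).det / (Matrix.of fun i j : Fin n => x i ^ ((n : ℕ) - 1 - (j : ℕ))).det) * ((Matrix.of fun i k : Fin m => y i ^ tN m (fun i' => ((l i' : ℕ))) k).det / (Matrix.of fun i j : Fin m => y i ^ ((m : ℕ) - 1 - (j : ℕ))).det)
        else 0)
      = ∑ l : Fin n → Fin (m + 1),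
          if Antitone (fun i => ((l i : ℕ))) then
            ((Matrix.of fun i j : Fin n => x i ^ sN (fun i' => ((l i' : ℕ))) j).det * (Matrix.of fun i k : Fin m => y i ^ tN m (fun i' => ((l i' : ℕ))) k).det) * ((Matrix.of fun i j : Fin n => x i ^ ((n : ℕ) - 1 - (j : ℕ))).det * (Matrix.of fun i j : Fin m => y i ^ ((m : ℕ) - 1 - (j : ℕ))).det)⁻¹
          else 0 := by
        apply Finset.sum_congr rfl
        intro l _
        by_cases hPl : Antitone (fun i => ((l i : ℕ)))
        · rw [if_pos hPl, if_pos hPl, div_mul_div_comm, div_eq_mul_inv]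
        · rw [if_neg hPl, if_neg hPl]
    _ = (∑ l : Fin n → Fin (m + 1), if Antitone (fun i => ((l i : ℕ))) then (Matrix.of fun i j : Fin n => x i ^ sN (fun i' => ((l i' : ℕ))) j).det * (Matrix.of fun i k : Fin m => y i ^ tN m (fun i' => ((l i' : ℕ))) k).det else 0) * ((Matrix.of fun i j : Fin n => x i ^ ((n : ℕ) - 1 - (j : ℕ))).det * (Matrix.of fun i j : Fin m => y i ^ ((m : ℕ) - 1 - (j : ℕ))).det)⁻¹ := by
        rw [Finset.sum_mul]
        apply Finset.sum_congr rfl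
        intro l _
        rw [ite_mul, zero_mul]
    _ = ((∏ i, ∏ j, (x i + y j)) * ((Matrix.of fun i j : Fin n => x i ^ ((n : ℕ) - 1 - (j : ℕ))).det * (Matrix.of fun i j : Fin m => y i ^ ((m : ℕ) - 1 - (j : ℕ))).det)) * ((Matrix.of fun i j : Fin n => x i ^ ((n : ℕ) - 1 - (j : ℕ))).det * (Matrix.of fun i j : Fin m => y i ^ ((m : ℕ) - 1 - (j : ℕ))).det)⁻¹ := by rw [hA]
    _ = (∏ i, ∏ j, (x i + y j)) := by
        rw [mul_assoc, mul_inv_cancel₀ (mul_ne_zero hDx0 hDy0), mul_one]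

end Stmt16

open Classical in
/-- `∏_{i=1}^n ∏_{j=1}^m (x_i + y_j) = ∑_λ s_λ(x) s_{(λ')ᶜ}(y)`, summing over
partitions `λ` with at most `n` parts and parts at most `m`, where `λ'` is the conjugate
partition (`λ'_j = #{i : λ_i ≥ j}`) and `(λ')ᶜ` its complement in the `m×n` rectangle,
`((λ')ᶜ)_k = n - λ'_{m+1-k}`.  (Stated at points with pairwise distinct coordinates so the
bialternant denominators are nonzero.) -/
theorem stmt16 {m n : ℕ} (hm : 0 < m) (hn : 0 < n)
    (x : Fin n → ℝ) (y : Fin m → ℝ)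
    (hx : Function.Injective x) (hy : Function.Injective y) :
    ∏ i, ∏ j, (x i + y j) =
      ∑ l : Fin n → Fin (m + 1),
        if Antitone (fun i => ((l i : ℕ))) then
          schur (fun i => (l i : ℕ)) x *
            schur (fun k : Fin m =>
              n - (Finset.univ.filter fun i : Fin n =>
                    ((Fin.rev k : ℕ) + 1 ≤ (l i : ℕ))).card) y
        else 0 := by
  classical
  rw [Stmt16.final x y hx hy]
  apply Finset.sum_congr rfl
  intro l _
  by_cases hPl : Antitone (fun i => ((l i : ℕ)))
  · rw [if_pos hPl, if_pos hPl]
    have hxpart : schur (fun i => (l i : ℕ)) x =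
        (Matrix.of fun i j : Fin n => x i ^ Stmt16.sN (fun i' => ((l i' : ℕ))) j).det /
          (Matrix.of fun i j : Fin n => x i ^ ((n : ℕ) - 1 - (j : ℕ))).det := rfl
    have hYmat : (Matrix.of fun i k : Fin m => y i ^
          ((n - (Finset.univ.filter fun i' : Fin n =>
              ((Fin.rev k : ℕ) + 1 ≤ (l i' : ℕ))).card) + ((m : ℕ) - 1 - (k : ℕ))))
        = Matrix.of fun i k : Fin m => y i ^ Stmt16.tN m (fun i' => ((l i' : ℕ))) k := by
      ext i k
      simp only [Matrix.of_apply]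
      congr 1
      have hflt : (Finset.univ.filter fun i' : Fin n => ((Fin.rev k : ℕ) + 1 ≤ (l i' : ℕ)))
          = (Finset.univ.filter fun i' : Fin n => (m : ℕ) - (k : ℕ) ≤ (l i' : ℕ)) := by
        apply Finset.filter_congr
        intro i' _
        rw [Fin.val_rev]
        have := k.2
        omega
      unfold Stmt16.tN Stmt16.AA
      rw [hflt]
    have hypart : schur (fun k : Fin m =>
          n - (Finset.univ.filter fun i : Fin n =>
            ((Fin.rev k : ℕ) + 1 ≤ (l i : ℕ))).card) y =
        (Matrix.of fun i k : Fin m => y i ^ Stmt16.tN m (fun i' => ((l i' : ℕ))) k).det /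
          (Matrix.of fun i j : Fin m => y i ^ ((m : ℕ) - 1 - (j : ℕ))).det := by
      unfold schur
      rw [← hYmat]
    rw [hxpart, hypart]
  · rw [if_neg hPl, if_neg hPl]
end

section
/- Let M be a Haynsworth matrix as above (diagonal blocks p_t·I + q_t·(J−I) of sizes n_t, off-diagonal blocks b_{s,t}·J), and suppose p_t ≤ q_t whenever n_t ≥ 2. Then M has at most one positive eigenvalue if and only if the ℓ×ℓ matrix M̃ with entries M̃_{tt} = n_t²q_t + n_t(p_t − q_t) and M̃_{st} = n_s n_t b_{s,t} (s ≠ t) has at most one positive eigenvalue. -/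
open Matrix Module

lemma diag_aux {n : ℕ} (d : Fin n → ℝ) :
    (Finset.univ.filter fun i => 0 < d i).card ≤ 1 ↔
      ∃ W : Submodule ℝ (Fin n → ℝ), n - 1 ≤ Module.finrank ℝ W ∧
        ∀ x ∈ W, ∑ i, d i * x i ^ 2 ≤ 0 := by
  constructor
  · intro hc
    set S := (Finset.univ.filter fun i => 0 < d i) with hS
    let f : (Fin n → ℝ) →ₗ[ℝ] (S → ℝ) := LinearMap.funLeft ℝ ℝ (fun i : S => (i : Fin n))
    refine ⟨LinearMap.ker f, ?_, ?_⟩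
    · have h1 := LinearMap.finrank_range_add_finrank_ker f
      have h2 : finrank ℝ (LinearMap.range f) ≤ finrank ℝ (S → ℝ) := Submodule.finrank_le _
      have h3 : finrank ℝ (S → ℝ) = S.card := by
        rw [Module.finrank_pi]; exact Fintype.card_coe S
      have h4 : finrank ℝ (Fin n → ℝ) = n := by simp [Module.finrank_pi]
      omega
    · intro x hx
      have hx' : ∀ i ∈ S, x i = 0 := by
        intro i hi
        have := congrFun (LinearMap.mem_ker.mp hx) ⟨i, hi⟩
        simpa [f, LinearMap.funLeft] using this
      refine Finset.sum_nonpos fun i _ => ?_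
      by_cases hdi : 0 < d i
      · have : x i = 0 := hx' i (by simp [hS, hdi])
        simp [this]
      · push_neg at hdi
        have : x i ^ 2 ≥ 0 := sq_nonneg _
        nlinarith
  · intro ⟨W, hWr, hWn⟩
    by_contra hc
    push_neg at hc
    obtain ⟨i, hi, j, hj, hij⟩ := Finset.one_lt_card.mp hc
    simp only [Finset.mem_filter] at hi hj
    let u : Fin n → ℝ := Pi.single i 1
    let v : Fin n → ℝ := Pi.single j 1
    have hli : LinearIndependent ℝ ![u, v] := by
      have := (Pi.basisFun ℝ (Fin n)).linearIndependent
      have hinj : Function.Injective ![i, j] := by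
        intro a b hab
        fin_cases a <;> fin_cases b <;> simp_all <;> exact absurd hab.symm hij
      have := this.comp ![i, j] hinj
      convert this using 1
      funext k
      fin_cases k <;> simp [u, v, Pi.basisFun_apply]
    let V : Submodule ℝ (Fin n → ℝ) := Submodule.span ℝ {u, v}
    have hVr : finrank ℝ V = 2 := by
      have hr : Set.range ![u, v] = ({u, v} : Set (Fin n → ℝ)) := by
        simp [Matrix.range_cons, Matrix.range_empty, Set.pair_comm]
      have h2 := finrank_span_eq_card hli
      rw [hr] at h2
      simpa [V] using h2
    have hsum := Submodule.finrank_sup_add_finrank_inf_eq V W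
    have hsup : finrank ℝ (V ⊔ W : Submodule ℝ (Fin n → ℝ)) ≤ n := by
      have := Submodule.finrank_le (V ⊔ W : Submodule ℝ (Fin n → ℝ))
      simpa [Module.finrank_pi] using this
    have hinf : 1 ≤ finrank ℝ (V ⊓ W : Submodule ℝ (Fin n → ℝ)) := by omega
    have hne : (V ⊓ W : Submodule ℝ (Fin n → ℝ)) ≠ ⊥ := by
      intro h
      rw [h] at hinf; simp at hinf
    obtain ⟨x, hx, hx0⟩ := (Submodule.ne_bot_iff _).mp hne
    obtain ⟨a, bb, hab⟩ := Submodule.mem_span_pair.mp hx.1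
    have hxW := hWn x hx.2
    have hxi : x i = a := by rw [← hab]; simp [u, v, Pi.single_apply, hij]
    have hxj : x j = bb := by rw [← hab]; simp [u, v, Pi.single_apply, hij, Ne.symm hij]
    have hsupp : ∀ k, k ≠ i → k ≠ j → x k = 0 := by
      intro k hk1 hk2
      rw [← hab]; simp [u, v, Pi.single_apply, Ne.symm hk1, Ne.symm hk2]
    have hsum2 : ∑ k, d k * x k ^ 2 = d i * x i ^ 2 + d j * x j ^ 2 := by
      refine Finset.sum_eq_add i j hij ?_ (by simp) (by simp)
      intro c _ ⟨hc1, hc2⟩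
      rw [hsupp c hc1 hc2]; ring
    have hab0 : a ≠ 0 ∨ bb ≠ 0 := by
      by_contra h
      push_neg at h
      apply hx0
      rw [← hab, h.1, h.2]; simp
    have : 0 < d i * x i ^ 2 + d j * x j ^ 2 := by
      rw [hxi, hxj]
      rcases hab0 with h | h
      · have : 0 < d i * a ^ 2 := mul_pos hi.2 (by positivity)
        nlinarith [sq_nonneg bb, hj.2.le, sq_nonneg a]
      · have : 0 < d j * bb ^ 2 := mul_pos hj.2 (by positivity)
        nlinarith [sq_nonneg a, hi.2.le]
    rw [hsum2] at hxW
    linarith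

lemma herm_aux {n : ℕ} (A : Matrix (Fin n) (Fin n) ℝ) (hA : A.IsHermitian) :
    (Finset.univ.filter fun i => 0 < hA.eigenvalues i).card ≤ 1 ↔
      ∃ W : Submodule ℝ (Fin n → ℝ), n - 1 ≤ Module.finrank ℝ W ∧
        ∀ x ∈ W, x ⬝ᵥ A *ᵥ x ≤ 0 := by
  set U : Matrix (Fin n) (Fin n) ℝ := (hA.eigenvectorUnitary : Matrix (Fin n) (Fin n) ℝ) with hU
  have hUmem := hA.eigenvectorUnitary.2
  rw [Unitary.mem_iff] at hUmem
  have hU1 : star U * U = 1 := hUmem.1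
  have hU2 : U * star U = 1 := hUmem.2
  have hspec : A = U * diagonal hA.eigenvalues * star U := by
    have := hA.spectral_theorem
    simpa [RCLike.ofReal_real_eq_id] using this
  have key : ∀ x : Fin n → ℝ, x ⬝ᵥ A *ᵥ x
      = ∑ i, hA.eigenvalues i * ((star U *ᵥ x) i) ^ 2 := by
    intro x
    conv_lhs => rw [hspec]
    rw [← mulVec_mulVec, ← mulVec_mulVec, dotProduct_mulVec]
    have hvm : x ᵥ* U = star U *ᵥ x := by
      rw [Matrix.star_eq_conjTranspose, conjTranspose_eq_transpose_of_trivial,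
        mulVec_transpose]
    rw [hvm]
    simp only [dotProduct, mulVec_diagonal]
    exact Finset.sum_congr rfl fun i _ => by ring
  -- linear equivalence given by U
  let e : (Fin n → ℝ) ≃ₗ[ℝ] (Fin n → ℝ) :=
    LinearEquiv.ofLinear U.mulVecLin (star U).mulVecLin
      (LinearMap.ext fun x => by simp [mulVec_mulVec, hU2])
      (LinearMap.ext fun x => by simp [mulVec_mulVec, hU1])
  rw [diag_aux hA.eigenvalues]
  constructor
  · rintro ⟨W0, hr, hn0⟩
    refine ⟨W0.map e.toLinearMap, by rwa [LinearEquiv.finrank_map_eq e W0], ?_⟩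
    rintro x hx
    obtain ⟨y, hy, rfl⟩ := hx
    have hy2 : star U *ᵥ (e.toLinearMap y) = y := by
      show star U *ᵥ (U *ᵥ y) = y
      rw [mulVec_mulVec, hU1, one_mulVec]
    rw [key, hy2]
    exact hn0 y hy
  · rintro ⟨W, hr, hn0⟩
    refine ⟨W.map e.symm.toLinearMap, by rwa [LinearEquiv.finrank_map_eq e.symm W]
      , ?_⟩
    rintro y hy
    obtain ⟨x, hx, rfl⟩ := hy
    have hy2 : star U *ᵥ x = e.symm.toLinearMap x := rfl
    rw [← hy2]
    rw [← key]
    exact hn0 x hx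
set_option maxHeartbeats 1000000 in
/-- Let `M` be a Haynsworth matrix (block assignment `β : Fin N → Fin ℓ`,
diagonal blocks `p_t·I + q_t·(J-I)`, off-diagonal blocks `b_{s,t}·J`), and suppose `p_t ≤ q_t`
whenever the block size `n_t ≥ 2`.  Then `M` has at most one positive eigenvalue iff the
`ℓ×ℓ` compression `M̃` with `M̃_{tt} = n_t²q_t + n_t(p_t - q_t)` and `M̃_{st} = n_s n_t b_{s,t}`
has at most one positive eigenvalue. -/
theorem stmt18 {N l : ℕ} (β : Fin N → Fin l) (p q : Fin l → ℝ) (b : Fin l → Fin l → ℝ)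
    (hb : ∀ s t, b s t = b t s)
    (nsize : Fin l → ℕ)
    (hnsize : ∀ t, nsize t = (Finset.univ.filter fun i : Fin N => β i = t).card)
    (hpq : ∀ t, 2 ≤ nsize t → p t ≤ q t)
    (M : Matrix (Fin N) (Fin N) ℝ)
    (hM : ∀ i j : Fin N, M i j =
      if β i = β j then (if i = j then p (β i) else q (β i)) else b (β i) (β j))
    (hherm : M.IsHermitian)
    (Mt : Matrix (Fin l) (Fin l) ℝ)
    (hMt : ∀ s t : Fin l, Mt s t =
      if s = t then (nsize t : ℝ) ^ 2 * q t + (nsize t : ℝ) * (p t - q t)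
      else (nsize s : ℝ) * (nsize t : ℝ) * b s t)
    (hMtherm : Mt.IsHermitian) :
    (Finset.univ.filter fun i => 0 < hherm.eigenvalues i).card ≤ 1 ↔
      (Finset.univ.filter fun i => 0 < hMtherm.eigenvalues i).card ≤ 1 := by
  classical
  rw [herm_aux M hherm, herm_aux Mt hMtherm]
  set P : Matrix (Fin N) (Fin l) ℝ := Matrix.of fun i t => if β i = t then 1 else 0 with hPdef
  -- block sums via Pᵀ
  have hPcol : ∀ (t : Fin l) (z : Fin N → ℝ),
      (Pᵀ *ᵥ z) t = ∑ i ∈ Finset.univ.filter (fun i => β i = t), z i := by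
    intro t z
    simp only [Matrix.mulVec, dotProduct, Matrix.transpose_apply, hPdef, Matrix.of_apply]
    rw [Finset.sum_filter]
    refine Finset.sum_congr rfl fun i _ => ?_
    split_ifs <;> ring
  -- compression identity
  have hcomp : Pᵀ * M * P = Mt := by
    ext s t
    have hMP : ∀ i, (M * P) i t = ∑ j ∈ Finset.univ.filter (fun j => β j = t), M i j := by
      intro i
      rw [Finset.sum_filter, Matrix.mul_apply]
      refine Finset.sum_congr rfl fun j _ => ?_
      simp only [hPdef, Matrix.of_apply]
      split_ifs <;> ring
    have e0 : (Pᵀ * M * P) s t = ∑ i ∈ Finset.univ.filter (fun i => β i = s),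
        ∑ j ∈ Finset.univ.filter (fun j => β j = t), M i j := by
      rw [Matrix.mul_assoc, Matrix.mul_apply, Finset.sum_filter]
      refine Finset.sum_congr rfl fun i _ => ?_
      rw [hMP]
      simp only [Matrix.transpose_apply, hPdef, Matrix.of_apply]
      split_ifs <;> ring
    rw [e0]
    by_cases hst : s = t
    · subst hst
      have e3 : ∀ i ∈ Finset.univ.filter (fun i => β i = s),
          (∑ j ∈ Finset.univ.filter (fun j => β j = s), M i j)
            = (nsize s : ℝ) * q s + (p s - q s) := by
        intro i hi
        have hbi : β i = s := by simpa using (Finset.mem_filter.mp hi).2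
        have e4 : ∀ j ∈ Finset.univ.filter (fun j => β j = s),
            M i j = q s + (if i = j then p s - q s else 0) := by
          intro j hj
          have hbj : β j = s := by simpa using (Finset.mem_filter.mp hj).2
          rw [hM i j, hbi, hbj, if_pos rfl]
          split_ifs <;> ring
        rw [Finset.sum_congr rfl e4, Finset.sum_add_distrib, Finset.sum_const,
          Finset.sum_ite_eq, if_pos hi, ← hnsize]
        simp [nsmul_eq_mul]
      rw [Finset.sum_congr rfl e3, Finset.sum_const, ← hnsize, hMt s s, if_pos rfl]
      simp only [nsmul_eq_mul]
      ring
    · have e3 : ∀ i ∈ Finset.univ.filter (fun i => β i = s),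
          (∑ j ∈ Finset.univ.filter (fun j => β j = t), M i j) = (nsize t : ℝ) * b s t := by
        intro i hi
        have hbi : β i = s := by simpa using (Finset.mem_filter.mp hi).2
        have e4 : ∀ j ∈ Finset.univ.filter (fun j => β j = t), M i j = b s t := by
          intro j hj
          have hbj : β j = t := by simpa using (Finset.mem_filter.mp hj).2
          rw [hM i j, hbi, hbj, if_neg hst]
        rw [Finset.sum_congr rfl e4, Finset.sum_const, ← hnsize]
        simp [nsmul_eq_mul]
      rw [Finset.sum_congr rfl e3, Finset.sum_const, ← hnsize, hMt s t, if_neg hst]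
      simp only [nsmul_eq_mul]
      ring
  -- quadratic form identity
  have hquad : ∀ y : Fin l → ℝ, y ⬝ᵥ Mt *ᵥ y = (P *ᵥ y) ⬝ᵥ M *ᵥ (P *ᵥ y) := by
    intro y
    rw [← hcomp, ← Matrix.mulVec_mulVec, ← Matrix.mulVec_mulVec, Matrix.dotProduct_mulVec,
      Matrix.vecMul_transpose]
  have hMsymm : Mᵀ = M := by
    have := hherm
    rwa [Matrix.IsHermitian, Matrix.conjTranspose_eq_transpose_of_trivial] at this
  have hfrN : Module.finrank ℝ (Fin N → ℝ) = N := by simp [Module.finrank_pi]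
  have hfrl : Module.finrank ℝ (Fin l → ℝ) = l := by simp [Module.finrank_pi]
  constructor
  · rintro ⟨W, hWr, hWn⟩
    refine ⟨Submodule.comap P.mulVecLin W, ?_, ?_⟩
    · set g := W.mkQ.comp P.mulVecLin with hg
      have hker : LinearMap.ker g = Submodule.comap P.mulVecLin W := by
        ext x
        simp [hg, LinearMap.mem_ker, Submodule.Quotient.mk_eq_zero, Submodule.mem_comap]
      have h1 := LinearMap.finrank_range_add_finrank_ker g
      have h2 : Module.finrank ℝ (LinearMap.range g) ≤ Module.finrank ℝ ((Fin N → ℝ) ⧸ W) :=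
        Submodule.finrank_le _
      have h3 := Submodule.finrank_quotient_add_finrank W
      rw [hker, hfrl] at h1
      rw [hfrN] at h3
      omega
    · intro y hy
      rw [hquad]
      have hy' := Submodule.mem_comap.mp hy
      rw [Matrix.mulVecLin_apply] at hy'
      exact hWn _ hy'
  · rintro ⟨Wt, hWr, hWn⟩
    refine ⟨Submodule.map P.mulVecLin Wt ⊔ LinearMap.ker Pᵀ.mulVecLin, ?_, ?_⟩
    · -- dimension count
      have hdisj : Submodule.map P.mulVecLin Wt ⊓ LinearMap.ker Pᵀ.mulVecLin = ⊥ := by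
        rw [eq_bot_iff]
        intro x hx
        obtain ⟨hx1, hx2⟩ := Submodule.mem_inf.mp hx
        obtain ⟨y, -, rfl⟩ := Submodule.mem_map.mp hx1
        rw [LinearMap.mem_ker] at hx2
        simp only [Matrix.mulVecLin_apply] at hx2 ⊢
        rw [Submodule.mem_bot]
        have key : (P *ᵥ y) ⬝ᵥ (P *ᵥ y) = y ⬝ᵥ (Pᵀ *ᵥ (P *ᵥ y)) := by
          rw [Matrix.dotProduct_mulVec y Pᵀ, Matrix.vecMul_transpose]
        have hxx : (P *ᵥ y) ⬝ᵥ (P *ᵥ y) = 0 := by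
          rw [key, hx2, dotProduct_zero]
        exact dotProduct_self_eq_zero.mp hxx
      have h1 := Submodule.finrank_sup_add_finrank_inf_eq
        (Submodule.map P.mulVecLin Wt) (LinearMap.ker Pᵀ.mulVecLin)
      rw [hdisj, finrank_bot] at h1
      have h2 := LinearMap.finrank_range_add_finrank_ker (P.mulVecLin.domRestrict Wt)
      rw [LinearMap.range_domRestrict] at h2
      have h2' : Module.finrank ℝ (LinearMap.ker (P.mulVecLin.domRestrict Wt))
          ≤ Module.finrank ℝ (LinearMap.ker P.mulVecLin) := by
        rw [LinearMap.ker_domRestrict, ← Submodule.finrank_map_subtype_eq,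
          Submodule.map_comap_subtype]
        exact Submodule.finrank_mono inf_le_right
      have h3 := LinearMap.finrank_range_add_finrank_ker P.mulVecLin
      have h4 := LinearMap.finrank_range_add_finrank_ker Pᵀ.mulVecLin
      have h5 : Module.finrank ℝ (LinearMap.range Pᵀ.mulVecLin)
          = Module.finrank ℝ (LinearMap.range P.mulVecLin) := Matrix.rank_transpose P
      have h6 : Module.finrank ℝ Wt ≤ l := by
        have := Submodule.finrank_le Wt
        rwa [hfrl] at this
      rw [hfrl] at h3
      rw [hfrN] at h4
      omega
    · -- nonpositivity
      intro x hx
      obtain ⟨a, ha, z, hz, rfl⟩ := Submodule.mem_sup.mp hx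
      obtain ⟨y, hy, rfl⟩ := Submodule.mem_map.mp ha
      rw [LinearMap.mem_ker, Matrix.mulVecLin_apply] at hz
      simp only [Matrix.mulVecLin_apply]
      have hblock : ∀ t, ∑ i ∈ Finset.univ.filter (fun i => β i = t), z i = 0 := by
        intro t
        rw [← hPcol t z, hz]
        rfl
      -- M acts diagonally on ker Pᵀ
      have hMz : M *ᵥ z = fun i => (p (β i) - q (β i)) * z i := by
        funext i
        have hMij : ∀ j, M i j
            = (if β j = β i then q (β i) else b (β i) (β j))
              + (if j = i then p (β i) - q (β i) else 0) := by
          intro j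
          rw [hM i j]
          by_cases h1 : j = i
          · subst h1; simp
          · by_cases h2 : β i = β j
            · rw [if_pos h2, if_neg (fun h : i = j => h1 h.symm), if_pos h2.symm, if_neg h1, h2]
              ring
            · rw [if_neg h2, if_neg (fun h : β j = β i => h2 h.symm), if_neg h1]
              ring
        show (∑ j, M i j * z j) = _
        simp_rw [hMij, add_mul, Finset.sum_add_distrib]
        have hpart : (∑ j, (if β j = β i then q (β i) else b (β i) (β j)) * z j) = 0 := by
          rw [← Finset.sum_fiberwise Finset.univ β
            (fun j => (if β j = β i then q (β i) else b (β i) (β j)) * z j)]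
          refine Finset.sum_eq_zero fun t _ => ?_
          have hc : ∀ j ∈ Finset.univ.filter (fun j => β j = t),
              (if β j = β i then q (β i) else b (β i) (β j)) * z j
                = (if t = β i then q (β i) else b (β i) t) * z j := by
            intro j hj
            rw [(Finset.mem_filter.mp hj).2]
          rw [Finset.sum_congr rfl hc, ← Finset.mul_sum, hblock, mul_zero]
        have hpart2 : (∑ j, (if j = i then p (β i) - q (β i) else 0) * z j)
            = (p (β i) - q (β i)) * z i := by
          have hc : ∀ j, (if j = i then p (β i) - q (β i) else 0) * z j
              = if j = i then (p (β i) - q (β i)) * z j else 0 := by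
            intro j; split_ifs <;> ring
          simp_rw [hc]
          rw [Finset.sum_ite_eq', if_pos (Finset.mem_univ i)]
        rw [hpart, hpart2, zero_add]
      -- the form is nonpositive on ker Pᵀ
      have hzsize : ∀ i, z i ≠ 0 → 2 ≤ nsize (β i) := by
        intro i hzi
        by_contra h
        push_neg at h
        have hmem : i ∈ Finset.univ.filter (fun j => β j = β i) := by simp
        have hcard : (Finset.univ.filter (fun j : Fin N => β j = β i)).card ≤ 1 := by
          rw [← hnsize]; omega
        have hsingle : Finset.univ.filter (fun j : Fin N => β j = β i) = {i} :=
          Finset.eq_singleton_iff_unique_mem.mpr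
            ⟨hmem, fun j hj => Finset.card_le_one.mp hcard j hj i hmem⟩
        have hzero := hblock (β i)
        rw [hsingle, Finset.sum_singleton] at hzero
        exact hzi hzero
      have hzMz : z ⬝ᵥ M *ᵥ z ≤ 0 := by
        rw [hMz]
        simp only [dotProduct]
        refine Finset.sum_nonpos fun i _ => ?_
        by_cases hzi : z i = 0
        · simp [hzi]
        · have hle : p (β i) - q (β i) ≤ 0 := sub_nonpos.mpr (hpq _ (hzsize i hzi))
          have he : z i * ((p (β i) - q (β i)) * z i) = (p (β i) - q (β i)) * z i ^ 2 := by ring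
          rw [he]
          exact mul_nonpos_of_nonpos_of_nonneg hle (sq_nonneg _)
      -- cross terms vanish
      have hPTMz : Pᵀ *ᵥ (M *ᵥ z) = 0 := by
        funext t
        rw [hPcol]
        simp only [hMz]
        have hc : ∀ j ∈ Finset.univ.filter (fun j : Fin N => β j = t),
            (p (β j) - q (β j)) * z j = (p t - q t) * z j := by
          intro j hj
          rw [(Finset.mem_filter.mp hj).2]
        rw [Finset.sum_congr rfl hc, ← Finset.mul_sum, hblock, mul_zero]
        rfl
      have hcross1 : (P *ᵥ y) ⬝ᵥ (M *ᵥ z) = 0 := by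
        rw [← Matrix.vecMul_transpose, ← Matrix.dotProduct_mulVec, hPTMz,
          dotProduct_zero]
      have hcross2 : z ⬝ᵥ (M *ᵥ (P *ᵥ y)) = 0 := by
        rw [Matrix.dotProduct_mulVec, ← Matrix.mulVec_transpose, hMsymm,
          dotProduct_comm]
        exact hcross1
      have hyq : (P *ᵥ y) ⬝ᵥ M *ᵥ (P *ᵥ y) ≤ 0 := by
        rw [← hquad]
        exact hWn y hy
      rw [Matrix.mulVec_add, dotProduct_add, add_dotProduct,
        add_dotProduct]
      linarith
end
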